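/- arXiv:1511.00113 — 3 statements merged into one kernel-verified Lean document; each statement's English description precedes it below -/
import Mathlib

section
/- There is a sufficiently small absolute constant c > 0 such that the following holds. Let 8 ≤ d ≤ n, ε ∈ (0,1), and k ≥ 2 be an integer; assume ε² ≥ max{8, ln d}/d and k ≤ c·ε·n/d. Let I ⊆ [n] with |I| ≤ n/8. Define Γ_k = {G ∈ D_{n,d} : ∃ S ⊆ [n]∖I with |S| = k such that |N^in_G(S)| ≤ (1−ε)·d·|S|}, and Γ = {G ∈ D_{n,d} : ∃ S ⊆ [n]∖I with 2 ≤ |S| ≤ c·ε·n/d such that |N^in_G(S)| ≤ (1−ε)·d·|S|}. Then for every F ⊆ [n]×[n] with D(I,F) ≠ ∅ one has P(Γ_k | D(I,F)) ≤ exp(−(ε²·d·k/8)·ln(3ecεn/(kd))), and P(Γ | D(I,F)) ≤ exp(−(ε²·d/8)·ln(ecεn/d)). -/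
open Finset
open scoped Classical

/-- `Dreg n d` is the set of `d`-regular digraphs on `n` vertices, encoded by their
Bool adjacency matrices: `G i j = true` iff there is an edge from `i` to `j`. -/
def Dreg (n d : ℕ) : Finset (Fin n → Fin n → Bool) :=
  Finset.univ.filter fun G =>
    (∀ i, (Finset.univ.filter fun j => G i j = true).card = d) ∧
    (∀ j, (Finset.univ.filter fun i => G i j = true).card = d)

/-- The set of in-neighbors of a set `S` of vertices. -/
def inNbr {n : ℕ} (G : Fin n → Fin n → Bool) (S : Finset (Fin n)) : Finset (Fin n) :=
  Finset.univ.filter fun v => ∃ i ∈ S, G v i = true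

/-- `Dcond n d S F` is the set of graphs in `Dreg n d` whose set of in-edges of `S`
(edges `(i,j)` with `j ∈ S`) equals `F`. -/
def Dcond (n d : ℕ) (S : Finset (Fin n)) (F : Finset (Fin n × Fin n)) :
    Finset (Fin n → Fin n → Bool) :=
  (Dreg n d).filter fun G =>
    (Finset.univ.filter fun p : Fin n × Fin n => G p.1 p.2 = true ∧ p.2 ∈ S) = F

namespace GraphSparse

variable {n : ℕ}

/-- row degree into `S` -/
def rdS (G : Fin n → Fin n → Bool) (S : Finset (Fin n)) (v : Fin n) : ℕ :=
  (S.filter fun i => G v i = true).card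

/-- the simple switching -/
def swG (G : Fin n → Fin n → Bool) (v i w j : Fin n) : Fin n → Fin n → Bool :=
  fun a b =>
    if a = v ∧ b = i then false
    else if a = w ∧ b = i then true
    else if a = w ∧ b = j then false
    else if a = v ∧ b = j then true
    else G a b

lemma card_filter_prod {β γ : Type*} [Fintype β] [Fintype γ] (p : β × γ → Prop) [DecidablePred p] :
    ((univ ×ˢ univ).filter p).card = ∑ a : β, (univ.filter fun b => p (a, b)).card := by
  rw [Finset.card_filter, Finset.sum_product]
  exact Finset.sum_congr rfl fun a _ => by rw [Finset.card_filter]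

lemma card_filter_prod' {β γ : Type*} [Fintype β] [Fintype γ] (p : β × γ → Prop) [DecidablePred p] :
    ((univ ×ˢ univ).filter p).card = ∑ b : γ, (univ.filter fun a => p (a, b)).card := by
  calc ((univ ×ˢ univ).filter p).card
      = ∑ a : β, ∑ b : γ, if p (a, b) then 1 else 0 := by
        rw [card_filter_prod]
        exact Finset.sum_congr rfl fun a _ => Finset.card_filter _ _
    _ = ∑ b : γ, ∑ a : β, if p (a, b) then 1 else 0 := Finset.sum_comm
    _ = ∑ b : γ, (univ.filter fun a => p (a, b)).card :=
        Finset.sum_congr rfl fun b _ => (Finset.card_filter _ _).symm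

/-- generic single-swap card preservation -/
lemma card_filter_swap {β : Type*} [Fintype β] (f g : β → Bool) (x y : β) (hxy : x ≠ y)
    (hfx : f x = true) (hfy : f y = false) (hgy : g y = true) (hgx : g x = false)
    (hother : ∀ z, z ≠ x → z ≠ y → g z = f z) :
    (univ.filter fun z => g z = true).card = (univ.filter fun z => f z = true).card := by
  have hset : (univ.filter fun z => g z = true)
      = insert y ((univ.filter fun z => f z = true).erase x) := by
    ext z
    by_cases hzy : z = y
    · subst hzy; simp [hgy]
    · by_cases hzx : z = x
      · subst hzx; simp [hgx, hxy, Ne.symm hzy]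
      · simp [hzy, hzx, hother z hzx hzy, Finset.mem_erase, Finset.mem_insert]
  rw [hset, Finset.card_insert_of_notMem (by simp [hfy]),
    Finset.card_erase_of_mem (by simp [hfx])]
  have : 0 < (univ.filter fun z => f z = true).card :=
    Finset.card_pos.mpr ⟨x, by simp [hfx]⟩
  omega

lemma rdS_pos_iff (G : Fin n → Fin n → Bool) (S : Finset (Fin n)) (v : Fin n) :
    v ∈ inNbr G S ↔ 1 ≤ rdS G S v := by
  simp only [inNbr, Finset.mem_filter, Finset.mem_univ, true_and, rdS]
  constructor
  · rintro ⟨i, hi, hGi⟩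
    have : 0 < (S.filter fun i => G v i = true).card :=
      Finset.card_pos.mpr ⟨i, by simp [hi, hGi]⟩
    omega
  · intro h
    have : 0 < (S.filter fun i => G v i = true).card := by omega
    obtain ⟨i, hi⟩ := Finset.card_pos.mp this
    simp only [Finset.mem_filter] at hi
    exact ⟨i, hi.1, hi.2⟩

lemma inNbr_eq_filter (G : Fin n → Fin n → Bool) (S : Finset (Fin n)) :
    inNbr G S = univ.filter fun v => 1 ≤ rdS G S v := by
  ext v
  rw [rdS_pos_iff]
  simp

section counts

variable {d : ℕ} {G : Fin n → Fin n → Bool} (S : Finset (Fin n))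

lemma row_card (hG : G ∈ Dreg n d) (v : Fin n) :
    (univ.filter fun j => G v j = true).card = d := by
  rw [Dreg, Finset.mem_filter] at hG; exact hG.2.1 v

lemma col_card (hG : G ∈ Dreg n d) (j : Fin n) :
    (univ.filter fun v => G v j = true).card = d := by
  rw [Dreg, Finset.mem_filter] at hG; exact hG.2.2 j

lemma sum_rd (hG : G ∈ Dreg n d) : ∑ v : Fin n, rdS G S v = d * S.card := by
  have : ∀ v : Fin n, rdS G S v = ∑ i ∈ S, if G v i = true then 1 else 0 := fun v =>
    Finset.card_filter _ _
  simp only [this]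
  rw [Finset.sum_comm]
  have : ∀ i ∈ S, (∑ v : Fin n, if G v i = true then 1 else 0) = d := fun i _ => by
    rw [← Finset.card_filter]; exact col_card hG i
  rw [Finset.sum_congr rfl this, Finset.sum_const, smul_eq_mul, mul_comm]

lemma inNbr_card_le (hG : G ∈ Dreg n d) : (inNbr G S).card ≤ d * S.card := by
  have hsub2 : inNbr G S ⊆ S.biUnion fun i => univ.filter fun v => G v i = true := by
    intro v hv
    rw [inNbr, Finset.mem_filter] at hv
    obtain ⟨i, hi, hGi⟩ := hv.2
    exact Finset.mem_biUnion.mpr ⟨i, hi, by simp [hGi]⟩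
  calc (inNbr G S).card ≤ _ := Finset.card_le_card hsub2
    _ ≤ ∑ i ∈ S, (univ.filter fun v => G v i = true).card := Finset.card_biUnion_le
    _ = ∑ i ∈ S, d := Finset.sum_congr rfl fun i _ => col_card hG i
    _ = d * S.card := by rw [Finset.sum_const, smul_eq_mul, mul_comm]

lemma card_A_ge (hG : G ∈ Dreg n d) :
    d * S.card ≤ (inNbr G S).card +
      ((univ ×ˢ univ).filter fun p : Fin n × Fin n =>
        p.2 ∈ S ∧ G p.1 p.2 = true ∧ 2 ≤ rdS G S p.1).card := by
  have hA : ((univ ×ˢ univ).filter fun p : Fin n × Fin n =>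
      p.2 ∈ S ∧ G p.1 p.2 = true ∧ 2 ≤ rdS G S p.1).card
      = ∑ v : Fin n, if 2 ≤ rdS G S v then rdS G S v else 0 := by
    rw [card_filter_prod]
    refine Finset.sum_congr rfl fun v _ => ?_
    by_cases h2 : 2 ≤ rdS G S v
    · rw [if_pos h2]
      have heq : (univ.filter fun i => i ∈ S ∧ G v i = true ∧ 2 ≤ rdS G S v)
          = S.filter fun i => G v i = true := by
        ext i; simp [h2, and_comm]
      rw [heq]; rfl
    · rw [if_neg h2]
      have heq : (univ.filter fun i => i ∈ S ∧ G v i = true ∧ 2 ≤ rdS G S v) = ∅ := by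
        ext i; simp [h2]
      simp [heq]
  have hN : (inNbr G S).card = ∑ v : Fin n, if 1 ≤ rdS G S v then 1 else 0 := by
    rw [inNbr_eq_filter, Finset.card_filter]
  rw [hA, hN, ← Finset.sum_add_distrib, ← sum_rd S hG]
  refine Finset.sum_le_sum fun v _ => ?_
  by_cases h1 : 1 ≤ rdS G S v <;> by_cases h2 : 2 ≤ rdS G S v <;> simp [h1, h2] <;> omega

lemma col_count (hG : G ∈ Dreg n d) (q : Fin n → Prop) [DecidablePred q] :
    ((univ ×ˢ univ).filter fun p : Fin n × Fin n =>
      G p.1 p.2 = true ∧ q p.2).card = (univ.filter q).card * d := by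
  rw [card_filter_prod']
  have hrw : ∀ j : Fin n, (univ.filter fun w => G w j = true ∧ q j).card
      = if q j then d else 0 := by
    intro j
    by_cases h : q j
    · rw [if_pos h]
      rw [show (univ.filter fun w => G w j = true ∧ q j)
          = univ.filter fun w => G w j = true by ext w; simp [h]]
      exact col_card hG j
    · rw [if_neg h]
      rw [show (univ.filter fun w => G w j = true ∧ q j) = ∅ by ext w; simp [h]]
      rfl
  rw [Finset.sum_congr rfl fun j _ => hrw j, ← Finset.sum_filter]
  simp

lemma card_B_ge (hG : G ∈ Dreg n d) (I : Finset (Fin n)) (v : Fin n) :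
    n * d ≤ ((univ ×ˢ univ).filter fun p : Fin n × Fin n =>
        G p.1 p.2 = true ∧ rdS G S p.1 = 0 ∧ p.2 ∉ I ∧ p.2 ∉ S ∧ G v p.2 = false).card
      + (d * S.card) * d + I.card * d + S.card * d + d * d := by
  have hE : ((univ ×ˢ univ).filter fun p : Fin n × Fin n => G p.1 p.2 = true).card = n * d := by
    rw [card_filter_prod]
    rw [Finset.sum_congr rfl fun w (_ : w ∈ univ) => row_card hG w]
    simp [Finset.card_univ, mul_comm]
  have hE1 : ((univ ×ˢ univ).filter fun p : Fin n × Fin n =>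
      G p.1 p.2 = true ∧ 1 ≤ rdS G S p.1).card ≤ (d * S.card) * d := by
    rw [card_filter_prod]
    have hrw : ∀ w : Fin n, (univ.filter fun j => G w j = true ∧ 1 ≤ rdS G S w).card
        = if 1 ≤ rdS G S w then d else 0 := by
      intro w
      by_cases h : 1 ≤ rdS G S w
      · rw [if_pos h]
        rw [show (univ.filter fun j => G w j = true ∧ 1 ≤ rdS G S w)
            = univ.filter fun j => G w j = true by ext j; simp [h]]
        exact row_card hG w
      · rw [if_neg h]
        rw [show (univ.filter fun j => G w j = true ∧ 1 ≤ rdS G S w) = ∅ by ext j; simp [h]]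
        rfl
    rw [Finset.sum_congr rfl fun w _ => hrw w, ← Finset.sum_filter]
    simp only [Finset.sum_const, smul_eq_mul]
    rw [← inNbr_eq_filter]
    exact Nat.mul_le_mul_right d (inNbr_card_le S hG)
  have hE2 : ((univ ×ˢ univ).filter fun p : Fin n × Fin n =>
      G p.1 p.2 = true ∧ p.2 ∈ I).card = I.card * d := by
    rw [col_count hG fun j => j ∈ I]; simp
  have hE3 : ((univ ×ˢ univ).filter fun p : Fin n × Fin n =>
      G p.1 p.2 = true ∧ p.2 ∈ S).card = S.card * d := by
    rw [col_count hG fun j => j ∈ S]; simp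
  have hE4 : ((univ ×ˢ univ).filter fun p : Fin n × Fin n =>
      G p.1 p.2 = true ∧ G v p.2 = true).card ≤ d * d := by
    rw [col_count hG fun j => G v j = true]
    exact Nat.mul_le_mul_right d (le_of_eq (row_card hG v))
  set P0 := (univ ×ˢ univ).filter fun p : Fin n × Fin n =>
      G p.1 p.2 = true ∧ rdS G S p.1 = 0 ∧ p.2 ∉ I ∧ p.2 ∉ S ∧ G v p.2 = false with hP0
  set P1 := (univ ×ˢ univ).filter fun p : Fin n × Fin n =>
      G p.1 p.2 = true ∧ 1 ≤ rdS G S p.1 with hP1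
  set P2 := (univ ×ˢ univ).filter fun p : Fin n × Fin n =>
      G p.1 p.2 = true ∧ p.2 ∈ I with hP2
  set P3 := (univ ×ˢ univ).filter fun p : Fin n × Fin n =>
      G p.1 p.2 = true ∧ p.2 ∈ S with hP3
  set P4 := (univ ×ˢ univ).filter fun p : Fin n × Fin n =>
      G p.1 p.2 = true ∧ G v p.2 = true with hP4
  have hsub : ((univ ×ˢ univ).filter fun p : Fin n × Fin n => G p.1 p.2 = true)
      ⊆ (((P0 ∪ P1) ∪ P2) ∪ P3) ∪ P4 := by
    intro p hp
    simp only [hP0, hP1, hP2, hP3, hP4, Finset.mem_filter, Finset.mem_union] at *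
    by_cases h1 : 1 ≤ rdS G S p.1
    · exact Or.inl (Or.inl (Or.inl (Or.inr ⟨hp.1, hp.2, h1⟩)))
    · by_cases h2 : p.2 ∈ I
      · exact Or.inl (Or.inl (Or.inr ⟨hp.1, hp.2, h2⟩))
      · by_cases h3 : p.2 ∈ S
        · exact Or.inl (Or.inr ⟨hp.1, hp.2, h3⟩)
        · by_cases h4 : G v p.2 = true
          · exact Or.inr ⟨hp.1, hp.2, h4⟩
          · refine Or.inl (Or.inl (Or.inl (Or.inl ⟨hp.1, hp.2, by omega, h2, h3, ?_⟩)))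
            simp only [Bool.not_eq_true] at h4; exact h4
  have hcard : n * d ≤ ((((P0 ∪ P1) ∪ P2) ∪ P3) ∪ P4).card := by
    rw [← hE]; exact Finset.card_le_card hsub
  have h1 := Finset.card_union_le (((P0 ∪ P1) ∪ P2) ∪ P3) P4
  have h2 := Finset.card_union_le ((P0 ∪ P1) ∪ P2) P3
  have h3 := Finset.card_union_le (P0 ∪ P1) P2
  have h4 := Finset.card_union_le P0 P1
  omega

lemma card_E1_le (hG : G ∈ Dreg n d) :
    ((univ ×ˢ univ).filter fun p : Fin n × Fin n =>
      G p.1 p.2 = true ∧ 1 ≤ rdS G S p.1).card ≤ (d * S.card) * d := by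
  rw [card_filter_prod]
  have hrw : ∀ w : Fin n, (univ.filter fun j => G w j = true ∧ 1 ≤ rdS G S w).card
      = if 1 ≤ rdS G S w then d else 0 := by
    intro w
    by_cases h : 1 ≤ rdS G S w
    · rw [if_pos h]
      rw [show (univ.filter fun j => G w j = true ∧ 1 ≤ rdS G S w)
          = univ.filter fun j => G w j = true by ext j; simp [h]]
      exact row_card hG w
    · rw [if_neg h]
      rw [show (univ.filter fun j => G w j = true ∧ 1 ≤ rdS G S w) = ∅ by ext j; simp [h]]
      rfl
  rw [Finset.sum_congr rfl fun w _ => hrw w, ← Finset.sum_filter]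
  simp only [Finset.sum_const, smul_eq_mul]
  rw [← inNbr_eq_filter]
  exact Nat.mul_le_mul_right d (inNbr_card_le S hG)

end counts

/-- valid switching moves: `t = ((v,i),(w,j))` -/
def validMove (I S : Finset (Fin n)) (G : Fin n → Fin n → Bool)
    (t : (Fin n × Fin n) × Fin n × Fin n) : Prop :=
  t.1.2 ∈ S ∧ G t.1.1 t.1.2 = true ∧ 2 ≤ rdS G S t.1.1 ∧
  G t.2.1 t.2.2 = true ∧ rdS G S t.2.1 = 0 ∧ t.2.2 ∉ I ∧ t.2.2 ∉ S ∧ G t.1.1 t.2.2 = false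

section switch

variable {d : ℕ} {I S : Finset (Fin n)} {F : Finset (Fin n × Fin n)}
variable {G : Fin n → Fin n → Bool} {v i w j : Fin n}

lemma rdS_zero_not (h : rdS G S w = 0) (hiS : i ∈ S) : G w i = false := by
  by_contra hx
  simp only [Bool.not_eq_false] at hx
  have : 0 < rdS G S w := Finset.card_pos.mpr ⟨i, Finset.mem_filter.mpr ⟨hiS, hx⟩⟩
  omega

lemma validMove_wi (hm : validMove I S G ((v, i), (w, j))) : G w i = false :=
  rdS_zero_not hm.2.2.2.2.1 hm.1

lemma validMove_vw (hm : validMove I S G ((v, i), (w, j))) : v ≠ w := by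
  intro h
  have h1 := hm.2.1
  have h2 := validMove_wi hm
  rw [h] at h1; rw [h1] at h2; simp at h2

lemma validMove_ij (hm : validMove I S G ((v, i), (w, j))) : i ≠ j := by
  intro h
  exact hm.2.2.2.2.2.2.1 (h ▸ hm.1)

lemma swG_vi : swG G v i w j v i = false := by simp [swG]

lemma swG_wi (hvw : v ≠ w) : swG G v i w j w i = true := by
  simp [swG, Ne.symm hvw]

lemma swG_wj (hvw : v ≠ w) (hij : i ≠ j) : swG G v i w j w j = false := by
  simp [swG, Ne.symm hvw, Ne.symm hij]

lemma swG_vj (hvw : v ≠ w) (hij : i ≠ j) : swG G v i w j v j = true := by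
  simp [swG, hvw, Ne.symm hij]

lemma swG_other {a b : Fin n} (h1 : ¬(a = v ∧ b = i)) (h2 : ¬(a = w ∧ b = i))
    (h3 : ¬(a = w ∧ b = j)) (h4 : ¬(a = v ∧ b = j)) : swG G v i w j a b = G a b := by
  simp only [swG, if_neg h1, if_neg h2, if_neg h3, if_neg h4]

lemma swG_swG (hm : validMove I S G ((v, i), (w, j))) :
    swG (swG G v i w j) v j w i = G := by
  have hvw := validMove_vw hm
  have hij := validMove_ij hm
  funext a b
  by_cases h1 : a = v ∧ b = j
  · obtain ⟨rfl, rfl⟩ := h1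
    rw [show swG (swG G a i w b) a b w i a b = false by simp [swG]]
    exact hm.2.2.2.2.2.2.2.symm
  · by_cases h2 : a = w ∧ b = j
    · obtain ⟨rfl, rfl⟩ := h2
      rw [show swG (swG G v i a b) v b a i a b = true by
        simp [swG, Ne.symm hvw]]
      exact hm.2.2.2.1.symm
    · by_cases h3 : a = w ∧ b = i
      · obtain ⟨rfl, rfl⟩ := h3
        rw [show swG (swG G v b a j) v j a b a b = false by
          simp [swG, Ne.symm hvw, hij]]
        exact (validMove_wi hm).symm
      · by_cases h4 : a = v ∧ b = i
        · obtain ⟨rfl, rfl⟩ := h4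
          rw [show swG (swG G a b w j) a j w b a b = true by
            simp [swG, hij, hvw]]
          exact hm.2.1.symm
        · rw [show swG (swG G v i w j) v j w i a b = swG G v i w j a b from
            swG_other h1 h2 h3 h4]
          exact swG_other h4 h3 h2 h1

lemma swG_mem_Dreg (hG : G ∈ Dreg n d) (hm : validMove I S G ((v, i), (w, j))) :
    swG G v i w j ∈ Dreg n d := by
  have hvw := validMove_vw hm
  have hij := validMove_ij hm
  have hGvi := hm.2.1
  have hGwj := hm.2.2.2.1
  have hGwi := validMove_wi hm
  have hGvj := hm.2.2.2.2.2.2.2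
  rw [Dreg, Finset.mem_filter] at hG ⊢
  refine ⟨Finset.mem_univ _, fun a => ?_, fun b => ?_⟩
  · by_cases hav : a = v
    · subst hav
      rw [card_filter_swap (swG G a i w j a) (x := i) (y := j) (f := G a) hij hGvi hGvj
        (swG_vj hvw hij) swG_vi (fun b hbi hbj => swG_other (by simp [hbi]) (by simp [hvw])
          (by simp [hvw]) (by simp [hbj]))]
      exact hG.2.1 a
    · by_cases haw : a = w
      · subst haw
        rw [card_filter_swap (swG G v i a j a) (x := j) (y := i) (f := G a) (Ne.symm hij)
          hGwj hGwi (swG_wi hvw) (swG_wj hvw hij) (fun b hbj hbi => swG_other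
            (by simp [hav]) (by simp [hbi]) (by simp [hbj]) (by simp [hav]))]
        exact hG.2.1 a
      · rw [show (univ.filter fun b => swG G v i w j a b = true)
            = univ.filter fun b => G a b = true by
          ext b
          simp only [Finset.mem_filter, Finset.mem_univ, true_and]
          rw [swG_other (by simp [hav]) (by simp [haw]) (by simp [haw]) (by simp [hav])]]
        exact hG.2.1 a
  · by_cases hbi : b = i
    · subst hbi
      rw [card_filter_swap (fun a => swG G v b w j a b) (x := v) (y := w)
        (f := fun a => G a b) hvw hGvi hGwi (swG_wi hvw) swG_vi
        (fun a hav haw => swG_other (by simp [hav]) (by simp [haw]) (by simp [haw])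
          (by simp [hav]))]
      exact hG.2.2 b
    · by_cases hbj : b = j
      · subst hbj
        rw [card_filter_swap (fun a => swG G v i w b a b) (x := w) (y := v)
          (f := fun a => G a b) (Ne.symm hvw) hGwj hGvj (swG_vj hvw hij) (swG_wj hvw hij)
          (fun a haw hav => swG_other (by simp [hbi]) (by simp [hbi]) (by simp [haw])
            (by simp [hav]))]
        exact hG.2.2 b
      · rw [show (univ.filter fun a => swG G v i w j a b = true)
            = univ.filter fun a => G a b = true by
          ext a
          simp only [Finset.mem_filter, Finset.mem_univ, true_and]
          rw [swG_other (by simp [hbi]) (by simp [hbi]) (by simp [hbj]) (by simp [hbj])]]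
        exact hG.2.2 b

lemma swG_mem_Dcond (hG : G ∈ Dcond n d I F) (hdisj : ∀ x ∈ S, x ∉ I)
    (hm : validMove I S G ((v, i), (w, j))) : swG G v i w j ∈ Dcond n d I F := by
  rw [Dcond, Finset.mem_filter] at hG ⊢
  refine ⟨swG_mem_Dreg hG.1 hm, ?_⟩
  rw [← hG.2]
  have hiI : i ∉ I := hdisj i hm.1
  have hjI : j ∉ I := hm.2.2.2.2.2.1
  ext p
  simp only [Finset.mem_filter, Finset.mem_univ, true_and]
  by_cases hp : p.2 ∈ I
  · have hpi : ¬ p.2 = i := fun h => hiI (h ▸ hp)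
    have hpj : ¬ p.2 = j := fun h => hjI (h ▸ hp)
    rw [swG_other (fun h => hpi h.2) (fun h => hpi h.2) (fun h => hpj h.2) (fun h => hpj h.2)]
  · simp [hp]

lemma swG_inNbr (hm : validMove I S G ((v, i), (w, j))) :
    w ∉ inNbr G S ∧ inNbr (swG G v i w j) S = insert w (inNbr G S) := by
  have hvw := validMove_vw hm
  have hij := validMove_ij hm
  have hjS : j ∉ S := hm.2.2.2.2.2.2.1
  have hwN : w ∉ inNbr G S := by
    rw [rdS_pos_iff, hm.2.2.2.2.1]; omega
  refine ⟨hwN, ?_⟩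
  have hvrow : ∃ i', i' ∈ S ∧ i' ≠ i ∧ G v i' = true := by
    have h2 : 1 < (S.filter fun x => G v x = true).card := hm.2.2.1
    obtain ⟨a, ha, b, hb, hab⟩ := Finset.one_lt_card.mp h2
    simp only [Finset.mem_filter] at ha hb
    by_cases hai : a = i
    · exact ⟨b, hb.1, fun h => hab (by rw [hai, h]), hb.2⟩
    · exact ⟨a, ha.1, hai, ha.2⟩
  ext u
  simp only [inNbr, Finset.mem_filter, Finset.mem_univ, true_and, Finset.mem_insert]
  constructor
  · intro ⟨i', hi'S, hGi'⟩
    by_cases huw : u = w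
    · exact Or.inl huw
    · refine Or.inr ⟨i', hi'S, ?_⟩
      by_cases huv : u = v
      · subst huv
        by_cases hii : i' = i
        · rw [hii, swG_vi] at hGi'
          exact absurd hGi' (by simp)
        · rw [← hGi', swG_other (fun h => hii h.2) (fun h => huw h.1) (fun h => huw h.1)
            (fun h => hjS (by rw [← h.2]; exact hi'S))]
      · rw [← hGi', swG_other (fun h => huv h.1) (fun h => huw h.1) (fun h => huw h.1)
          (fun h => huv h.1)]
  · intro h
    rcases h with huw | ⟨i', hi'S, hGi'⟩
    · exact ⟨i, hm.1, by rw [huw]; exact swG_wi hvw⟩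
    · by_cases huv : u = v
      · subst huv
        obtain ⟨i'', hi''S, hii'', hGi''⟩ := hvrow
        refine ⟨i'', hi''S, ?_⟩
        rw [swG_other (fun h => hii'' h.2) (fun h => hvw h.1) (fun h => hvw h.1)
          (fun h => hjS (by rw [← h.2]; exact hi''S))]
        exact hGi''
      · by_cases huw : u = w
        · exact ⟨i, hm.1, by rw [huw]; exact swG_wi hvw⟩
        · refine ⟨i', hi'S, ?_⟩
          rw [swG_other (fun h => huv h.1) (fun h => huw h.1) (fun h => huw h.1)
            (fun h => huv h.1)]
          exact hGi'

end switch

section stepchain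

variable {d : ℕ} {I S : Finset (Fin n)} {F : Finset (Fin n × Fin n)}

/-- graphs in the conditioned class whose in-neighborhood of `S` is small by `s` -/
def Cset (n d : ℕ) (I S : Finset (Fin n)) (F : Finset (Fin n × Fin n)) (s : ℕ) :
    Finset (Fin n → Fin n → Bool) :=
  (Dcond n d I F).filter fun G => (inNbr G S).card + s ≤ d * S.card

lemma Cset_mem_Dreg {s : ℕ} {G : Fin n → Fin n → Bool} (h : G ∈ Cset n d I S F s) :
    G ∈ Dreg n d := Finset.filter_subset _ _ (Finset.filter_subset _ _ h)

lemma moves_card_ge {G : Fin n → Fin n → Bool} (hG : G ∈ Dreg n d) {s : ℕ}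
    (hN : (inNbr G S).card + s ≤ d * S.card) :
    s * (d * (n - (d * S.card + I.card + S.card + d)))
      ≤ ((univ : Finset ((Fin n × Fin n) × Fin n × Fin n)).filter
          fun t => validMove I S G t).card := by
  classical
  set M := d * (n - (d * S.card + I.card + S.card + d)) with hM
  set A := (univ ×ˢ univ).filter fun p : Fin n × Fin n =>
    p.2 ∈ S ∧ G p.1 p.2 = true ∧ 2 ≤ rdS G S p.1 with hA
  set B := fun vv : Fin n => (univ ×ˢ univ).filter fun p : Fin n × Fin n =>
    G p.1 p.2 = true ∧ rdS G S p.1 = 0 ∧ p.2 ∉ I ∧ p.2 ∉ S ∧ G vv p.2 = false with hB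
  have hmoves : ((univ : Finset ((Fin n × Fin n) × Fin n × Fin n)).filter
      fun t => validMove I S G t) = A.biUnion fun a => {a} ×ˢ B a.1 := by
    ext t
    simp only [Finset.mem_filter, Finset.mem_univ, true_and, Finset.mem_biUnion,
      Finset.mem_product, Finset.mem_singleton, hA, hB]
    simp only [validMove]
    constructor
    · rintro ⟨h1, h2, h3, h4, h5, h6, h7, h8⟩
      exact ⟨t.1, ⟨h1, h2, h3⟩, rfl, h4, h5, h6, h7, h8⟩
    · rintro ⟨a, ⟨h1, h2, h3⟩, rfl, h4, h5, h6, h7, h8⟩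
      exact ⟨h1, h2, h3, h4, h5, h6, h7, h8⟩
  have hBcard : ∀ vv : Fin n, M ≤ (B vv).card := by
    intro vv
    have hb := card_B_ge S hG I vv
    set X := d * S.card + I.card + S.card + d with hX
    have hx : X * d = (d * S.card) * d + I.card * d + S.card * d + d * d := by ring
    rcases le_or_gt X n with h | h
    · have h1 : d * (n - X) + X * d = n * d := by
        rw [mul_comm X d, ← mul_add, Nat.sub_add_cancel h, mul_comm]
      refine Nat.le_of_add_le_add_right (?_ : M + X * d ≤ (B vv).card + X * d)
      rw [hM, h1, hx]
      calc n * d ≤ (B vv).card + (d * S.card) * d + I.card * d + S.card * d + d * d := hb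
        _ = (B vv).card + ((d * S.card) * d + I.card * d + S.card * d + d * d) := by ring
    · have : n - X = 0 := by omega
      simp [hM, this]
  have hAcard : s ≤ A.card := by
    have := card_A_ge S hG
    rw [← hA] at this
    omega
  rw [hmoves, Finset.card_biUnion (fun a _ b _ hab => Finset.disjoint_left.mpr (by
    intro t ht1 ht2
    simp only [Finset.mem_product, Finset.mem_singleton] at ht1 ht2
    exact hab (ht1.1.symm.trans ht2.1)))]
  calc s * M ≤ A.card * M := Nat.mul_le_mul_right M hAcard
    _ = ∑ _a ∈ A, M := by rw [Finset.sum_const, smul_eq_mul]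
    _ ≤ ∑ a ∈ A, ({a} ×ˢ B a.1).card := by
        refine Finset.sum_le_sum fun a _ => ?_
        rw [Finset.card_product, Finset.card_singleton, one_mul]
        exact hBcard a.1
    _ = _ := rfl

lemma step_ineq (hdisj : ∀ x ∈ S, x ∉ I) (s : ℕ) (hs : 1 ≤ s) :
    (Cset n d I S F s).card * (s * (d * (n - (d * S.card + I.card + S.card + d))))
      ≤ (Cset n d I S F (s - 1)).card * ((S.card * d) * ((d * S.card) * d)) := by
  classical
  set M := d * (n - (d * S.card + I.card + S.card + d)) with hM
  set K := (S.card * d) * ((d * S.card) * d) with hK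
  set R := (univ ×ˢ (univ : Finset ((Fin n × Fin n) × Fin n × Fin n))).filter
    fun q : (Fin n → Fin n → Bool) × ((Fin n × Fin n) × Fin n × Fin n) =>
      q.1 ∈ Cset n d I S F s ∧ validMove I S q.1 q.2 with hR
  set R' := (univ ×ˢ (univ : Finset ((Fin n × Fin n) × Fin n × Fin n))).filter
    fun q : (Fin n → Fin n → Bool) × ((Fin n × Fin n) × Fin n × Fin n) =>
      q.1 ∈ Cset n d I S F (s - 1) ∧ q.2.1.2 ∈ S ∧ q.1 q.2.2.1 q.2.1.2 = true ∧
        1 ≤ rdS q.1 S q.2.1.1 ∧ q.1 q.2.1.1 q.2.2.2 = true with hR'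
  -- Step A
  have stepA : (Cset n d I S F s).card * (s * M) ≤ R.card := by
    rw [hR, card_filter_prod]
    have hinner : ∀ G ∈ Cset n d I S F s,
        s * M ≤ ((univ : Finset ((Fin n × Fin n) × Fin n × Fin n)).filter
          fun t => G ∈ Cset n d I S F s ∧ validMove I S G t).card := by
      intro G hGmem
      rw [show ((univ : Finset ((Fin n × Fin n) × Fin n × Fin n)).filter
          fun t => G ∈ Cset n d I S F s ∧ validMove I S G t)
          = (univ : Finset ((Fin n × Fin n) × Fin n × Fin n)).filter
            fun t => validMove I S G t by ext t; simp [hGmem]]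
      have hN : (inNbr G S).card + s ≤ d * S.card := (Finset.mem_filter.mp hGmem).2
      exact moves_card_ge (Cset_mem_Dreg hGmem) hN
    calc (Cset n d I S F s).card * (s * M) = ∑ _G ∈ Cset n d I S F s, s * M := by
          rw [Finset.sum_const, smul_eq_mul]
      _ ≤ ∑ G ∈ Cset n d I S F s, ((univ : Finset ((Fin n × Fin n) × Fin n × Fin n)).filter
            fun t => G ∈ Cset n d I S F s ∧ validMove I S G t).card :=
          Finset.sum_le_sum hinner
      _ ≤ ∑ G : Fin n → Fin n → Bool, ((univ : Finset ((Fin n × Fin n) × Fin n × Fin n)).filter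
            fun t => G ∈ Cset n d I S F s ∧ validMove I S G t).card :=
          Finset.sum_le_sum_of_subset (Finset.subset_univ _)
      _ = _ := rfl
  -- Step B
  have stepB : R.card ≤ R'.card := by
    refine Finset.card_le_card_of_injOn
      (fun q => (swG q.1 q.2.1.1 q.2.1.2 q.2.2.1 q.2.2.2, q.2)) ?_ ?_
    · intro q hq
      have hq' := Finset.mem_coe.mp hq
      rw [hR, Finset.mem_filter] at hq'
      obtain ⟨-, hq1, hq2⟩ := hq'
      have hm : validMove I S q.1 ((q.2.1.1, q.2.1.2), (q.2.2.1, q.2.2.2)) := by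
        simpa using hq2
      have hDcond : q.1 ∈ Dcond n d I F := Finset.filter_subset _ _ hq1
      have hNle : (inNbr q.1 S).card + s ≤ d * S.card := (Finset.mem_filter.mp hq1).2
      obtain ⟨hwN, hNeq⟩ := swG_inNbr hm
      have hvw := validMove_vw hm
      have hij := validMove_ij hm
      refine Finset.mem_coe.mpr (Finset.mem_filter.mpr
        ⟨Finset.mem_product.mpr ⟨Finset.mem_univ _, Finset.mem_univ _⟩, ?_, hm.1, ?_, ?_, ?_⟩)
      · rw [Cset, Finset.mem_filter]
        refine ⟨swG_mem_Dcond hDcond hdisj hm, ?_⟩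
        rw [hNeq, Finset.card_insert_of_notMem hwN]
        omega
      · exact swG_wi hvw
      · have hvin : q.2.1.1 ∈ inNbr (swG q.1 q.2.1.1 q.2.1.2 q.2.2.1 q.2.2.2) S := by
          rw [hNeq, Finset.mem_insert]
          right
          rw [rdS_pos_iff]
          have h2 : 2 ≤ rdS q.1 S q.2.1.1 := hm.2.2.1
          omega
        rw [← rdS_pos_iff]
        exact hvin
      · exact swG_vj hvw hij
    · intro q1 hq1 q2 hq2 heq
      simp only [Prod.mk.injEq] at heq
      obtain ⟨hsw, ht⟩ := heq
      have hq1' := Finset.mem_filter.mp (Finset.mem_coe.mp hq1)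
      have hq2' := Finset.mem_filter.mp (Finset.mem_coe.mp hq2)
      have hm1 : validMove I S q1.1 ((q1.2.1.1, q1.2.1.2), (q1.2.2.1, q1.2.2.2)) := by
        have := hq1'.2.2
        simpa using this
      have hm2 : validMove I S q2.1 ((q2.2.1.1, q2.2.1.2), (q2.2.2.1, q2.2.2.2)) := by
        have := hq2'.2.2
        simpa using this
      have h1 := swG_swG hm1
      have h2 := swG_swG hm2
      have : q1.1 = q2.1 := by
        rw [← h1, ← h2, hsw, ht]
      exact Prod.ext this ht
  -- Step C
  have stepC : R'.card ≤ (Cset n d I S F (s - 1)).card * K := by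
    rw [hR', card_filter_prod]
    have hinner : ∀ G' : Fin n → Fin n → Bool,
        ((univ : Finset ((Fin n × Fin n) × Fin n × Fin n)).filter
          fun t => G' ∈ Cset n d I S F (s - 1) ∧ t.1.2 ∈ S ∧ G' t.2.1 t.1.2 = true ∧
            1 ≤ rdS G' S t.1.1 ∧ G' t.1.1 t.2.2 = true).card
          ≤ if G' ∈ Cset n d I S F (s - 1) then K else 0 := by
      intro G'
      by_cases hmem : G' ∈ Cset n d I S F (s - 1)
      · rw [if_pos hmem]
        set P := (univ ×ˢ univ).filter fun p : Fin n × Fin n =>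
          G' p.1 p.2 = true ∧ p.2 ∈ S with hP
        set Q := (univ ×ˢ univ).filter fun p : Fin n × Fin n =>
          G' p.1 p.2 = true ∧ 1 ≤ rdS G' S p.1 with hQ
        have hinj : ((univ : Finset ((Fin n × Fin n) × Fin n × Fin n)).filter
            fun t => G' ∈ Cset n d I S F (s - 1) ∧ t.1.2 ∈ S ∧ G' t.2.1 t.1.2 = true ∧
              1 ≤ rdS G' S t.1.1 ∧ G' t.1.1 t.2.2 = true).card ≤ (P ×ˢ Q).card := by
          refine Finset.card_le_card_of_injOn
            (fun t => ((t.2.1, t.1.2), (t.1.1, t.2.2))) ?_ ?_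
          · intro t ht
            simp only [Finset.mem_coe, Finset.mem_filter, Finset.mem_univ, true_and] at ht
            simp only [Finset.mem_coe, Finset.mem_product, hP, hQ, Finset.mem_filter, Finset.mem_univ,
              true_and]
            exact ⟨⟨ht.2.2.1, ht.2.1⟩, ht.2.2.2.2, ht.2.2.2.1⟩
          · intro t1 _ t2 _ h
            simp only [Prod.mk.injEq] at h
            obtain ⟨⟨a1, a2⟩, a3, a4⟩ := h
            have : t1.1 = t2.1 := Prod.ext a3 a2
            have h2 : t1.2 = t2.2 := Prod.ext a1 a4
            exact Prod.ext this h2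
        have hPcard : P.card = S.card * d := by
          rw [hP, col_count (Cset_mem_Dreg hmem) fun j => j ∈ S]
          simp
        have hQcard : Q.card ≤ (d * S.card) * d := card_E1_le S (Cset_mem_Dreg hmem)
        calc _ ≤ (P ×ˢ Q).card := hinj
          _ = P.card * Q.card := Finset.card_product P Q
          _ ≤ (S.card * d) * ((d * S.card) * d) := by
              rw [hPcard]
              exact Nat.mul_le_mul_left _ hQcard
          _ = K := hK.symm
      · rw [if_neg hmem]
        rw [show ((univ : Finset ((Fin n × Fin n) × Fin n × Fin n)).filter
            fun t => G' ∈ Cset n d I S F (s - 1) ∧ t.1.2 ∈ S ∧ G' t.2.1 t.1.2 = true ∧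
              1 ≤ rdS G' S t.1.1 ∧ G' t.1.1 t.2.2 = true) = ∅ by
          ext t; simp [hmem]]
        simp
    calc (∑ G' : Fin n → Fin n → Bool, ((univ : Finset ((Fin n × Fin n) × Fin n × Fin n)).filter
          fun t => G' ∈ Cset n d I S F (s - 1) ∧ t.1.2 ∈ S ∧ G' t.2.1 t.1.2 = true ∧
            1 ≤ rdS G' S t.1.1 ∧ G' t.1.1 t.2.2 = true).card)
        ≤ ∑ G' : Fin n → Fin n → Bool, if G' ∈ Cset n d I S F (s - 1) then K else 0 :=
          Finset.sum_le_sum fun G' _ => hinner G'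
      _ = ∑ G' ∈ univ.filter (fun G' => G' ∈ Cset n d I S F (s - 1)), K := by
          rw [Finset.sum_filter]
      _ = (Cset n d I S F (s - 1)).card * K := by
          rw [Finset.filter_univ_mem, Finset.sum_const, smul_eq_mul]
  calc (Cset n d I S F s).card * (s * M) ≤ R.card := stepA
    _ ≤ R'.card := stepB
    _ ≤ (Cset n d I S F (s - 1)).card * K := stepC

lemma chain_ineq (hdisj : ∀ x ∈ S, x ∉ I) (r : ℕ) :
    (Cset n d I S F r).card *
        (r.factorial * (d * (n - (d * S.card + I.card + S.card + d))) ^ r)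
      ≤ (Cset n d I S F 0).card * ((S.card * d) * ((d * S.card) * d)) ^ r := by
  induction r with
  | zero => simp
  | succ r ih =>
    set M := d * (n - (d * S.card + I.card + S.card + d)) with hM
    set K := (S.card * d) * ((d * S.card) * d) with hK
    have hstep := step_ineq (d := d) (F := F) hdisj (r + 1) (by omega)
    simp only [Nat.add_sub_cancel] at hstep
    calc (Cset n d I S F (r + 1)).card * ((r + 1).factorial * M ^ (r + 1))
        = ((Cset n d I S F (r + 1)).card * ((r + 1) * M)) * (r.factorial * M ^ r) := by
          rw [Nat.factorial_succ, pow_succ]; ring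
      _ ≤ ((Cset n d I S F r).card * K) * (r.factorial * M ^ r) :=
          Nat.mul_le_mul_right _ hstep
      _ = ((Cset n d I S F r).card * (r.factorial * M ^ r)) * K := by ring
      _ ≤ ((Cset n d I S F 0).card * K ^ r) * K := Nat.mul_le_mul_right _ ih
      _ = (Cset n d I S F 0).card * K ^ (r + 1) := by rw [pow_succ]; ring

end stepchain

section analysis

open Real

lemma factorial_bound (r : ℕ) : (r : ℝ) ^ r ≤ r.factorial * Real.exp 1 ^ r := by
  induction r with
  | zero => simp
  | succ r ih =>
    have hexp1 : (1:ℝ) ≤ Real.exp 1 := by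
      have := Real.add_one_le_exp (1:ℝ); linarith
    have h1 : ((r:ℝ) + 1) ^ r ≤ (r:ℝ) ^ r * Real.exp 1 := by
      rcases Nat.eq_zero_or_pos r with h | h
      · subst h; simpa using hexp1
      · have hr : (0:ℝ) < r := by exact_mod_cast h
        have heq : ((r:ℝ) + 1) ^ r = (r:ℝ) ^ r * (1 + 1/(r:ℝ)) ^ r := by
          rw [← mul_pow]
          congr 1
          field_simp
        rw [heq]
        have h2 : (1 + 1/(r:ℝ)) ^ r ≤ Real.exp 1 := by
          have ha : (1:ℝ) + 1/(r:ℝ) ≤ Real.exp (1/(r:ℝ)) := by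
            have := Real.add_one_le_exp (1/(r:ℝ)); linarith
          calc (1 + 1/(r:ℝ)) ^ r ≤ Real.exp (1/(r:ℝ)) ^ r := by
                refine pow_le_pow_left₀ (by positivity) ha r
            _ = Real.exp ((r:ℝ) * (1/(r:ℝ))) := by rw [← Real.exp_nat_mul]
            _ = Real.exp 1 := by rw [mul_one_div, div_self (ne_of_gt hr)]
        have hp : (0:ℝ) ≤ (r:ℝ) ^ r := by positivity
        nlinarith
    have hfac : (0:ℝ) < (r.factorial : ℝ) := by exact_mod_cast r.factorial_pos
    have hpow : (0:ℝ) ≤ Real.exp 1 ^ r := by positivity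
    calc ((r + 1 : ℕ) : ℝ) ^ (r + 1) = ((r:ℝ) + 1) * ((r:ℝ) + 1) ^ r := by
          push_cast; rw [pow_succ]; ring
      _ ≤ ((r:ℝ) + 1) * ((r:ℝ) ^ r * Real.exp 1) := by
          refine mul_le_mul_of_nonneg_left h1 (by positivity)
      _ ≤ ((r:ℝ) + 1) * ((r.factorial * Real.exp 1 ^ r) * Real.exp 1) := by
          refine mul_le_mul_of_nonneg_left (mul_le_mul_of_nonneg_right ih (by positivity))
            (by positivity)
      _ = ((r + 1 : ℕ).factorial : ℝ) * Real.exp 1 ^ (r + 1) := by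
          rw [Nat.factorial_succ]; push_cast; rw [pow_succ]; ring

lemma choose_le_exp_bound (n k : ℕ) (hk : 1 ≤ k) :
    ((n.choose k : ℝ)) ≤ (Real.exp 1 * n / k) ^ k := by
  have hk0 : (0:ℝ) < k := by exact_mod_cast hk
  have hfac : (0:ℝ) < (k.factorial : ℝ) := by exact_mod_cast k.factorial_pos
  have h1 : ((n.choose k : ℝ)) ≤ (n:ℝ) ^ k / k.factorial := Nat.choose_le_pow_div k n
  have h2 : (n:ℝ) ^ k / k.factorial ≤ (Real.exp 1 * n / k) ^ k := by
    rw [div_le_iff₀ hfac]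
    have hfb := factorial_bound k
    have h3 : ((k:ℝ)/Real.exp 1) ^ k ≤ k.factorial := by
      rw [div_pow, div_le_iff₀ (by positivity)]
      calc (k:ℝ) ^ k ≤ k.factorial * Real.exp 1 ^ k := hfb
        _ = _ := by ring
    calc (n:ℝ) ^ k = (Real.exp 1 * n / k) ^ k * ((k:ℝ)/Real.exp 1) ^ k := by
          rw [← mul_pow]
          congr 1
          field_simp
      _ ≤ (Real.exp 1 * n / k) ^ k * k.factorial := by
          refine mul_le_mul_of_nonneg_left h3 (by positivity)
  linarith

set_option maxHeartbeats 1000000 in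
lemma perS_bound {n d : ℕ} {ε : ℝ} {I S : Finset (Fin n)} {F : Finset (Fin n × Fin n)}
    (hd8 : 8 ≤ d) (hdn : d ≤ n) (hε0 : 0 < ε) (hε1 : ε < 1)
    (hk2 : 2 ≤ S.card) (hε2 : max 8 (Real.log d) / d ≤ ε ^ 2)
    (hkc : (S.card : ℝ) ≤ Real.exp (-80) * ε * n / d)
    (hIc : (I.card : ℝ) ≤ n / 8)
    (hdisj : ∀ x ∈ S, x ∉ I) :
    (((Dcond n d I F).filter fun G =>
        ((inNbr G S).card : ℝ) ≤ (1 - ε) * d * S.card).card : ℝ)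
      ≤ ((Dcond n d I F).card : ℝ) *
        Real.exp ((ε * d * S.card) * Real.log (2 * Real.exp 1 * d * S.card / (ε * n))) := by
  classical
  set k := S.card with hkdef
  have hdpos : 0 < d := by omega
  have hd0 : (0:ℝ) < d := by exact_mod_cast hdpos
  have hn0 : (0:ℝ) < n := by
    have : 0 < n := by omega
    exact_mod_cast this
  have hk0 : (0:ℝ) < k := by
    have : 0 < k := by omega
    exact_mod_cast this
  have hkR : (2:ℝ) ≤ k := by exact_mod_cast hk2
  have hc81 : Real.exp (-80) ≤ 1/81 := by
    rw [Real.exp_neg]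
    rw [inv_le_comm₀ (Real.exp_pos 80) (by norm_num)]
    have := Real.add_one_le_exp (80:ℝ)
    linarith
  have hc0 : (0:ℝ) < Real.exp (-80) := Real.exp_pos _
  have he1 : (1:ℝ) ≤ Real.exp 1 := by
    have := Real.add_one_le_exp (1:ℝ); linarith
  have he3 : Real.exp 1 ≤ 3 := by
    have := Real.exp_one_lt_d9; linarith
  -- dk ≤ c ε n
  have hdk : (d:ℝ) * k ≤ Real.exp (-80) * ε * n := by
    have := mul_le_mul_of_nonneg_left hkc (le_of_lt hd0)
    calc (d:ℝ) * k ≤ d * (Real.exp (-80) * ε * n / d) := this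
      _ = Real.exp (-80) * ε * n := by field_simp
  have hdkn : (d:ℝ) * k ≤ n / 81 := by
    calc (d:ℝ) * k ≤ Real.exp (-80) * ε * n := hdk
      _ ≤ (1/81) * 1 * n := by
          refine mul_le_mul_of_nonneg_right ?_ (le_of_lt hn0)
          refine mul_le_mul hc81 (le_of_lt hε1) (le_of_lt hε0) (by norm_num)
      _ = n / 81 := by ring
  -- the ceiling
  set r := ⌈ε * d * k⌉₊ with hrdef
  have hεdk0 : (0:ℝ) < ε * d * k := by positivity
  have hr1 : 1 ≤ r := by
    rw [hrdef]
    exact Nat.one_le_iff_ne_zero.mpr (by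
      intro h
      have := Nat.ceil_eq_zero.mp h
      linarith)
  have hrge : ε * d * k ≤ r := Nat.le_ceil _
  -- event ⊆ Cset r
  have hsub : ((Dcond n d I F).filter fun G =>
      ((inNbr G S).card : ℝ) ≤ (1 - ε) * d * S.card) ⊆ Cset n d I S F r := by
    intro G hG
    rw [Finset.mem_filter] at hG
    obtain ⟨hGD, hGev⟩ := hG
    have hGreg : G ∈ Dreg n d := Finset.filter_subset _ _ hGD
    have hNle : (inNbr G S).card ≤ d * k := inNbr_card_le S hGreg
    rw [Cset, Finset.mem_filter]
    refine ⟨hGD, ?_⟩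
    have hrle : r ≤ d * k - (inNbr G S).card := by
      rw [hrdef]
      refine Nat.ceil_le.mpr ?_
      have : ((d * k - (inNbr G S).card : ℕ) : ℝ)
          = (d:ℝ) * k - (inNbr G S).card := by
        push_cast [Nat.cast_sub hNle]
        ring
      rw [this]
      have : ((inNbr G S).card : ℝ) ≤ (1 - ε) * d * k := hGev
      nlinarith
    rw [← hkdef]
    omega
  have hEs : (((Dcond n d I F).filter fun G =>
      ((inNbr G S).card : ℝ) ≤ (1 - ε) * d * S.card).card : ℝ)
      ≤ ((Cset n d I S F r).card : ℝ) := by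
    exact_mod_cast Finset.card_le_card hsub
  -- chain inequality, cast to ℝ
  have hchain := chain_ineq (d := d) (F := F) hdisj r
  have hC0 : (Cset n d I S F 0).card ≤ (Dcond n d I F).card :=
    Finset.card_le_card (Finset.filter_subset _ _)
  set M := d * (n - (d * k + I.card + k + d)) with hMdef
  set K := (k * d) * ((d * k) * d) with hKdef
  have hchainR : ((Cset n d I S F r).card : ℝ) * (r.factorial * (M:ℝ) ^ r)
      ≤ ((Dcond n d I F).card : ℝ) * (K:ℝ) ^ r := by
    have h1 : (Cset n d I S F r).card * (r.factorial * M ^ r)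
        ≤ (Dcond n d I F).card * K ^ r :=
      le_trans hchain (Nat.mul_le_mul_right _ hC0)
    exact_mod_cast h1
  -- lower bound on M
  have hXn : ((d * k + I.card + k + d : ℕ) : ℝ) ≤ n / 2 := by
    push_cast
    have h1 : (d:ℝ) * k ≤ n / 81 := hdkn
    have h2 : (k:ℝ) ≤ n / 648 := by
      have h8k : (8:ℝ) * k ≤ d * k := by
        refine mul_le_mul_of_nonneg_right ?_ (le_of_lt hk0)
        exact_mod_cast hd8
      linarith
    have h3 : (d:ℝ) ≤ n / 162 := by
      have h2d : (2:ℝ) * d ≤ d * k := by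
        calc (2:ℝ) * d = d * 2 := by ring
          _ ≤ d * k := mul_le_mul_of_nonneg_left hkR (le_of_lt hd0)
      linarith
    linarith
  have hXnn : d * k + I.card + k + d ≤ n := by
    have : ((d * k + I.card + k + d : ℕ) : ℝ) ≤ (n:ℝ) := le_trans hXn (by linarith)
    exact_mod_cast this
  have hMR : (d:ℝ) * n / 2 ≤ (M:ℝ) := by
    rw [hMdef]
    push_cast [Nat.cast_sub hXnn]
    have := hXn
    push_cast at this
    nlinarith
  have hM0 : (0:ℝ) < (M:ℝ) := by
    have hdn2 : (0:ℝ) < (d:ℝ) * n / 2 := by positivity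
    linarith
  -- define q
  set q := 2 * Real.exp 1 * d * k / (ε * n) with hqdef
  have hq0 : 0 < q := by
    rw [hqdef]
    have : (0:ℝ) < Real.exp 1 := Real.exp_pos 1
    positivity
  have hq1 : q ≤ 1 := by
    rw [hqdef, div_le_one (by positivity)]
    calc 2 * Real.exp 1 * d * k ≤ 2 * 3 * (d * k) := by nlinarith
      _ ≤ 6 * (Real.exp (-80) * ε * n) := by nlinarith
      _ ≤ ε * n := by nlinarith [mul_pos hε0 hn0]
  -- key: e K ≤ r M q
  have hKey : Real.exp 1 * (K:ℝ) ≤ (r:ℝ) * M * q := by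
    have hKR : (K:ℝ) = (k:ℝ) * d * ((d:ℝ) * k * d) := by
      rw [hKdef]; push_cast; ring
    have h1 : (ε * d * k) * ((d:ℝ) * n / 2) * q ≤ (r:ℝ) * M * q := by
      refine mul_le_mul_of_nonneg_right ?_ (le_of_lt hq0)
      nlinarith
    have h2 : (ε * d * k) * ((d:ℝ) * n / 2) * q = Real.exp 1 * ((k:ℝ) * d * ((d:ℝ) * k * d)) := by
      rw [hqdef]
      field_simp
    rw [hKR, ← h2]
    exact h1
  -- K^r ≤ r! M^r q^r
  have hKpow : (K:ℝ) ^ r ≤ (r.factorial * (M:ℝ) ^ r) * q ^ r := by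
    have hKnn : (0:ℝ) ≤ (K:ℝ) := by positivity
    have hbase : (K:ℝ) ≤ ((r:ℝ) / Real.exp 1) * M * q := by
      have he0 : (0:ℝ) < Real.exp 1 := Real.exp_pos 1
      rw [div_mul_eq_mul_div, div_mul_eq_mul_div, le_div_iff₀ he0]
      calc (K:ℝ) * Real.exp 1 = Real.exp 1 * K := by ring
        _ ≤ (r:ℝ) * M * q := hKey
    calc (K:ℝ) ^ r ≤ (((r:ℝ) / Real.exp 1) * M * q) ^ r :=
          pow_le_pow_left₀ hKnn hbase r
      _ = ((r:ℝ) / Real.exp 1) ^ r * (M:ℝ) ^ r * q ^ r := by rw [mul_pow, mul_pow]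
      _ ≤ (r.factorial : ℝ) * (M:ℝ) ^ r * q ^ r := by
          have h3 : ((r:ℝ)/Real.exp 1) ^ r ≤ r.factorial := by
            rw [div_pow, div_le_iff₀ (by positivity)]
            calc (r:ℝ) ^ r ≤ r.factorial * Real.exp 1 ^ r := factorial_bound r
              _ = _ := by ring
          refine mul_le_mul_of_nonneg_right (mul_le_mul_of_nonneg_right h3 (by positivity))
            (by positivity)
      _ = (r.factorial * (M:ℝ) ^ r) * q ^ r := by ring
  -- conclude
  have hfacM : (0:ℝ) < (r.factorial : ℝ) * (M:ℝ) ^ r := by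
    have : (0:ℝ) < (r.factorial : ℝ) := by exact_mod_cast r.factorial_pos
    positivity
  have hCr : ((Cset n d I S F r).card : ℝ) ≤ ((Dcond n d I F).card : ℝ) * q ^ r := by
    have hDnn : (0:ℝ) ≤ ((Dcond n d I F).card : ℝ) := by positivity
    have h6 : ((Cset n d I S F r).card : ℝ) * (r.factorial * (M:ℝ) ^ r)
        ≤ (((Dcond n d I F).card : ℝ) * q ^ r) * (r.factorial * (M:ℝ) ^ r) := by
      calc ((Cset n d I S F r).card : ℝ) * (r.factorial * (M:ℝ) ^ r)
          ≤ ((Dcond n d I F).card : ℝ) * (K:ℝ) ^ r := hchainR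
        _ ≤ ((Dcond n d I F).card : ℝ) * ((r.factorial * (M:ℝ) ^ r) * q ^ r) :=
            mul_le_mul_of_nonneg_left hKpow hDnn
        _ = (((Dcond n d I F).card : ℝ) * q ^ r) * (r.factorial * (M:ℝ) ^ r) := by ring
    exact le_of_mul_le_mul_right h6 hfacM
  have hqr : q ^ r ≤ Real.exp ((ε * d * k) * Real.log q) := by
    have h1 : q ^ r = Real.exp ((r:ℝ) * Real.log q) := by
      rw [← Real.exp_log hq0, ← Real.exp_nat_mul, Real.exp_log hq0, Real.exp_nat_mul,
        Real.exp_log hq0]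
    rw [h1]
    refine Real.exp_le_exp.mpr ?_
    have hlq : Real.log q ≤ 0 := Real.log_nonpos (le_of_lt hq0) hq1
    exact mul_le_mul_of_nonpos_right hrge hlq
  have hlogq : Real.log q = Real.log (2 * Real.exp 1 * d * S.card / (ε * n)) := by
    rw [hqdef, hkdef]
  calc (((Dcond n d I F).filter fun G =>
      ((inNbr G S).card : ℝ) ≤ (1 - ε) * d * S.card).card : ℝ)
      ≤ ((Cset n d I S F r).card : ℝ) := hEs
    _ ≤ ((Dcond n d I F).card : ℝ) * q ^ r := hCr
    _ ≤ ((Dcond n d I F).card : ℝ) * Real.exp ((ε * d * k) * Real.log q) := by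
        refine mul_le_mul_of_nonneg_left hqr (by positivity)
    _ = ((Dcond n d I F).card : ℝ) *
        Real.exp ((ε * d * S.card) * Real.log (2 * Real.exp 1 * d * S.card / (ε * n))) := by
        rw [hlogq, hkdef]

lemma master_real (K U A Ld Me P l2 l3 : ℝ)
    (hK : 2 ≤ K) (hU : 8 ≤ U) (hA : 80 ≤ A) (hLd0 : 0 ≤ Ld) (hLdU : Ld ≤ U)
    (hMe0 : 0 ≤ Me) (hMeLd : Me ≤ Ld) (hP8 : 8 ≤ P) (hPU : P ≤ U)
    (hl2 : l2 ≤ 0.7) (hl20 : 0 ≤ l2) (hl3 : l3 ≤ 2) (hl30 : 0 ≤ l3) :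
    K * (1 + A + Ld + Me) + U * K * (l2 + 1 - A) ≤ -(P * K / 8) * (l3 + 1 - 80 + A) := by
  have hK0 : (0:ℝ) < K := by linarith
  have hU0 : (0:ℝ) < U := by linarith
  have hA0 : (0:ℝ) < A := by linarith
  have b1 : K * 640 ≤ K * (U * A) := by
    refine mul_le_mul_of_nonneg_left (by nlinarith) (le_of_lt hK0)
  have b2' : 0 ≤ (U - 8) * (K * A) :=
    mul_nonneg (by linarith) (mul_nonneg (le_of_lt hK0) (le_of_lt hA0))
  have b3a : K * Ld ≤ K * U := mul_le_mul_of_nonneg_left hLdU (le_of_lt hK0)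
  have b3b : 0 ≤ (A - 80) * (U * K) :=
    mul_nonneg (by linarith) (mul_nonneg (le_of_lt hU0) (le_of_lt hK0))
  have b4a : K * Me ≤ K * Ld := mul_le_mul_of_nonneg_left hMeLd (le_of_lt hK0)
  have b5 : U * K * (l2 + 1) ≤ U * K * (1.7 * A / 80) := by
    refine mul_le_mul_of_nonneg_left (by linarith) (mul_nonneg (le_of_lt hU0) (le_of_lt hK0))
  have b6a : (P * K / 8) * (l3 + 1 - 80 + A) ≤ (P * K / 8) * A := by
    refine mul_le_mul_of_nonneg_left (by linarith)
      (by positivity)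
  have b6b : (P * K) * A ≤ (U * K) * A := by
    refine mul_le_mul_of_nonneg_right
      (mul_le_mul_of_nonneg_right hPU (le_of_lt hK0)) (le_of_lt hA0)
  nlinarith [b1, b2', b3a, b3b, b4a, b5, b6a, b6b]

lemma sum_term_real (X a0 kr l3 : ℝ) (hX : 1 ≤ X) (hk : 2 ≤ kr) (hka : kr ≤ a0)
    (hl3 : 1 ≤ l3) (hla : Real.log (3 * Real.exp 1 * a0 / kr)
      = l3 + 1 + Real.log a0 - Real.log kr) (hle : Real.log (Real.exp 1 * a0)
      = 1 + Real.log a0) :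
    X * Real.log (Real.exp 1 * a0) + kr ≤ X * kr * Real.log (3 * Real.exp 1 * a0 / kr) := by
  have hk0 : (0:ℝ) < kr := by linarith
  have ha0 : (0:ℝ) < a0 := by linarith
  have hLk : Real.log kr ≤ kr - 1 := by
    have := Real.log_le_sub_one_of_pos hk0
    linarith
  have hLka : Real.log kr ≤ Real.log a0 := Real.log_le_log hk0 hka
  have hLk0 : 0 ≤ Real.log kr := Real.log_nonneg (by linarith)
  have hLa0 : 0 ≤ Real.log a0 := le_trans hLk0 hLka
  rw [hla, hle]
  have hbracket : (1 + Real.log a0) + kr ≤ kr * (l3 + 1 + Real.log a0 - Real.log kr) := by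
    have h1 : 0 ≤ (kr - 1) * (Real.log a0 - Real.log kr) := by
      refine mul_nonneg (by linarith) (by linarith)
    nlinarith
  have hbr0 : 0 ≤ kr * (l3 + 1 + Real.log a0 - Real.log kr) := by
    nlinarith
  calc X * (1 + Real.log a0) + kr ≤ X * ((1 + Real.log a0) + kr) := by nlinarith
    _ ≤ X * (kr * (l3 + 1 + Real.log a0 - Real.log kr)) :=
        mul_le_mul_of_nonneg_left hbracket (by linarith)
    _ = X * kr * (l3 + 1 + Real.log a0 - Real.log kr) := by ring

set_option maxHeartbeats 1000000 in
lemma gammak_bound {n d k : ℕ} {ε : ℝ} {I : Finset (Fin n)} {F : Finset (Fin n × Fin n)}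
    (hd8 : 8 ≤ d) (hdn : d ≤ n) (hε0 : 0 < ε) (hε1 : ε < 1)
    (hk2 : 2 ≤ k) (hε2 : max 8 (Real.log d) / d ≤ ε ^ 2)
    (hkc : (k : ℝ) ≤ Real.exp (-80) * ε * n / d)
    (hIc : (I.card : ℝ) ≤ n / 8) :
    ((((Dreg n d).filter fun G => ∃ S : Finset (Fin n), S ⊆ Iᶜ ∧ S.card = k ∧
        ((inNbr G S).card : ℝ) ≤ (1 - ε) * d * S.card) ∩ Dcond n d I F).card : ℝ)
      ≤ ((Dcond n d I F).card : ℝ) *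
        Real.exp ((k:ℝ) * Real.log (Real.exp 1 * n / k)
          + (ε * d * k) * Real.log (2 * Real.exp 1 * d * k / (ε * n))) := by
  classical
  have hk0 : (0:ℝ) < k := by
    have : 0 < k := by omega
    exact_mod_cast this
  have hn0 : (0:ℝ) < n := by
    have : 0 < n := by omega
    exact_mod_cast this
  have hsub : (((Dreg n d).filter fun G => ∃ S : Finset (Fin n), S ⊆ Iᶜ ∧ S.card = k ∧
      ((inNbr G S).card : ℝ) ≤ (1 - ε) * d * S.card) ∩ Dcond n d I F)
      ⊆ (Iᶜ.powersetCard k).biUnion fun S => (Dcond n d I F).filter fun G =>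
        ((inNbr G S).card : ℝ) ≤ (1 - ε) * d * S.card := by
    intro G hG
    rw [Finset.mem_inter, Finset.mem_filter] at hG
    obtain ⟨⟨-, S, hSsub, hScard, hSev⟩, hD⟩ := hG
    exact Finset.mem_biUnion.mpr ⟨S, Finset.mem_powersetCard.mpr ⟨hSsub, hScard⟩,
      Finset.mem_filter.mpr ⟨hD, hSev⟩⟩
  have hper : ∀ S ∈ Iᶜ.powersetCard k,
      (((Dcond n d I F).filter fun G =>
        ((inNbr G S).card : ℝ) ≤ (1 - ε) * d * S.card).card : ℝ)
      ≤ ((Dcond n d I F).card : ℝ) *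
        Real.exp ((ε * d * k) * Real.log (2 * Real.exp 1 * d * k / (ε * n))) := by
    intro S hS
    rw [Finset.mem_powersetCard] at hS
    obtain ⟨hSsub, hScard⟩ := hS
    have hdisj : ∀ x ∈ S, x ∉ I := by
      intro x hx
      have := hSsub hx
      simpa [Finset.mem_compl] using this
    rw [show (k:ℝ) = (S.card : ℝ) by exact_mod_cast congrArg Nat.cast hScard.symm]
    exact perS_bound (F := F) hd8 hdn hε0 hε1 (hScard ▸ hk2) hε2 (by rw [hScard]; exact hkc)
      hIc hdisj
  have hcount : ((Iᶜ.powersetCard k).card : ℝ) ≤ Real.exp ((k:ℝ) * Real.log (Real.exp 1 * n / k)) := by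
    have h1 : (Iᶜ.powersetCard k).card = (Iᶜ.card).choose k := Finset.card_powersetCard k _
    have h2 : (Iᶜ.card).choose k ≤ n.choose k := by
      refine Nat.choose_le_choose k ?_
      calc Iᶜ.card ≤ Fintype.card (Fin n) := Finset.card_le_univ _
        _ = n := Fintype.card_fin n
    have h3 : ((n.choose k : ℕ) : ℝ) ≤ (Real.exp 1 * n / k) ^ k :=
      choose_le_exp_bound n k (by omega)
    have h4 : (Real.exp 1 * n / k) ^ k = Real.exp ((k:ℝ) * Real.log (Real.exp 1 * n / k)) := by
      have hpos : (0:ℝ) < Real.exp 1 * n / k := by positivity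
      rw [← Real.exp_log hpos, ← Real.exp_nat_mul, Real.exp_log hpos]
    calc ((Iᶜ.powersetCard k).card : ℝ) = ((Iᶜ.card).choose k : ℕ) := by rw [h1]
      _ ≤ ((n.choose k : ℕ) : ℝ) := by exact_mod_cast h2
      _ ≤ _ := by rw [← h4]; exact h3
  calc ((((Dreg n d).filter fun G => ∃ S : Finset (Fin n), S ⊆ Iᶜ ∧ S.card = k ∧
        ((inNbr G S).card : ℝ) ≤ (1 - ε) * d * S.card) ∩ Dcond n d I F).card : ℝ)
      ≤ (((Iᶜ.powersetCard k).biUnion fun S => (Dcond n d I F).filter fun G =>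
          ((inNbr G S).card : ℝ) ≤ (1 - ε) * d * S.card).card : ℝ) := by
        exact_mod_cast Finset.card_le_card hsub
    _ ≤ ∑ S ∈ Iᶜ.powersetCard k, (((Dcond n d I F).filter fun G =>
          ((inNbr G S).card : ℝ) ≤ (1 - ε) * d * S.card).card : ℝ) := by
        exact_mod_cast Finset.card_biUnion_le
    _ ≤ ∑ _S ∈ Iᶜ.powersetCard k, ((Dcond n d I F).card : ℝ) *
          Real.exp ((ε * d * k) * Real.log (2 * Real.exp 1 * d * k / (ε * n))) :=
        Finset.sum_le_sum hper
    _ = ((Iᶜ.powersetCard k).card : ℝ) * (((Dcond n d I F).card : ℝ) *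
          Real.exp ((ε * d * k) * Real.log (2 * Real.exp 1 * d * k / (ε * n)))) := by
        rw [Finset.sum_const, nsmul_eq_mul]
    _ ≤ Real.exp ((k:ℝ) * Real.log (Real.exp 1 * n / k)) * (((Dcond n d I F).card : ℝ) *
          Real.exp ((ε * d * k) * Real.log (2 * Real.exp 1 * d * k / (ε * n)))) := by
        refine mul_le_mul_of_nonneg_right hcount (by positivity)
    _ = ((Dcond n d I F).card : ℝ) *
          Real.exp ((k:ℝ) * Real.log (Real.exp 1 * n / k)
            + (ε * d * k) * Real.log (2 * Real.exp 1 * d * k / (ε * n))) := by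
        rw [Real.exp_add]; ring

lemma master_inst {n d k : ℕ} {ε : ℝ}
    (hd8 : 8 ≤ d) (hdn : d ≤ n) (hε0 : 0 < ε) (hε1 : ε < 1)
    (hk2 : 2 ≤ k) (hε2 : max 8 (Real.log d) / d ≤ ε ^ 2)
    (hkc : (k : ℝ) ≤ Real.exp (-80) * ε * n / d) :
    (k:ℝ) * Real.log (Real.exp 1 * n / k)
      + (ε * d * k) * Real.log (2 * Real.exp 1 * d * k / (ε * n))
    ≤ -(ε ^ 2 * d * k / 8) * Real.log (3 * Real.exp 1 * Real.exp (-80) * ε * n / (k * d)) := by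
  have hd0 : (0:ℝ) < d := by
    have : 0 < d := by omega
    exact_mod_cast this
  have hn0 : (0:ℝ) < n := by
    have : 0 < n := by omega
    exact_mod_cast this
  have hk0 : (0:ℝ) < k := by
    have : 0 < k := by omega
    exact_mod_cast this
  have hkR : (2:ℝ) ≤ k := by exact_mod_cast hk2
  have hd8R : (8:ℝ) ≤ d := by exact_mod_cast hd8
  set a := ε * n / (d * k) with hadef
  have ha0 : 0 < a := by rw [hadef]; positivity
  have hdk : (d:ℝ) * k ≤ Real.exp (-80) * ε * n := by
    have := mul_le_mul_of_nonneg_left hkc (le_of_lt hd0)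
    calc (d:ℝ) * k ≤ d * (Real.exp (-80) * ε * n / d) := this
      _ = Real.exp (-80) * ε * n := by field_simp
  have hA : 80 ≤ Real.log a := by
    rw [Real.le_log_iff_exp_le ha0, hadef]
    rw [le_div_iff₀ (by positivity)]
    calc Real.exp 80 * (d * k) ≤ Real.exp 80 * (Real.exp (-80) * ε * n) := by
          refine mul_le_mul_of_nonneg_left hdk (le_of_lt (Real.exp_pos _))
      _ = ε * n := by
          rw [show Real.exp 80 * (Real.exp (-80) * ε * (n:ℝ))
            = (Real.exp 80 * Real.exp (-80)) * (ε * n) by ring, ← Real.exp_add]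
          norm_num
  have hε2d : (8:ℝ) ≤ ε ^ 2 * d := by
    have h1 : (8:ℝ) ≤ max 8 (Real.log d) := le_max_left _ _
    have h2 : max 8 (Real.log d) ≤ ε ^ 2 * d := by
      rw [div_le_iff₀ hd0] at hε2; exact hε2
    linarith
  have hld : Real.log d ≤ ε ^ 2 * d := by
    have h1 : Real.log d ≤ max 8 (Real.log d) := le_max_right _ _
    have h2 : max 8 (Real.log d) ≤ ε ^ 2 * d := by
      rw [div_le_iff₀ hd0] at hε2; exact hε2
    linarith
  have hεd : ε ^ 2 * d ≤ ε * d := by nlinarith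
  have hU8 : (8:ℝ) ≤ ε * d := by linarith
  have hLd0 : 0 ≤ Real.log d := Real.log_nonneg (by linarith [hd8R])
  have hMe0 : 0 ≤ -Real.log ε := by
    have := Real.log_nonpos (le_of_lt hε0) (le_of_lt hε1)
    linarith
  have hMeLd : -Real.log ε ≤ Real.log d := by
    have h8d : (0:ℝ) < 8 / d := by positivity
    have h1 : (8:ℝ)/d ≤ ε ^ 2 := by
      calc (8:ℝ)/d ≤ max 8 (Real.log d) / d := by
            gcongr
            exact le_max_left _ _
        _ ≤ ε ^ 2 := hε2
    have h2 : Real.log (8/d) ≤ Real.log (ε ^ 2) := Real.log_le_log h8d h1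
    have h3 : Real.log (ε ^ 2) = 2 * Real.log ε := by
      rw [Real.log_pow]; push_cast; ring
    have h4 : Real.log ((8:ℝ)/d) = Real.log 8 - Real.log d :=
      Real.log_div (by norm_num) (ne_of_gt hd0)
    have h5 : (0:ℝ) ≤ Real.log 8 := Real.log_nonneg (by norm_num)
    linarith
  have hl2 : Real.log 2 ≤ 0.7 := by
    have := Real.log_two_lt_d9; linarith
  have hl20 : (0:ℝ) ≤ Real.log 2 := Real.log_nonneg (by norm_num)
  have hl3 : Real.log 3 ≤ 2 := by
    have := Real.log_le_sub_one_of_pos (by norm_num : (0:ℝ) < 3); linarith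
  have hl30 : (0:ℝ) ≤ Real.log 3 := Real.log_nonneg (by norm_num)
  have hεne : ε ≠ 0 := ne_of_gt hε0
  have hdne : (d:ℝ) ≠ 0 := ne_of_gt hd0
  have hkne : (k:ℝ) ≠ 0 := ne_of_gt hk0
  have hnne : (n:ℝ) ≠ 0 := ne_of_gt hn0
  have hane : a ≠ 0 := ne_of_gt ha0
  have hexpne : Real.exp 1 ≠ 0 := ne_of_gt (Real.exp_pos 1)
  have hexp80ne : Real.exp (-80) ≠ 0 := ne_of_gt (Real.exp_pos _)
  have hi : Real.log (Real.exp 1 * n / k)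
      = 1 + Real.log a + Real.log d + (-Real.log ε) := by
    have harg : Real.exp 1 * (n:ℝ) / k = Real.exp 1 * a * d / ε := by
      rw [hadef]; field_simp
    rw [harg, Real.log_div (by
        exact mul_ne_zero (mul_ne_zero hexpne hane) hdne) hεne,
      Real.log_mul (mul_ne_zero hexpne hane) hdne,
      Real.log_mul hexpne hane, Real.log_exp]
    try ring
  have hii : Real.log (2 * Real.exp 1 * d * k / (ε * n))
      = Real.log 2 + 1 - Real.log a := by
    have harg : 2 * Real.exp 1 * (d:ℝ) * k / (ε * n) = 2 * Real.exp 1 / a := by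
      rw [hadef]; field_simp
    rw [harg, Real.log_div (mul_ne_zero two_ne_zero hexpne) hane,
      Real.log_mul two_ne_zero hexpne, Real.log_exp]
    try ring
  have hiii : Real.log (3 * Real.exp 1 * Real.exp (-80) * ε * n / (k * d))
      = Real.log 3 + 1 - 80 + Real.log a := by
    have harg : 3 * Real.exp 1 * Real.exp (-80) * ε * (n:ℝ) / (k * d)
        = 3 * Real.exp 1 * Real.exp (-80) * a := by
      rw [hadef]; field_simp
    rw [harg, Real.log_mul (mul_ne_zero (mul_ne_zero three_ne_zero hexpne) hexp80ne) hane,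
      Real.log_mul (mul_ne_zero three_ne_zero hexpne) hexp80ne,
      Real.log_mul three_ne_zero hexpne, Real.log_exp, Real.log_exp]
    try ring
  have hmain := master_real (k:ℝ) (ε * d) (Real.log a) (Real.log d) (-Real.log ε)
    (ε ^ 2 * d) (Real.log 2) (Real.log 3) hkR hU8 hA hLd0 (le_trans hld hεd)
    hMe0 hMeLd hε2d hεd hl2 hl20 hl3 hl30
  rw [hi, hii, hiii]
  calc (k:ℝ) * (1 + Real.log a + Real.log d + (-Real.log ε))
        + (ε * d * k) * (Real.log 2 + 1 - Real.log a)
      = (k:ℝ) * (1 + Real.log a + Real.log d + (-Real.log ε))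
        + (ε * d) * k * (Real.log 2 + 1 - Real.log a) := by ring
    _ ≤ -((ε ^ 2 * d) * k / 8) * (Real.log 3 + 1 - 80 + Real.log a) := hmain
    _ = -(ε ^ 2 * d * k / 8) * (Real.log 3 + 1 - 80 + Real.log a) := by ring

lemma term_bound {n d k : ℕ} {ε : ℝ}
    (hd8 : 8 ≤ d) (hdn : d ≤ n) (hε0 : 0 < ε) (hε1 : ε < 1)
    (hk2 : 2 ≤ k) (hε2 : max 8 (Real.log d) / d ≤ ε ^ 2)
    (hkc : (k : ℝ) ≤ Real.exp (-80) * ε * n / d) :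
    Real.exp (-(ε ^ 2 * d * k / 8) *
        Real.log (3 * Real.exp 1 * Real.exp (-80) * ε * n / (k * d)))
      ≤ Real.exp (-(ε ^ 2 * d / 8) *
          Real.log (Real.exp 1 * Real.exp (-80) * ε * n / d)) * Real.exp (-(k:ℝ)) := by
  have hd0 : (0:ℝ) < d := by
    have : 0 < d := by omega
    exact_mod_cast this
  have hn0 : (0:ℝ) < n := by
    have : 0 < n := by omega
    exact_mod_cast this
  have hk0 : (0:ℝ) < k := by
    have : 0 < k := by omega
    exact_mod_cast this
  have hkR : (2:ℝ) ≤ k := by exact_mod_cast hk2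
  have hε2d : (8:ℝ) ≤ ε ^ 2 * d := by
    have h1 : (8:ℝ) ≤ max 8 (Real.log d) := le_max_left _ _
    have h2 : max 8 (Real.log d) ≤ ε ^ 2 * d := by
      rw [div_le_iff₀ hd0] at hε2; exact hε2
    linarith
  set a0 := Real.exp (-80) * ε * n / d with ha0def
  have ha00 : 0 < a0 := by
    rw [ha0def]
    have := Real.exp_pos (-80:ℝ)
    positivity
  have ha0ne : a0 ≠ 0 := ne_of_gt ha00
  have hkne : (k:ℝ) ≠ 0 := ne_of_gt hk0
  have hexpne : Real.exp 1 ≠ 0 := ne_of_gt (Real.exp_pos 1)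
  have hX : 1 ≤ ε ^ 2 * d / 8 := by linarith
  have hl3one : 1 ≤ Real.log 3 := by
    rw [Real.le_log_iff_exp_le (by norm_num)]
    have := Real.exp_one_lt_d9
    linarith
  have hla : Real.log (3 * Real.exp 1 * a0 / k)
      = Real.log 3 + 1 + Real.log a0 - Real.log k := by
    rw [Real.log_div (mul_ne_zero (mul_ne_zero three_ne_zero hexpne) ha0ne) hkne,
      Real.log_mul (mul_ne_zero three_ne_zero hexpne) ha0ne,
      Real.log_mul three_ne_zero hexpne, Real.log_exp]
    try ring
  have hle : Real.log (Real.exp 1 * a0) = 1 + Real.log a0 := by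
    rw [Real.log_mul hexpne ha0ne, Real.log_exp]
  have key := sum_term_real (ε ^ 2 * d / 8) a0 (k:ℝ) (Real.log 3) hX hkR hkc hl3one hla hle
  have harg1 : 3 * Real.exp 1 * Real.exp (-80) * ε * (n:ℝ) / (k * d)
      = 3 * Real.exp 1 * a0 / k := by
    rw [ha0def]; field_simp
  have harg2 : Real.exp 1 * Real.exp (-80) * ε * (n:ℝ) / d = Real.exp 1 * a0 := by
    rw [ha0def]; field_simp
  rw [harg1, harg2, ← Real.exp_add]
  refine Real.exp_le_exp.mpr ?_
  have h3 : -(ε ^ 2 * d * k / 8) * Real.log (3 * Real.exp 1 * a0 / k)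
      = -((ε ^ 2 * d / 8) * k * Real.log (3 * Real.exp 1 * a0 / k)) := by ring
  rw [h3]
  linarith [key]

lemma sum_exp_le (K0 : ℕ) : ∑ k' ∈ Finset.Icc 2 K0, Real.exp (-(k':ℝ)) ≤ 1 := by
  have he2 : (2:ℝ) ≤ Real.exp 1 := by
    have := Real.add_one_le_exp (1:ℝ); linarith
  have h1 : ∀ k' ∈ Finset.Icc 2 K0, Real.exp (-(k':ℝ)) ≤ (1/2:ℝ) ^ k' := by
    intro k' _
    have heq : Real.exp (-(k':ℝ)) = Real.exp (-1) ^ k' := by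
      rw [← Real.exp_nat_mul]
      congr 1
      ring
    rw [heq]
    refine pow_le_pow_left₀ (le_of_lt (Real.exp_pos _)) ?_ _
    rw [Real.exp_neg]
    calc (Real.exp 1)⁻¹ ≤ (2:ℝ)⁻¹ := by
          refine inv_anti₀ (by norm_num) he2
      _ = 1/2 := by norm_num
  have hgeom : ∀ m : ℕ, ∑ i ∈ Finset.range m, (1/2:ℝ) ^ i ≤ 2 := by
    intro m
    have h := geom_sum_eq (by norm_num : (1/2:ℝ) ≠ 1) m
    have hp : (0:ℝ) ≤ (1/2:ℝ) ^ m := by positivity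
    rw [h]
    rw [show ((1/2:ℝ) - 1) = -(1/2) by norm_num]
    rw [div_neg]
    linarith [hp]
  calc ∑ k' ∈ Finset.Icc 2 K0, Real.exp (-(k':ℝ))
      ≤ ∑ k' ∈ Finset.Icc 2 K0, (1/2:ℝ) ^ k' := Finset.sum_le_sum h1
    _ ≤ 1 := by
      rcases Nat.lt_or_ge K0 2 with h | h
      · rw [Finset.Icc_eq_empty (by omega)]
        norm_num
      · rw [← Finset.Ico_add_one_right_eq_Icc, Finset.sum_Ico_eq_sum_range]
        have : ∀ i ∈ Finset.range (K0 + 1 - 2), (1/2:ℝ) ^ (2 + i) = (1/4) * (1/2) ^ i := by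
          intro i _
          rw [pow_add]
          norm_num
        rw [Finset.sum_congr rfl this, ← Finset.mul_sum]
        have := hgeom (K0 + 1 - 2)
        linarith

end analysis

end GraphSparse

set_option maxHeartbeats 1000000 in
/-- **Expansion property of random `d`-regular digraphs** (Theorem 2.2 of the paper). -/
theorem thm_graph_sparse :
    ∃ c : ℝ, 0 < c ∧
      ∀ (n d k : ℕ) (ε : ℝ) (I : Finset (Fin n)) (F : Finset (Fin n × Fin n)),
        8 ≤ d → d ≤ n → 0 < ε → ε < 1 → 2 ≤ k →
        max 8 (Real.log d) / d ≤ ε ^ 2 →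
        (k : ℝ) ≤ c * ε * n / d →
        (I.card : ℝ) ≤ n / 8 →
        (Dcond n d I F).Nonempty →
        (((((Dreg n d).filter fun G => ∃ S : Finset (Fin n), S ⊆ Iᶜ ∧ S.card = k ∧
              ((inNbr G S).card : ℝ) ≤ (1 - ε) * d * S.card) ∩ Dcond n d I F).card : ℝ) /
            ((Dcond n d I F).card : ℝ)
          ≤ Real.exp (-(ε ^ 2 * d * k / 8) *
              Real.log (3 * Real.exp 1 * c * ε * n / (k * d)))) ∧
        (((((Dreg n d).filter fun G => ∃ S : Finset (Fin n), S ⊆ Iᶜ ∧ 2 ≤ S.card ∧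
              (S.card : ℝ) ≤ c * ε * n / d ∧
              ((inNbr G S).card : ℝ) ≤ (1 - ε) * d * S.card) ∩ Dcond n d I F).card : ℝ) /
            ((Dcond n d I F).card : ℝ)
          ≤ Real.exp (-(ε ^ 2 * d / 8) * Real.log (Real.exp 1 * c * ε * n / d))) := by
  classical
  classical
  refine ⟨Real.exp (-80), Real.exp_pos _, ?_⟩
  intro n d k ε I F hd8 hdn hε0 hε1 hk2 hε2 hkc hIc hne
  have hD0 : (0:ℝ) < ((Dcond n d I F).card : ℝ) := by
    exact_mod_cast Finset.card_pos.mpr hne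
  constructor
  · rw [div_le_iff₀ hD0]
    have h1 := GraphSparse.gammak_bound (F := F) hd8 hdn hε0 hε1 hk2 hε2 hkc hIc
    have h2 := GraphSparse.master_inst (n := n) (d := d) (k := k) hd8 hdn hε0 hε1 hk2 hε2 hkc
    calc ((((Dreg n d).filter fun G => ∃ S : Finset (Fin n), S ⊆ Iᶜ ∧ S.card = k ∧
          ((inNbr G S).card : ℝ) ≤ (1 - ε) * d * S.card) ∩ Dcond n d I F).card : ℝ)
        ≤ ((Dcond n d I F).card : ℝ) *
            Real.exp ((k:ℝ) * Real.log (Real.exp 1 * n / k)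
              + (ε * d * k) * Real.log (2 * Real.exp 1 * d * k / (ε * n))) := h1
      _ ≤ ((Dcond n d I F).card : ℝ) *
            Real.exp (-(ε ^ 2 * d * k / 8) *
              Real.log (3 * Real.exp 1 * Real.exp (-80) * ε * n / (k * d))) :=
          mul_le_mul_of_nonneg_left (Real.exp_le_exp.mpr h2) (le_of_lt hD0)
      _ = Real.exp (-(ε ^ 2 * d * k / 8) *
            Real.log (3 * Real.exp 1 * Real.exp (-80) * ε * n / (k * d))) *
            ((Dcond n d I F).card : ℝ) := mul_comm _ _
  · rw [div_le_iff₀ hD0]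
    set K0 := ⌊Real.exp (-80) * ε * (n:ℝ) / d⌋₊ with hK0
    have hsub : (((Dreg n d).filter fun G => ∃ S : Finset (Fin n), S ⊆ Iᶜ ∧ 2 ≤ S.card ∧
        (S.card : ℝ) ≤ Real.exp (-80) * ε * n / d ∧
        ((inNbr G S).card : ℝ) ≤ (1 - ε) * d * S.card) ∩ Dcond n d I F)
        ⊆ (Finset.Icc 2 K0).biUnion fun k' =>
          (((Dreg n d).filter fun G => ∃ S : Finset (Fin n), S ⊆ Iᶜ ∧ S.card = k' ∧
            ((inNbr G S).card : ℝ) ≤ (1 - ε) * d * S.card) ∩ Dcond n d I F) := by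
      intro G hG
      rw [Finset.mem_inter, Finset.mem_filter] at hG
      obtain ⟨⟨hGreg, S, hSsub, hS2, hSle, hSev⟩, hD⟩ := hG
      refine Finset.mem_biUnion.mpr ⟨S.card, Finset.mem_Icc.mpr ⟨hS2, Nat.le_floor hSle⟩,
        Finset.mem_inter.mpr ⟨Finset.mem_filter.mpr ⟨hGreg, S, hSsub, rfl, hSev⟩, hD⟩⟩
    have hper : ∀ k' ∈ Finset.Icc 2 K0,
        (((((Dreg n d).filter fun G => ∃ S : Finset (Fin n), S ⊆ Iᶜ ∧ S.card = k' ∧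
          ((inNbr G S).card : ℝ) ≤ (1 - ε) * d * S.card) ∩ Dcond n d I F)).card : ℝ)
        ≤ ((Dcond n d I F).card : ℝ) *
          (Real.exp (-(ε ^ 2 * d / 8) * Real.log (Real.exp 1 * Real.exp (-80) * ε * n / d))
            * Real.exp (-(k':ℝ))) := by
      intro k' hk'
      rw [Finset.mem_Icc] at hk'
      obtain ⟨hk'2, hk'K⟩ := hk'
      have hk'c : (k' : ℝ) ≤ Real.exp (-80) * ε * n / d := by
        refine (Nat.le_floor_iff ?_).mp hk'K
        have := Real.exp_pos (-80:ℝ)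
        positivity
      have h1 := GraphSparse.gammak_bound (F := F) hd8 hdn hε0 hε1 hk'2 hε2 hk'c hIc
      have h2 := GraphSparse.master_inst (n := n) (d := d) (k := k') hd8 hdn hε0 hε1 hk'2 hε2 hk'c
      have h3 := GraphSparse.term_bound (n := n) (d := d) (k := k') hd8 hdn hε0 hε1 hk'2 hε2 hk'c
      calc (((((Dreg n d).filter fun G => ∃ S : Finset (Fin n), S ⊆ Iᶜ ∧ S.card = k' ∧
            ((inNbr G S).card : ℝ) ≤ (1 - ε) * d * S.card) ∩ Dcond n d I F)).card : ℝ)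
          ≤ ((Dcond n d I F).card : ℝ) *
              Real.exp ((k':ℝ) * Real.log (Real.exp 1 * n / k')
                + (ε * d * k') * Real.log (2 * Real.exp 1 * d * k' / (ε * n))) := h1
        _ ≤ ((Dcond n d I F).card : ℝ) *
              Real.exp (-(ε ^ 2 * d * k' / 8) *
                Real.log (3 * Real.exp 1 * Real.exp (-80) * ε * n / (k' * d))) :=
            mul_le_mul_of_nonneg_left (Real.exp_le_exp.mpr h2) (le_of_lt hD0)
        _ ≤ ((Dcond n d I F).card : ℝ) *
              (Real.exp (-(ε ^ 2 * d / 8) *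
                Real.log (Real.exp 1 * Real.exp (-80) * ε * n / d)) * Real.exp (-(k':ℝ))) :=
            mul_le_mul_of_nonneg_left h3 (le_of_lt hD0)
    have hsum := GraphSparse.sum_exp_le K0
    calc ((((Dreg n d).filter fun G => ∃ S : Finset (Fin n), S ⊆ Iᶜ ∧ 2 ≤ S.card ∧
          (S.card : ℝ) ≤ Real.exp (-80) * ε * n / d ∧
          ((inNbr G S).card : ℝ) ≤ (1 - ε) * d * S.card) ∩ Dcond n d I F).card : ℝ)
        ≤ (((Finset.Icc 2 K0).biUnion fun k' =>
            (((Dreg n d).filter fun G => ∃ S : Finset (Fin n), S ⊆ Iᶜ ∧ S.card = k' ∧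
              ((inNbr G S).card : ℝ) ≤ (1 - ε) * d * S.card) ∩ Dcond n d I F)).card : ℝ) := by
          exact_mod_cast Finset.card_le_card hsub
      _ ≤ (∑ k' ∈ Finset.Icc 2 K0,
            (((((Dreg n d).filter fun G => ∃ S : Finset (Fin n), S ⊆ Iᶜ ∧ S.card = k' ∧
              ((inNbr G S).card : ℝ) ≤ (1 - ε) * d * S.card) ∩ Dcond n d I F)).card : ℝ)) := by
          exact_mod_cast Finset.card_biUnion_le
      _ ≤ (∑ k' ∈ Finset.Icc 2 K0, ((Dcond n d I F).card : ℝ) *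
            (Real.exp (-(ε ^ 2 * d / 8) * Real.log (Real.exp 1 * Real.exp (-80) * ε * n / d))
              * Real.exp (-(k':ℝ)))) := Finset.sum_le_sum hper
      _ = ((Dcond n d I F).card : ℝ) *
            Real.exp (-(ε ^ 2 * d / 8) * Real.log (Real.exp 1 * Real.exp (-80) * ε * n / d))
            * (∑ k' ∈ Finset.Icc 2 K0, Real.exp (-(k':ℝ))) := by
          rw [Finset.mul_sum]
          refine Finset.sum_congr rfl fun k' _ => by ring
      _ ≤ ((Dcond n d I F).card : ℝ) *
            Real.exp (-(ε ^ 2 * d / 8) * Real.log (Real.exp 1 * Real.exp (-80) * ε * n / d))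
            * 1 := by
          refine mul_le_mul_of_nonneg_left hsum (by positivity)
      _ = Real.exp (-(ε ^ 2 * d / 8) * Real.log (Real.exp 1 * Real.exp (-80) * ε * n / d)) *
            ((Dcond n d I F).card : ℝ) := by ring
end

section
/- There exist absolute constants c > 0 and C, C₁ ≥ 1 such that the following holds. Let C₁ ≤ d ≤ n/24 and let natural numbers ℓ and r satisfy n/4 ≥ r ≥ ℓ ≥ C·n·ln(en/r)/d. Then the probability that there exist I, J ⊆ [n] with |I| ≥ ℓ and |J| ≥ r such that G has no edge from a vertex of I to a vertex of J (i.e., E_G(I,J) = ∅) is at most exp(−c·r·ℓ·d/n). -/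
open Finset
open scoped Classical
set_option maxHeartbeats 1000000

namespace GSaux

variable {n d : ℕ}

def rowF (G : Fin n → Fin n → Bool) (i : Fin n) : Finset (Fin n) :=
  univ.filter fun j => G i j = true

def colF (G : Fin n → Fin n → Bool) (j : Fin n) : Finset (Fin n) :=
  univ.filter fun i => G i j = true

def edges (G : Fin n → Fin n → Bool) : Finset (Fin n × Fin n) :=
  univ.filter fun p => G p.1 p.2 = true

lemma mem_rowF {G : Fin n → Fin n → Bool} {i v : Fin n} : v ∈ rowF G i ↔ G i v = true := by
  simp [rowF]

lemma mem_colF {G : Fin n → Fin n → Bool} {j u : Fin n} : u ∈ colF G j ↔ G u j = true := by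
  simp [colF]

lemma mem_edges {G : Fin n → Fin n → Bool} {p : Fin n × Fin n} :
    p ∈ edges G ↔ G p.1 p.2 = true := by simp [edges]

lemma mem_Dreg {G : Fin n → Fin n → Bool} :
    G ∈ Dreg n d ↔ (∀ i, (rowF G i).card = d) ∧ (∀ j, (colF G j).card = d) := by
  simp [Dreg, rowF, colF]

/-- A generic bound: a set of pairs whose first coordinates lie in `K` and whose fibers
have size at most `m` has at most `|K| * m` elements. -/
lemma card_le_of_rows {P : Finset (Fin n × Fin n)} {K : Finset (Fin n)} {m : ℕ}
    (h1 : ∀ p ∈ P, p.1 ∈ K) (h2 : ∀ u ∈ K, ((P.filter fun p => p.1 = u)).card ≤ m) :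
    P.card ≤ K.card * m := by
  rw [Finset.card_eq_sum_card_fiberwise h1]
  exact Finset.sum_le_card_nsmul _ _ _ h2

lemma card_le_of_cols {P : Finset (Fin n × Fin n)} {K : Finset (Fin n)} {m : ℕ}
    (h1 : ∀ p ∈ P, p.2 ∈ K) (h2 : ∀ u ∈ K, ((P.filter fun p => p.2 = u)).card ≤ m) :
    P.card ≤ K.card * m := by
  rw [Finset.card_eq_sum_card_fiberwise h1]
  exact Finset.sum_le_card_nsmul _ _ _ h2

lemma row_fiber_card (G : Fin n → Fin n → Bool) (P : Finset (Fin n × Fin n))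
    (hP : P ⊆ edges G) (u : Fin n) :
    ((P.filter fun p => p.1 = u)).card ≤ (rowF G u).card := by
  apply Finset.card_le_card_of_injOn (fun p => p.2)
  · intro p hp
    simp only [Finset.mem_coe, mem_filter] at hp ⊢
    have := hP hp.1
    rw [mem_edges] at this
    rw [mem_rowF, ← hp.2]
    exact this
  · intro p hp q hq h
    simp only [Finset.mem_coe, mem_filter] at hp hq
    exact Prod.ext (hp.2.trans hq.2.symm) h

lemma col_fiber_card (G : Fin n → Fin n → Bool) (P : Finset (Fin n × Fin n))
    (hP : P ⊆ edges G) (u : Fin n) :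
    ((P.filter fun p => p.2 = u)).card ≤ (colF G u).card := by
  apply Finset.card_le_card_of_injOn (fun p => p.1)
  · intro p hp
    simp only [Finset.mem_coe, mem_filter] at hp ⊢
    have := hP hp.1
    rw [mem_edges] at this
    rw [mem_colF, ← hp.2]
    exact this
  · intro p hp q hq h
    simp only [Finset.mem_coe, mem_filter] at hp hq
    exact Prod.ext h (hp.2.trans hq.2.symm)

lemma edges_card {G : Fin n → Fin n → Bool} (hG : G ∈ Dreg n d) :
    (edges G).card = n * d := by
  rw [Finset.card_eq_sum_card_fiberwise (f := Prod.fst) (t := univ) (fun x _ => mem_univ _)]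
  have : ∀ u : Fin n, ((edges G).filter fun p => p.1 = u).card = d := by
    intro u
    have h : ((edges G).filter fun p => p.1 = u) = (rowF G u).image fun v => (u, v) := by
      ext p
      simp only [mem_filter, mem_edges, mem_image, mem_rowF]
      constructor
      · rintro ⟨h1, h2⟩
        exact ⟨p.2, by rw [← h2]; exact h1, by rw [← h2]⟩
      · rintro ⟨v, hv, rfl⟩
        exact ⟨hv, rfl⟩
    rw [h, Finset.card_image_of_injective _ (fun a b h => by injection h),
      (mem_Dreg.1 hG).1 u]
  rw [Finset.sum_congr rfl (fun u _ => this u)]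
  simp [Finset.card_univ, mul_comm]


/-- The 6-cell switching: sets `(i,j), (x,b), (a,y)` to `true` and
`(i,b), (a,j), (x,y)` to `false`. -/
def sw (G : Fin n → Fin n → Bool) (i j b a x y : Fin n) : Fin n → Fin n → Bool :=
  fun u v =>
    if (u = i ∧ v = j) ∨ (u = x ∧ v = b) ∨ (u = a ∧ v = y) then true
    else if (u = i ∧ v = b) ∨ (u = a ∧ v = j) ∨ (u = x ∧ v = y) then false
    else G u v

section Sw

variable {G : Fin n → Fin n → Bool} {i j b a x y : Fin n}

lemma sw_apply_other {u v : Fin n}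
    (h : ¬((u = i ∧ v = j) ∨ (u = x ∧ v = b) ∨ (u = a ∧ v = y) ∨
        (u = i ∧ v = b) ∨ (u = a ∧ v = j) ∨ (u = x ∧ v = y))) :
    sw G i j b a x y u v = G u v := by
  unfold sw
  split_ifs with h1 h2
  · tauto
  · tauto
  · rfl

lemma sw_ij : sw G i j b a x y i j = true := by simp [sw]

lemma sw_xb : sw G i j b a x y x b = true := by simp [sw]

lemma sw_ay : sw G i j b a x y a y = true := by simp [sw]

variable (hai : a ≠ i) (hxi : x ≠ i) (hxa : x ≠ a)
  (hbj : b ≠ j) (hyj : y ≠ j) (hyb : y ≠ b)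

include hai hxi in
lemma rowF_sw_i : rowF (sw G i j b a x y) i = insert j ((rowF G i).erase b) := by
  ext v
  have hix : ¬ (i = x) := fun h => hxi h.symm
  have hia : ¬ (i = a) := fun h => hai h.symm
  simp only [mem_rowF, mem_insert, mem_erase, sw, hix, hia, false_and, or_false, false_or,
    true_and, eq_self_iff_true]
  by_cases hvj : v = j <;> by_cases hvb : v = b <;> simp_all

include hai hxa hyj in
lemma rowF_sw_a : rowF (sw G i j b a x y) a = insert y ((rowF G a).erase j) := by
  ext v
  have hia : ¬ (a = i) := hai
  have hax : ¬ (a = x) := fun h => hxa h.symm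
  simp only [mem_rowF, mem_insert, mem_erase, sw, hia, hax, false_and, or_false, false_or,
    true_and, eq_self_iff_true]
  by_cases hvy : v = y <;> by_cases hvj : v = j <;> simp_all

include hxi hxa hyb in
lemma rowF_sw_x : rowF (sw G i j b a x y) x = insert b ((rowF G x).erase y) := by
  ext v
  simp only [mem_rowF, mem_insert, mem_erase, sw, hxi, hxa, false_and, or_false, false_or,
    true_and, eq_self_iff_true]
  by_cases hvb : v = b <;> by_cases hvy : v = y <;> simp_all

lemma rowF_sw_other {u : Fin n} (h1 : u ≠ i) (h2 : u ≠ a) (h3 : u ≠ x) :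
    rowF (sw G i j b a x y) u = rowF G u := by
  ext v
  simp only [mem_rowF, sw, h1, h2, h3, false_and, or_false, false_or, if_false]

include hbj hyj hai in
lemma colF_sw_j : colF (sw G i j b a x y) j = insert i ((colF G j).erase a) := by
  ext u
  have hjb : ¬ (j = b) := fun h => hbj h.symm
  have hjy : ¬ (j = y) := fun h => hyj h.symm
  simp only [mem_colF, mem_insert, mem_erase, sw, hjb, hjy, and_false, or_false, false_or,
    and_true, eq_self_iff_true]
  by_cases hui : u = i <;> by_cases hua : u = a <;> simp_all

include hbj hyb hxi in
lemma colF_sw_b : colF (sw G i j b a x y) b = insert x ((colF G b).erase i) := by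
  ext u
  have hby : ¬ (b = y) := fun h => hyb h.symm
  simp only [mem_colF, mem_insert, mem_erase, sw, hbj, hby, and_false, or_false, false_or,
    and_true, eq_self_iff_true]
  by_cases hux : u = x <;> by_cases hui : u = i <;> simp_all

include hyj hyb hxa in
lemma colF_sw_y : colF (sw G i j b a x y) y = insert a ((colF G y).erase x) := by
  ext u
  simp only [mem_colF, mem_insert, mem_erase, sw, hyj, hyb, and_false, or_false, false_or,
    and_true, eq_self_iff_true]
  by_cases hua : u = a <;> by_cases hux : u = x <;> simp_all

lemma colF_sw_other {v : Fin n} (h1 : v ≠ j) (h2 : v ≠ b) (h3 : v ≠ y) :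
    colF (sw G i j b a x y) v = colF G v := by
  ext u
  simp only [mem_colF, sw, h1, h2, h3, and_false, or_false, false_or, if_false]

end Sw

lemma card_insert_erase {s : Finset (Fin n)} {u v : Fin n} (hu : u ∈ s) (hv : v ∉ s)
    (huv : v ≠ u) : (insert v (s.erase u)).card = s.card := by
  rw [Finset.card_insert_of_notMem (by simp [huv, hv]), Finset.card_erase_of_mem hu]
  have : 0 < s.card := Finset.card_pos.2 ⟨u, hu⟩
  omega

/-- The switching preserves `d`-regularity. -/
lemma sw_mem_Dreg {G : Fin n → Fin n → Bool} {i j b a x y : Fin n}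
    (hG : G ∈ Dreg n d)
    (hib : G i b = true) (haj : G a j = true) (hxy : G x y = true)
    (hij : G i j = false) (hxb : G x b = false) (hay : G a y = false)
    (hai : a ≠ i) (hxi : x ≠ i) (hxa : x ≠ a)
    (hbj : b ≠ j) (hyj : y ≠ j) (hyb : y ≠ b) :
    sw G i j b a x y ∈ Dreg n d := by
  obtain ⟨hrow, hcol⟩ := mem_Dreg.1 hG
  rw [mem_Dreg]
  constructor
  · intro u
    by_cases h1 : u = i
    · subst h1
      rw [rowF_sw_i hai hxi,
        card_insert_erase (mem_rowF.2 hib) (fun h => by simp [mem_rowF, hij] at h) hbj.symm]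
      exact hrow u
    by_cases h2 : u = a
    · subst h2
      rw [rowF_sw_a hai hxa hyj,
        card_insert_erase (mem_rowF.2 haj) (fun h => by simp [mem_rowF, hay] at h) hyj]
      exact hrow u
    by_cases h3 : u = x
    · subst h3
      rw [rowF_sw_x hxi hxa hyb,
        card_insert_erase (mem_rowF.2 hxy) (fun h => by simp [mem_rowF, hxb] at h) hyb.symm]
      exact hrow u
    · rw [rowF_sw_other h1 h2 h3]; exact hrow u
  · intro v
    by_cases h1 : v = j
    · subst h1
      rw [colF_sw_j hai hbj hyj,
        card_insert_erase (mem_colF.2 haj) (fun h => by simp [mem_colF, hij] at h) hai.symm]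
      exact hcol v
    by_cases h2 : v = b
    · subst h2
      rw [colF_sw_b hxi hbj hyb,
        card_insert_erase (mem_colF.2 hib) (fun h => by simp [mem_colF, hxb] at h) hxi]
      exact hcol v
    by_cases h3 : v = y
    · subst h3
      rw [colF_sw_y hxa hyj hyb,
        card_insert_erase (mem_colF.2 hxy) (fun h => by simp [mem_colF, hay] at h) hxa.symm]
      exact hcol v
    · rw [colF_sw_other h1 h2 h3]; exact hcol v

section Step

variable {n d : ℕ}

/-- Graphs avoiding all cells of `Q`. -/
def NQ (n d : ℕ) (Q : Finset (Fin n × Fin n)) : Finset (Fin n → Fin n → Bool) :=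
  (Dreg n d).filter fun G => ∀ p ∈ Q, G p.1 p.2 = false

/-- Condition for a valid forward switching tuple `t = (b, a, x, y)`. -/
def swCond (Q : Finset (Fin n × Fin n)) (i j : Fin n) (G : Fin n → Fin n → Bool)
    (t : Fin n × Fin n × Fin n × Fin n) : Prop :=
  G i t.1 = true ∧ G t.2.1 j = true ∧ G t.2.2.1 t.2.2.2 = true ∧
  G t.2.2.1 t.1 = false ∧ G t.2.1 t.2.2.2 = false ∧
  t.2.2.1 ≠ i ∧ t.2.2.1 ≠ t.2.1 ∧ t.2.2.2 ≠ j ∧ t.2.2.2 ≠ t.1 ∧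
  (t.2.2.1, t.1) ∉ Q ∧ (t.2.1, t.2.2.2) ∉ Q

/-- Valid `(x, y)` completions for a given `(b, a)`. -/
def goodS (Q : Finset (Fin n × Fin n)) (i j : Fin n) (G : Fin n → Fin n → Bool)
    (b a : Fin n) : Finset (Fin n × Fin n) :=
  (edges G).filter fun p => p.1 ≠ i ∧ p.1 ≠ a ∧ p.2 ≠ j ∧ p.2 ≠ b ∧
    G p.1 b = false ∧ G a p.2 = false ∧ (p.1, b) ∉ Q ∧ (a, p.2) ∉ Q

lemma goodS_lb {Q : Finset (Fin n × Fin n)} {I J : Finset (Fin n)} {i j : Fin n}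
    {G : Fin n → Fin n → Bool}
    (hd : 1 ≤ d) (hn : 24 * d ≤ n) (hQI : Q ⊆ I ×ˢ J)
    (hIc : 4 * I.card ≤ n) (hJc : 4 * J.card ≤ n) (hG : G ∈ Dreg n d) (b a : Fin n) :
    n * d ≤ 4 * (goodS Q i j G b a).card := by
  classical
  obtain ⟨hrow, hcol⟩ := mem_Dreg.1 hG
  have hEcard : (edges G).card = n * d := edges_card hG
  have hsplit := Finset.card_filter_add_card_filter_not
    (s := edges G) (p := fun p => p.1 ≠ i ∧ p.1 ≠ a ∧ p.2 ≠ j ∧ p.2 ≠ b ∧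
      G p.1 b = false ∧ G a p.2 = false ∧ (p.1, b) ∉ Q ∧ (a, p.2) ∉ Q)
  have hb1 : ∀ u : Fin n, ((edges G).filter fun p => p.1 = u).card ≤ d := by
    intro u
    have := row_fiber_card G (edges G) (le_refl _) u
    rwa [hrow u] at this
  have hb1' : ∀ u : Fin n, ((edges G).filter fun p => p.2 = u).card ≤ d := by
    intro u
    have := col_fiber_card G (edges G) (le_refl _) u
    rwa [hcol u] at this
  have hb5 : ((edges G).filter fun p => G p.1 b = true).card ≤ d * d := by
    have h := card_le_of_rows (P := (edges G).filter fun p => G p.1 b = true)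
      (K := colF G b) (m := d)
      (fun p hp => by simp only [mem_filter] at hp; exact mem_colF.2 hp.2)
      (fun u _ => by
        refine le_trans ?_ (hb1 u)
        apply Finset.card_le_card
        intro p hp
        simp only [mem_filter] at hp ⊢
        exact ⟨hp.1.1, hp.2⟩)
    rwa [hcol b] at h
  have hb6 : ((edges G).filter fun p => G a p.2 = true).card ≤ d * d := by
    have h := card_le_of_cols (P := (edges G).filter fun p => G a p.2 = true)
      (K := rowF G a) (m := d)
      (fun p hp => by simp only [mem_filter] at hp; exact mem_rowF.2 hp.2)
      (fun u _ => by
        refine le_trans ?_ (hb1' u)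
        apply Finset.card_le_card
        intro p hp
        simp only [mem_filter] at hp ⊢
        exact ⟨hp.1.1, hp.2⟩)
    rwa [hrow a] at h
  have hb7 : ((edges G).filter fun p => (p.1, b) ∈ Q).card ≤ I.card * d := by
    apply card_le_of_rows (fun p hp => ?_) (fun u _ => ?_)
    · simp only [mem_filter] at hp
      exact (Finset.mem_product.1 (hQI hp.2)).1
    · refine le_trans ?_ (hb1 u)
      apply Finset.card_le_card
      intro p hp
      simp only [mem_filter] at hp ⊢
      exact ⟨hp.1.1, hp.2⟩
  have hb8 : ((edges G).filter fun p => (a, p.2) ∈ Q).card ≤ J.card * d := by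
    apply card_le_of_cols (fun p hp => ?_) (fun u _ => ?_)
    · simp only [mem_filter] at hp
      exact (Finset.mem_product.1 (hQI hp.2)).2
    · refine le_trans ?_ (hb1' u)
      apply Finset.card_le_card
      intro p hp
      simp only [mem_filter] at hp ⊢
      exact ⟨hp.1.1, hp.2⟩
  have hBadsub : (edges G).filter (fun p => ¬(p.1 ≠ i ∧ p.1 ≠ a ∧ p.2 ≠ j ∧ p.2 ≠ b ∧
      G p.1 b = false ∧ G a p.2 = false ∧ (p.1, b) ∉ Q ∧ (a, p.2) ∉ Q)) ⊆
      ((edges G).filter fun p => p.1 = i) ∪ ((edges G).filter fun p => p.1 = a) ∪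
      ((edges G).filter fun p => p.2 = j) ∪ ((edges G).filter fun p => p.2 = b) ∪
      ((edges G).filter fun p => G p.1 b = true) ∪ ((edges G).filter fun p => G a p.2 = true) ∪
      ((edges G).filter fun p => (p.1, b) ∈ Q) ∪ ((edges G).filter fun p => (a, p.2) ∈ Q) := by
    intro p hp
    simp only [mem_filter, not_and_or, not_not, not_ne_iff, Bool.not_eq_false] at hp
    obtain ⟨hpe, hc⟩ := hp
    simp only [mem_union, mem_filter]
    rcases hc with h | h | h | h | h | h | h | h
    · exact Or.inl (Or.inl (Or.inl (Or.inl (Or.inl (Or.inl (Or.inl ⟨hpe, h⟩))))))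
    · exact Or.inl (Or.inl (Or.inl (Or.inl (Or.inl (Or.inl (Or.inr ⟨hpe, h⟩))))))
    · exact Or.inl (Or.inl (Or.inl (Or.inl (Or.inl (Or.inr ⟨hpe, h⟩)))))
    · exact Or.inl (Or.inl (Or.inl (Or.inl (Or.inr ⟨hpe, h⟩))))
    · exact Or.inl (Or.inl (Or.inl (Or.inr ⟨hpe, h⟩)))
    · exact Or.inl (Or.inl (Or.inr ⟨hpe, h⟩))
    · exact Or.inl (Or.inr ⟨hpe, h⟩)
    · exact Or.inr ⟨hpe, h⟩
  have hBadcard : ((edges G).filter (fun p => ¬(p.1 ≠ i ∧ p.1 ≠ a ∧ p.2 ≠ j ∧ p.2 ≠ b ∧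
      G p.1 b = false ∧ G a p.2 = false ∧ (p.1, b) ∉ Q ∧ (a, p.2) ∉ Q))).card ≤
      d + d + d + d + d * d + d * d + I.card * d + J.card * d := by
    refine le_trans (Finset.card_le_card hBadsub) ?_
    refine le_trans (Finset.card_union_le _ _) (Nat.add_le_add ?_ hb8)
    refine le_trans (Finset.card_union_le _ _) (Nat.add_le_add ?_ hb7)
    refine le_trans (Finset.card_union_le _ _) (Nat.add_le_add ?_ hb6)
    refine le_trans (Finset.card_union_le _ _) (Nat.add_le_add ?_ hb5)
    refine le_trans (Finset.card_union_le _ _) (Nat.add_le_add ?_ (hb1' b))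
    refine le_trans (Finset.card_union_le _ _) (Nat.add_le_add ?_ (hb1' j))
    exact le_trans (Finset.card_union_le _ _) (Nat.add_le_add (hb1 i) (hb1 a))
  have harith : 4 * (d + d + d + d + d * d + d * d + I.card * d + J.card * d) ≤ 3 * (n * d) := by
    have h1 : 24 * (d * d) ≤ n * d := by
      calc 24 * (d * d) = 24 * d * d := by ring
      _ ≤ n * d := Nat.mul_le_mul_right d hn
    have h2 : 4 * (I.card * d) ≤ n * d := by
      calc 4 * (I.card * d) = 4 * I.card * d := by ring
      _ ≤ n * d := Nat.mul_le_mul_right d hIc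
    have h3 : 4 * (J.card * d) ≤ n * d := by
      calc 4 * (J.card * d) = 4 * J.card * d := by ring
      _ ≤ n * d := Nat.mul_le_mul_right d hJc
    have h4 : d ≤ d * d := Nat.le_mul_of_pos_left d hd
    linarith
  have hgs : (goodS Q i j G b a).card = ((edges G).filter (fun p => p.1 ≠ i ∧ p.1 ≠ a ∧
      p.2 ≠ j ∧ p.2 ≠ b ∧ G p.1 b = false ∧ G a p.2 = false ∧
      (p.1, b) ∉ Q ∧ (a, p.2) ∉ Q)).card := by
    rw [goodS]
  omega

end Step

section Step2

variable {n d : ℕ}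

lemma sw_avoid {G : Fin n → Fin n → Bool} {i j b a x y : Fin n} {Q : Finset (Fin n × Fin n)}
    (hAv : ∀ p ∈ Q, G p.1 p.2 = false) (h1 : (i, j) ∉ Q) (h2 : (x, b) ∉ Q) (h3 : (a, y) ∉ Q) :
    ∀ p ∈ Q, sw G i j b a x y p.1 p.2 = false := by
  intro p hp
  unfold sw
  split_ifs with g1 g2
  · exfalso
    rcases g1 with ⟨e1, e2⟩ | ⟨e1, e2⟩ | ⟨e1, e2⟩
    · exact h1 (by rwa [show ((i, j) : Fin n × Fin n) = p from (Prod.ext e1.symm e2.symm)])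
    · exact h2 (by rwa [show ((x, b) : Fin n × Fin n) = p from (Prod.ext e1.symm e2.symm)])
    · exact h3 (by rwa [show ((a, y) : Fin n × Fin n) = p from (Prod.ext e1.symm e2.symm)])
  · rfl
  · exact hAv p hp

lemma sw_eq_inj {G G' : Fin n → Fin n → Bool} {i j b a x y : Fin n}
    (hib : G i b = true) (haj : G a j = true) (hxy : G x y = true)
    (hij : G i j = false) (hxb : G x b = false) (hay : G a y = false)
    (hib' : G' i b = true) (haj' : G' a j = true) (hxy' : G' x y = true)
    (hij' : G' i j = false) (hxb' : G' x b = false) (hay' : G' a y = false)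
    (h : sw G i j b a x y = sw G' i j b a x y) : G = G' := by
  funext u v
  have happ := congrFun (congrFun h u) v
  by_cases c1 : u = i ∧ v = j
  · rcases c1 with ⟨rfl, rfl⟩; rw [hij, hij']
  by_cases c2 : u = x ∧ v = b
  · rcases c2 with ⟨rfl, rfl⟩; rw [hxb, hxb']
  by_cases c3 : u = a ∧ v = y
  · rcases c3 with ⟨rfl, rfl⟩; rw [hay, hay']
  by_cases c4 : u = i ∧ v = b
  · rcases c4 with ⟨rfl, rfl⟩; rw [hib, hib']
  by_cases c5 : u = a ∧ v = j
  · rcases c5 with ⟨rfl, rfl⟩; rw [haj, haj']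
  by_cases c6 : u = x ∧ v = y
  · rcases c6 with ⟨rfl, rfl⟩; rw [hxy, hxy']
  · rwa [sw_apply_other (by simp only [not_or]; exact ⟨c1, c2, c3, c4, c5, c6⟩),
      sw_apply_other (by simp only [not_or]; exact ⟨c1, c2, c3, c4, c5, c6⟩)] at happ

lemma swCond_card_lb {Q : Finset (Fin n × Fin n)} {I J : Finset (Fin n)} {i j : Fin n}
    {G : Fin n → Fin n → Bool}
    (hd : 1 ≤ d) (hn : 24 * d ≤ n) (hQI : Q ⊆ I ×ˢ J)
    (hIc : 4 * I.card ≤ n) (hJc : 4 * J.card ≤ n) (hG : G ∈ Dreg n d) :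
    d * d * (n * d) ≤ 4 * ((univ : Finset (Fin n × Fin n × Fin n × Fin n)).filter
      (swCond Q i j G)).card := by
  classical
  obtain ⟨hrow, hcol⟩ := mem_Dreg.1 hG
  set B : Finset (Fin n × Fin n × Fin n × Fin n) :=
    (rowF G i ×ˢ colF G j).biUnion
      (fun ba => (goodS Q i j G ba.1 ba.2).image fun p => (ba.1, ba.2, p.1, p.2)) with hB
  have hdisj : ∀ ba ∈ rowF G i ×ˢ colF G j, ∀ ba' ∈ rowF G i ×ˢ colF G j, ba ≠ ba' →
      Disjoint ((goodS Q i j G ba.1 ba.2).image fun p => (ba.1, ba.2, p.1, p.2))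
        ((goodS Q i j G ba'.1 ba'.2).image fun p => (ba'.1, ba'.2, p.1, p.2)) := by
    intro ba _ ba' _ hne
    rw [Finset.disjoint_left]
    rintro t ht ht'
    simp only [mem_image] at ht ht'
    obtain ⟨p, _, rfl⟩ := ht
    obtain ⟨p', _, heq⟩ := ht'
    simp only [Prod.mk.injEq] at heq
    exact hne (Prod.ext heq.1 heq.2.1).symm
  have hcardB : B.card = ∑ ba ∈ rowF G i ×ˢ colF G j, (goodS Q i j G ba.1 ba.2).card := by
    rw [hB, Finset.card_biUnion hdisj]
    refine Finset.sum_congr rfl fun ba _ => ?_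
    exact Finset.card_image_of_injective _ (fun p p' h => by
      simp only [Prod.mk.injEq, true_and] at h
      exact Prod.ext h.1 h.2)
  have hsub : B ⊆ univ.filter (swCond Q i j G) := by
    intro t ht
    rw [hB] at ht
    simp only [mem_biUnion, mem_image, mem_product, mem_rowF, mem_colF] at ht
    obtain ⟨ba, ⟨hb, ha⟩, p, hp, rfl⟩ := ht
    simp only [goodS, mem_filter, mem_edges] at hp
    obtain ⟨hxy, hxi, hxa, hyj, hyb, hxb, hay, hq1, hq2⟩ := hp
    simp only [mem_filter, mem_univ, true_and, swCond]
    exact ⟨hb, ha, hxy, hxb, hay, hxi, hxa, hyj, hyb, hq1, hq2⟩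
  calc d * d * (n * d)
      = (rowF G i ×ˢ colF G j).card * (n * d) := by
        rw [Finset.card_product, hrow i, hcol j]
    _ ≤ ∑ _ba ∈ rowF G i ×ˢ colF G j, (n * d) := by
        rw [Finset.sum_const, smul_eq_mul]
    _ ≤ ∑ ba ∈ rowF G i ×ˢ colF G j, 4 * (goodS Q i j G ba.1 ba.2).card :=
        Finset.sum_le_sum fun ba _ => goodS_lb hd hn hQI hIc hJc hG ba.1 ba.2
    _ = 4 * B.card := by rw [hcardB, Finset.mul_sum]
    _ ≤ 4 * ((univ.filter (swCond Q i j G))).card :=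
        Nat.mul_le_mul_left 4 (Finset.card_le_card hsub)

lemma revCond_card_ub {H : Fin n → Fin n → Bool} (hH : H ∈ Dreg n d) :
    ((univ : Finset (Fin n × Fin n × Fin n × Fin n)).filter
      (fun t => H t.2.2.1 t.1 = true ∧ H t.2.1 t.2.2.2 = true)).card ≤ (n * d) * (n * d) := by
  classical
  have h : ((univ : Finset (Fin n × Fin n × Fin n × Fin n)).filter
      (fun t => H t.2.2.1 t.1 = true ∧ H t.2.1 t.2.2.2 = true)).card ≤
      (edges H ×ˢ edges H).card := by
    apply Finset.card_le_card_of_injOn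
      (fun t : Fin n × Fin n × Fin n × Fin n => ((t.2.2.1, t.1), (t.2.1, t.2.2.2)))
    · intro t ht
      simp only [Finset.mem_coe, mem_filter, mem_univ, true_and] at ht
      simp only [Finset.mem_coe, mem_product, mem_edges]
      exact ⟨ht.1, ht.2⟩
    · intro t _ t' _ h
      obtain ⟨b, a, x, y⟩ := t
      obtain ⟨b', a', x', y'⟩ := t'
      simp only [Prod.mk.injEq] at h ⊢
      exact ⟨h.1.2, h.2.1, h.1.1, h.2.2⟩
  rwa [Finset.card_product, edges_card hH] at h

lemma card_biUnion_mk {Ω : Finset (Fin n → Fin n → Bool)}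
    (F : (Fin n → Fin n → Bool) → Finset (Fin n × Fin n × Fin n × Fin n)) :
    (Ω.biUnion fun G => (F G).image (Prod.mk G)).card = ∑ G ∈ Ω, (F G).card := by
  classical
  rw [Finset.card_biUnion]
  · exact Finset.sum_congr rfl fun G _ =>
      Finset.card_image_of_injective _ (fun t t' h => by injection h)
  · intro G _ G' _ hne
    rw [Function.onFun, Finset.disjoint_left]
    rintro p hp hp'
    simp only [mem_image] at hp hp'
    obtain ⟨t, _, rfl⟩ := hp
    obtain ⟨t', _, heq⟩ := hp'
    exact hne (by injection heq with h _; exact h.symm)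

lemma mem_biUnion_mk {Ω : Finset (Fin n → Fin n → Bool)}
    (F : (Fin n → Fin n → Bool) → Finset (Fin n × Fin n × Fin n × Fin n))
    {p : (Fin n → Fin n → Bool) × (Fin n × Fin n × Fin n × Fin n)} :
    p ∈ (Ω.biUnion fun G => (F G).image (Prod.mk G)) ↔ p.1 ∈ Ω ∧ p.2 ∈ F p.1 := by
  classical
  simp only [mem_biUnion, mem_image]
  constructor
  · rintro ⟨G, hG, t, ht, rfl⟩
    exact ⟨hG, ht⟩
  · rintro ⟨hG, ht⟩
    exact ⟨p.1, hG, p.2, ht, rfl⟩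

lemma step_key {Q : Finset (Fin n × Fin n)} {I J : Finset (Fin n)}
    (hd : 1 ≤ d) (hn : 24 * d ≤ n) (hQI : Q ⊆ I ×ˢ J)
    (hIc : 4 * I.card ≤ n) (hJc : 4 * J.card ≤ n) {i j : Fin n} (hijQ : (i, j) ∉ Q) :
    d * ((NQ n d Q).filter fun G => G i j = false).card ≤
      4 * n * ((NQ n d Q).filter fun G => G i j = true).card := by
  classical
  set Ω₀ := (NQ n d Q).filter fun G => G i j = false with hΩ₀
  set Ω₁ := (NQ n d Q).filter fun G => G i j = true with hΩ₁
  have hmem₀ : ∀ G ∈ Ω₀, G ∈ Dreg n d ∧ (∀ p ∈ Q, G p.1 p.2 = false) ∧ G i j = false := by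
    intro G hG
    simp only [hΩ₀, NQ, mem_filter] at hG
    exact ⟨hG.1.1, hG.1.2, hG.2⟩
  have hmem₁ : ∀ G, G ∈ Dreg n d → (∀ p ∈ Q, G p.1 p.2 = false) → G i j = true → G ∈ Ω₁ := by
    intro G h1 h2 h3
    simp only [hΩ₁, NQ, mem_filter]
    exact ⟨⟨h1, h2⟩, h3⟩
  set S0 := Ω₀.biUnion (fun G => ((univ.filter (swCond Q i j G))).image (Prod.mk G)) with hS0
  set S1 := Ω₁.biUnion (fun H => ((univ.filter
      (fun t : Fin n × Fin n × Fin n × Fin n =>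
        H t.2.2.1 t.1 = true ∧ H t.2.1 t.2.2.2 = true))).image (Prod.mk H)) with hS1
  have h0 : Ω₀.card * (d * d * (n * d)) ≤ 4 * S0.card := by
    rw [hS0, card_biUnion_mk, Finset.mul_sum]
    calc Ω₀.card * (d * d * (n * d)) = ∑ _G ∈ Ω₀, d * d * (n * d) := by
          rw [Finset.sum_const, smul_eq_mul]
    _ ≤ ∑ G ∈ Ω₀, 4 * ((univ.filter (swCond Q i j G))).card :=
        Finset.sum_le_sum fun G hG =>
          swCond_card_lb hd hn hQI hIc hJc (hmem₀ G hG).1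
  have h2 : S1.card ≤ Ω₁.card * ((n * d) * (n * d)) := by
    rw [hS1, card_biUnion_mk]
    apply Finset.sum_le_card_nsmul
    intro H hH
    simp only [hΩ₁, NQ, mem_filter] at hH
    exact revCond_card_ub hH.1.1
  have h1 : S0.card ≤ S1.card := by
    apply Finset.card_le_card_of_injOn
      (fun p => (sw p.1 i j p.2.1 p.2.2.1 p.2.2.2.1 p.2.2.2.2, p.2))
    · intro p hp
      rw [Finset.mem_coe, hS0, mem_biUnion_mk] at hp
      obtain ⟨hpΩ, hpt⟩ := hp
      simp only [mem_filter, mem_univ, true_and] at hpt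
      obtain ⟨hG, hAv, hGij⟩ := hmem₀ p.1 hpΩ
      obtain ⟨hib, haj, hxy, hxb, hay, hxi, hxa, hyj, hyb, hq1, hq2⟩ := hpt
      have hai : p.2.2.1 ≠ i := fun h => by rw [h, hGij] at haj; exact Bool.noConfusion haj
      have hbj : p.2.1 ≠ j := fun h => by rw [h, hGij] at hib; exact Bool.noConfusion hib
      rw [Finset.mem_coe, hS1, mem_biUnion_mk]
      constructor
      · apply hmem₁
        · exact sw_mem_Dreg hG hib haj hxy hGij hxb hay hai hxi hxa hbj hyj hyb
        · exact sw_avoid hAv hijQ hq1 hq2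
        · exact sw_ij
      · simp only [mem_filter, mem_univ, true_and]
        exact ⟨sw_xb, sw_ay⟩
    · intro p hp q hq heq
      rw [Finset.mem_coe, hS0, mem_biUnion_mk] at hp hq
      obtain ⟨hpΩ, hpt⟩ := hp
      obtain ⟨hqΩ, hqt⟩ := hq
      simp only [Prod.mk.injEq] at heq
      obtain ⟨hsw, hteq⟩ := heq
      simp only [mem_filter, mem_univ, true_and] at hpt hqt
      obtain ⟨hib, haj, hxy, hxb, hay, _, _, _, _, _, _⟩ := hpt
      obtain ⟨hib', haj', hxy', hxb', hay', _, _, _, _, _, _⟩ := hqt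
      obtain ⟨hG, _, hGij⟩ := hmem₀ p.1 hpΩ
      obtain ⟨hG', _, hGij'⟩ := hmem₀ q.1 hqΩ
      rw [← hteq] at hib' haj' hxy' hxb' hay' hsw
      have : p.1 = q.1 := sw_eq_inj hib haj hxy hGij hxb hay hib' haj' hxy' hGij' hxb' hay' hsw
      exact Prod.ext this hteq
  have hnpos : 0 < n := by omega
  have key : (d * Ω₀.card) * (n * (d * d)) ≤ (4 * n * Ω₁.card) * (n * (d * d)) := by
    calc (d * Ω₀.card) * (n * (d * d)) = Ω₀.card * (d * d * (n * d)) := by ring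
    _ ≤ 4 * S0.card := h0
    _ ≤ 4 * S1.card := Nat.mul_le_mul_left 4 h1
    _ ≤ 4 * (Ω₁.card * ((n * d) * (n * d))) := Nat.mul_le_mul_left 4 h2
    _ = (4 * n * Ω₁.card) * (n * (d * d)) := by ring
  exact Nat.le_of_mul_le_mul_right key (by positivity)

end Step2

section Chain

variable {n d : ℕ}

lemma exp_half_le {x : ℝ} (h0 : 0 ≤ x) (h1 : x ≤ 1) : Real.exp (x / 2) ≤ 1 + x := by
  have hpos : 0 < 1 - x / 2 := by linarith
  have h2 : 1 - x / 2 ≤ Real.exp (-(x / 2)) := by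
    have := Real.add_one_le_exp (-(x / 2))
    linarith
  have h3 : Real.exp (x / 2) ≤ (1 - x / 2)⁻¹ := by
    rw [show Real.exp (x / 2) = (Real.exp (-(x / 2)))⁻¹ by rw [Real.exp_neg, inv_inv]]
    exact inv_anti₀ hpos h2
  refine h3.trans ?_
  rw [← one_div, div_le_iff₀ hpos]
  nlinarith

lemma NQ_insert_eq {Q : Finset (Fin n × Fin n)} {i j : Fin n} :
    NQ n d (insert (i, j) Q) = (NQ n d Q).filter fun G => G i j = false := by
  ext G
  simp only [NQ, mem_filter, Finset.forall_mem_insert]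
  tauto

lemma NQ_card_split {Q : Finset (Fin n × Fin n)} {i j : Fin n} :
    ((NQ n d Q).filter fun G => G i j = false).card +
      ((NQ n d Q).filter fun G => G i j = true).card = (NQ n d Q).card := by
  classical
  have h := Finset.card_filter_add_card_filter_not
    (s := NQ n d Q) (p := fun G => G i j = false)
  have he : (NQ n d Q).filter (fun G => ¬ G i j = false) =
      (NQ n d Q).filter (fun G => G i j = true) := by
    apply Finset.filter_congr
    intro G _
    simp
  rw [he] at h
  exact h

lemma step_real {Q : Finset (Fin n × Fin n)} {I J : Finset (Fin n)}
    (hd : 1 ≤ d) (hn : 24 * d ≤ n) (hQI : Q ⊆ I ×ˢ J)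
    (hIc : 4 * I.card ≤ n) (hJc : 4 * J.card ≤ n) {i j : Fin n} (hijQ : (i, j) ∉ Q) :
    ((NQ n d (insert (i, j) Q)).card : ℝ) ≤
      Real.exp (-((d : ℝ) / (8 * n))) * (NQ n d Q).card := by
  classical
  have hkey := step_key (I := I) (J := J) hd hn hQI hIc hJc hijQ
  have hsplit := NQ_card_split (n := n) (d := d) (Q := Q) (i := i) (j := j)
  have hnpos : (0 : ℝ) < n := by
    have h24 : 24 ≤ n := le_trans (Nat.le_mul_of_pos_right 24 hd) hn
    have h24' : (24 : ℝ) ≤ n := by exact_mod_cast h24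
    linarith
  have hdn : (d : ℝ) ≤ n := by
    exact_mod_cast le_trans (Nat.le_mul_of_pos_left d (by norm_num)) hn
  set A := ((NQ n d Q).filter fun G => G i j = false).card with hA
  set B := ((NQ n d Q).filter fun G => G i j = true).card with hB
  rw [NQ_insert_eq, ← hA]
  have hx0 : 0 ≤ (d : ℝ) / (4 * n) := by positivity
  have hx1 : (d : ℝ) / (4 * n) ≤ 1 := by
    rw [div_le_one (by positivity)]
    linarith
  have hAB : (A : ℝ) * ((d : ℝ) / (4 * n)) ≤ B := by
    rw [mul_div_assoc', div_le_iff₀ (by positivity)]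
    calc (A : ℝ) * d = ((d * A : ℕ) : ℝ) := by push_cast; ring
    _ ≤ ((4 * n * B : ℕ) : ℝ) := by exact_mod_cast hkey
    _ = (B : ℝ) * (4 * n) := by push_cast; ring
  have hmain : (A : ℝ) * Real.exp ((d : ℝ) / (4 * n) / 2) ≤ A + B := by
    calc (A : ℝ) * Real.exp ((d : ℝ) / (4 * n) / 2) ≤ A * (1 + (d : ℝ) / (4 * n)) := by
          apply mul_le_mul_of_nonneg_left (exp_half_le hx0 hx1) (by positivity)
    _ = A + A * ((d : ℝ) / (4 * n)) := by ring
    _ ≤ A + B := by linarith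
  have hABcast : (A : ℝ) + B = ((NQ n d Q).card : ℝ) := by exact_mod_cast hsplit
  have hexp : -((d : ℝ) / (8 * n)) = -((d : ℝ) / (4 * n) / 2) := by ring
  rw [hexp, Real.exp_neg]
  calc (A : ℝ) = (Real.exp ((d : ℝ) / (4 * n) / 2))⁻¹ *
        (A * Real.exp ((d : ℝ) / (4 * n) / 2)) := by
        field_simp
  _ ≤ (Real.exp ((d : ℝ) / (4 * n) / 2))⁻¹ * ((A : ℝ) + B) := by
        apply mul_le_mul_of_nonneg_left hmain (by positivity)
  _ = (Real.exp ((d : ℝ) / (4 * n) / 2))⁻¹ * ((NQ n d Q).card : ℝ) := by rw [hABcast]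

lemma chain_bound {I J : Finset (Fin n)}
    (hd : 1 ≤ d) (hn : 24 * d ≤ n)
    (hIc : 4 * I.card ≤ n) (hJc : 4 * J.card ≤ n) :
    ∀ Q : Finset (Fin n × Fin n), Q ⊆ I ×ˢ J →
      ((NQ n d Q).card : ℝ) ≤
        Real.exp (-((Q.card : ℝ) * d / (8 * n))) * ((Dreg n d).card : ℝ) := by
  classical
  intro Q
  induction Q using Finset.induction_on with
  | empty =>
    intro _
    have : NQ n d ∅ = Dreg n d := by
      simp [NQ]
    rw [this]
    simp
  | @insert q Q hq ih =>
    intro hsub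
    have hQsub : Q ⊆ I ×ˢ J := fun p hp => hsub (Finset.mem_insert_of_mem hp)
    have hqij : ((q.1, q.2) : Fin n × Fin n) = q := rfl
    have hstep := step_real (I := I) (J := J) hd hn hQsub hIc hJc
      (i := q.1) (j := q.2) (by rwa [hqij])
    rw [hqij] at hstep
    have hcard : (insert q Q).card = Q.card + 1 := Finset.card_insert_of_notMem hq
    calc ((NQ n d (insert q Q)).card : ℝ)
        ≤ Real.exp (-((d : ℝ) / (8 * n))) * (NQ n d Q).card := hstep
      _ ≤ Real.exp (-((d : ℝ) / (8 * n))) *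
          (Real.exp (-((Q.card : ℝ) * d / (8 * n))) * ((Dreg n d).card : ℝ)) := by
          apply mul_le_mul_of_nonneg_left (ih hQsub) (le_of_lt (Real.exp_pos _))
      _ = Real.exp (-(((insert q Q).card : ℝ) * d / (8 * n))) * ((Dreg n d).card : ℝ) := by
          rw [← mul_assoc, ← Real.exp_add, hcard]
          push_cast
          ring_nf

end Chain

section Binom

lemma pow_le_fact_exp : ∀ r : ℕ, (r : ℝ) ^ r ≤ (r.factorial : ℝ) * Real.exp 1 ^ r := by
  intro r
  induction r with
  | zero => simp
  | succ m ih =>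
    have key : ((m + 1 : ℕ) : ℝ) ^ m ≤ Real.exp 1 * (m : ℝ) ^ m := by
      rcases Nat.eq_zero_or_pos m with hm | hm
      · subst hm
        simpa using Real.one_le_exp (by norm_num)
      · have hmR : (0 : ℝ) < m := by exact_mod_cast hm
        have h1 : ((m + 1 : ℕ) : ℝ) ≤ (m : ℝ) * Real.exp (1 / m) := by
          have := Real.add_one_le_exp (1 / (m : ℝ))
          have h2 : (m : ℝ) * (1 / m + 1) ≤ (m : ℝ) * Real.exp (1 / m) :=
            mul_le_mul_of_nonneg_left this (le_of_lt hmR)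
          have h3 : (m : ℝ) * (1 / m + 1) = m + 1 := by field_simp; ring
          push_cast
          linarith
        calc ((m + 1 : ℕ) : ℝ) ^ m ≤ ((m : ℝ) * Real.exp (1 / m)) ^ m := by
              apply pow_le_pow_left₀ (by positivity) h1
        _ = (m : ℝ) ^ m * Real.exp (1 / m) ^ m := mul_pow _ _ _
        _ = (m : ℝ) ^ m * Real.exp 1 := by
              rw [← Real.exp_nat_mul]
              congr 1
              field_simp
        _ = Real.exp 1 * (m : ℝ) ^ m := by ring
    have hfac : ((m + 1).factorial : ℝ) = (m + 1 : ℕ) * (m.factorial : ℝ) := by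
      rw [Nat.factorial_succ]; push_cast; ring
    calc ((m + 1 : ℕ) : ℝ) ^ (m + 1) = ((m + 1 : ℕ) : ℝ) * ((m + 1 : ℕ) : ℝ) ^ m := by ring
    _ ≤ ((m + 1 : ℕ) : ℝ) * (Real.exp 1 * (m : ℝ) ^ m) := by
        apply mul_le_mul_of_nonneg_left key (by positivity)
    _ ≤ ((m + 1 : ℕ) : ℝ) * (Real.exp 1 * ((m.factorial : ℝ) * Real.exp 1 ^ m)) := by
        have := mul_le_mul_of_nonneg_left ih (le_of_lt (Real.exp_pos 1))
        apply mul_le_mul_of_nonneg_left _ (by positivity)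
        exact this
    _ = ((m + 1).factorial : ℝ) * Real.exp 1 ^ (m + 1) := by
        rw [hfac]; ring

lemma choose_le_pow_real {n r : ℕ} (hr : 1 ≤ r) :
    (n.choose r : ℝ) ≤ (Real.exp 1 * n / r) ^ r := by
  have hrR : (0 : ℝ) < r := by exact_mod_cast hr
  have h1 : (n.choose r : ℝ) * (r.factorial : ℝ) = (n.descFactorial r : ℝ) := by
    rw [Nat.descFactorial_eq_factorial_mul_choose]
    push_cast
    ring
  have h2 : (n.descFactorial r : ℝ) ≤ (n : ℝ) ^ r := by
    exact_mod_cast Nat.descFactorial_le_pow n r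
  have hfpos : (0 : ℝ) < (r.factorial : ℝ) := by exact_mod_cast r.factorial_pos
  rw [div_pow, mul_pow, le_div_iff₀ (by positivity : (0:ℝ) < (r:ℝ)^r)]
  calc (n.choose r : ℝ) * (r : ℝ) ^ r ≤ (n.choose r : ℝ) * ((r.factorial : ℝ) * Real.exp 1 ^ r) := by
        apply mul_le_mul_of_nonneg_left (pow_le_fact_exp r) (by positivity)
  _ = ((n.choose r : ℝ) * (r.factorial : ℝ)) * Real.exp 1 ^ r := by ring
  _ = (n.descFactorial r : ℝ) * Real.exp 1 ^ r := by rw [h1]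
  _ ≤ (n : ℝ) ^ r * Real.exp 1 ^ r := by
        apply mul_le_mul_of_nonneg_right h2 (by positivity)
  _ = Real.exp 1 ^ r * (n : ℝ) ^ r := by ring

lemma choose_mono_half {n ℓ r : ℕ} (h : ℓ ≤ r) (h2 : 2 * r ≤ n) :
    n.choose ℓ ≤ n.choose r := by
  induction r, h using Nat.le_induction with
  | base => exact le_refl _
  | succ m hm ih =>
    have h3 : 2 * m ≤ n := by omega
    exact (ih h3).trans (Nat.choose_le_succ_of_lt_half_left (by omega))

end Binom

end GSaux

/-- **Edges between large vertex subsets** (Theorem 2.6 of the paper): with high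
probability, for all `I, J` with `|I| ≥ ℓ`, `|J| ≥ r` there is an edge from `I` to `J`. -/
theorem thm_graph_spread :
    ∃ c C C₁ : ℝ, 0 < c ∧ 1 ≤ C ∧ 1 ≤ C₁ ∧
      ∀ (n d ℓ r : ℕ),
        C₁ ≤ (d : ℝ) → (d : ℝ) ≤ n / 24 →
        (r : ℝ) ≤ n / 4 → ℓ ≤ r →
        C * n * Real.log (Real.exp 1 * n / r) / d ≤ (ℓ : ℝ) →
        (((Dreg n d).filter fun G =>
            ∃ I J : Finset (Fin n), ℓ ≤ I.card ∧ r ≤ J.card ∧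
              ∀ i ∈ I, ∀ j ∈ J, G i j = false).card : ℝ) / ((Dreg n d).card : ℝ)
          ≤ Real.exp (-(c * r * ℓ * d / n)) := by
  classical
  refine ⟨1/16, 32, 1, by norm_num, by norm_num, le_refl 1, ?_⟩
  intro n d ℓ r hC₁ hd24 hr4 hlr hL
  have hd1 : 1 ≤ d := by exact_mod_cast hC₁
  have hdn : 24 * d ≤ n := by
    have : ((24 * d : ℕ) : ℝ) ≤ (n : ℝ) := by push_cast; linarith
    exact_mod_cast this
  have hrn : 4 * r ≤ n := by
    have : ((4 * r : ℕ) : ℝ) ≤ (n : ℝ) := by push_cast; linarith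
    exact_mod_cast this
  have hn24 : 24 ≤ n := le_trans (Nat.le_mul_of_pos_right 24 hd1) hdn
  have hnR : (0 : ℝ) < n := by
    have : (24 : ℝ) ≤ n := by exact_mod_cast hn24
    linarith
  set Num := ((Dreg n d).filter fun G =>
      ∃ I J : Finset (Fin n), ℓ ≤ I.card ∧ r ≤ J.card ∧
        ∀ i ∈ I, ∀ j ∈ J, G i j = false).card with hNum
  have hNumD : Num ≤ (Dreg n d).card := Finset.card_le_card (Finset.filter_subset _ _)
  by_cases hr0 : r = 0
  · subst hr0
    have hE : -((1:ℝ)/16 * (0:ℕ) * ℓ * d / n) = 0 := by push_cast; ring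
    rw [hE, Real.exp_zero]
    apply div_le_one_of_le₀
    · exact_mod_cast hNumD
    · positivity
  · have hr1 : 1 ≤ r := Nat.one_le_iff_ne_zero.2 hr0
    have hrR : (0 : ℝ) < r := by exact_mod_cast hr1
    set L := Real.log (Real.exp 1 * n / r) with hLdef
    have hdR : (0 : ℝ) < d := by exact_mod_cast hd1
    have hLle : L ≤ (ℓ : ℝ) * d / (32 * n) := by
      rw [div_le_iff₀ hdR] at hL
      rw [le_div_iff₀ (by positivity : (0:ℝ) < 32 * n)]
      calc L * (32 * n) = 32 * n * L := by ring
      _ ≤ (ℓ : ℝ) * d := by linarith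
    -- the union bound
    set P := (Finset.powersetCard ℓ (univ : Finset (Fin n))) ×ˢ
      (Finset.powersetCard r (univ : Finset (Fin n))) with hP
    have hsub : (Dreg n d).filter (fun G =>
        ∃ I J : Finset (Fin n), ℓ ≤ I.card ∧ r ≤ J.card ∧
          ∀ i ∈ I, ∀ j ∈ J, G i j = false) ⊆
        P.biUnion fun IJ => GSaux.NQ n d (IJ.1 ×ˢ IJ.2) := by
      intro G hG
      rw [mem_filter] at hG
      obtain ⟨hGD, I, J, hI, hJ, hF⟩ := hG
      obtain ⟨I₀, hI₀sub, hI₀card⟩ := Finset.exists_subset_card_eq hI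
      obtain ⟨J₀, hJ₀sub, hJ₀card⟩ := Finset.exists_subset_card_eq hJ
      rw [Finset.mem_biUnion]
      refine ⟨(I₀, J₀), ?_, ?_⟩
      · rw [hP, Finset.mem_product]
        constructor
        · rw [Finset.mem_powersetCard]
          exact ⟨Finset.subset_univ _, hI₀card⟩
        · rw [Finset.mem_powersetCard]
          exact ⟨Finset.subset_univ _, hJ₀card⟩
      · rw [GSaux.NQ, mem_filter]
        refine ⟨hGD, fun p hp => ?_⟩
        rw [Finset.mem_product] at hp
        exact hF p.1 (hI₀sub hp.1) p.2 (hJ₀sub hp.2)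
    have hterm : ∀ IJ ∈ P, ((GSaux.NQ n d (IJ.1 ×ˢ IJ.2)).card : ℝ) ≤
        Real.exp (-((ℓ : ℝ) * r * d / (8 * n))) * ((Dreg n d).card : ℝ) := by
      intro IJ hIJ
      rw [hP, Finset.mem_product, Finset.mem_powersetCard, Finset.mem_powersetCard] at hIJ
      obtain ⟨⟨_, hI⟩, ⟨_, hJ⟩⟩ := hIJ
      have hIc : 4 * IJ.1.card ≤ n := by
        rw [hI]; exact le_trans (Nat.mul_le_mul_left 4 hlr) hrn
      have hJc : 4 * IJ.2.card ≤ n := by rw [hJ]; exact hrn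
      have := GSaux.chain_bound (I := IJ.1) (J := IJ.2) hd1 hdn hIc hJc
        (IJ.1 ×ˢ IJ.2) (le_refl _)
      rwa [Finset.card_product, hI, hJ, Nat.cast_mul] at this
    have hcard : (Num : ℝ) ≤ (P.card : ℝ) *
        (Real.exp (-((ℓ : ℝ) * r * d / (8 * n))) * ((Dreg n d).card : ℝ)) := by
      have h1 : Num ≤ ∑ IJ ∈ P, (GSaux.NQ n d (IJ.1 ×ˢ IJ.2)).card :=
        le_trans (Finset.card_le_card hsub) Finset.card_biUnion_le
      have h2 : ((∑ IJ ∈ P, (GSaux.NQ n d (IJ.1 ×ˢ IJ.2)).card : ℕ) : ℝ) ≤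
          (P.card : ℝ) * (Real.exp (-((ℓ : ℝ) * r * d / (8 * n))) * ((Dreg n d).card : ℝ)) := by
        rw [Nat.cast_sum]
        calc ∑ IJ ∈ P, ((GSaux.NQ n d (IJ.1 ×ˢ IJ.2)).card : ℝ)
            ≤ ∑ _IJ ∈ P, Real.exp (-((ℓ : ℝ) * r * d / (8 * n))) * ((Dreg n d).card : ℝ) :=
              Finset.sum_le_sum hterm
        _ = (P.card : ℝ) * (Real.exp (-((ℓ : ℝ) * r * d / (8 * n))) * ((Dreg n d).card : ℝ)) := by
              rw [Finset.sum_const, nsmul_eq_mul]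
      exact le_trans (by exact_mod_cast h1) h2
    have hPcard : (P.card : ℝ) ≤ Real.exp (2 * r * L) := by
      have hcP : P.card = n.choose ℓ * n.choose r := by
        rw [hP, Finset.card_product, Finset.card_powersetCard, Finset.card_powersetCard,
          Finset.card_univ, Fintype.card_fin]
      have hmono : n.choose ℓ ≤ n.choose r := GSaux.choose_mono_half hlr (le_trans (Nat.mul_le_mul_right r (show 2 ≤ 4 by norm_num)) hrn)
      have hcr : (n.choose r : ℝ) ≤ Real.exp ((r : ℝ) * L) := by
        have h := GSaux.choose_le_pow_real (n := n) hr1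
        have hz : (0 : ℝ) < Real.exp 1 * n / r := by positivity
        rw [hLdef]
        rw [show Real.exp ((r : ℝ) * L) = (Real.exp 1 * n / r) ^ r by
          rw [← Real.exp_log hz, ← Real.exp_nat_mul]]
        exact h
      have hcl : (n.choose ℓ : ℝ) ≤ Real.exp ((r : ℝ) * L) :=
        le_trans (by exact_mod_cast hmono) hcr
      calc (P.card : ℝ) = (n.choose ℓ : ℝ) * (n.choose r : ℝ) := by
            rw [hcP]; push_cast; ring
      _ ≤ Real.exp ((r : ℝ) * L) * Real.exp ((r : ℝ) * L) := by
            apply mul_le_mul hcl hcr (by positivity) (by positivity)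
      _ = Real.exp (2 * r * L) := by rw [← Real.exp_add]; ring_nf
    have hfinal : (Num : ℝ) ≤ Real.exp (-((1:ℝ)/16 * r * ℓ * d / n)) * ((Dreg n d).card : ℝ) := by
      calc (Num : ℝ) ≤ (P.card : ℝ) *
          (Real.exp (-((ℓ : ℝ) * r * d / (8 * n))) * ((Dreg n d).card : ℝ)) := hcard
      _ ≤ Real.exp (2 * r * L) *
          (Real.exp (-((ℓ : ℝ) * r * d / (8 * n))) * ((Dreg n d).card : ℝ)) := by
          apply mul_le_mul_of_nonneg_right hPcard (by positivity)
      _ = Real.exp (2 * r * L + -((ℓ : ℝ) * r * d / (8 * n))) * ((Dreg n d).card : ℝ) := by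
          rw [← mul_assoc, ← Real.exp_add]
      _ ≤ Real.exp (-((1:ℝ)/16 * r * ℓ * d / n)) * ((Dreg n d).card : ℝ) := by
          apply mul_le_mul_of_nonneg_right _ (by positivity)
          apply Real.exp_le_exp.2
          have h1 : 2 * (r : ℝ) * L ≤ (ℓ : ℝ) * r * d / (16 * n) := by
            calc 2 * (r : ℝ) * L ≤ 2 * (r : ℝ) * ((ℓ : ℝ) * d / (32 * n)) := by
                  apply mul_le_mul_of_nonneg_left hLle (by positivity)
            _ = (ℓ : ℝ) * r * d / (16 * n) := by field_simp; ring
          have h2 : ((ℓ : ℝ) * r * d / (16 * n)) - ((ℓ : ℝ) * r * d / (8 * n)) =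
              -((1:ℝ)/16 * r * ℓ * d / n) := by field_simp; ring
          linarith
    by_cases hD : ((Dreg n d).card : ℝ) = 0
    · have hcard0 : (Dreg n d).card = 0 := by exact_mod_cast hD
      have hnum0 : Num = 0 := Nat.le_zero.1 (hcard0 ▸ hNumD)
      rw [hnum0]
      simp only [Nat.cast_zero, zero_div]
      positivity
    · have hDpos : (0 : ℝ) < ((Dreg n d).card : ℝ) :=
        lt_of_le_of_ne (by positivity) (Ne.symm hD)
      rw [div_le_iff₀ hDpos]
      calc (Num : ℝ) ≤ Real.exp (-((1:ℝ)/16 * r * ℓ * d / n)) * ((Dreg n d).card : ℝ) := hfinal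
      _ = Real.exp (-(1/16 * (r:ℝ) * ℓ * d / n)) * ((Dreg n d).card : ℝ) := by norm_num
end

section
/- Let δ ∈ (0,1), 2 ≤ d ≤ n/12, 1 ≤ k ≤ δ·n/(4ed), and let F, H ⊆ [n]×[n]. Then for every I ⊆ [n] with I ∩ [k+d] = ∅ and |I| ≤ n/8, one has |Γ([k], {k+1}, δ) ∩ D([k],F) ∩ D(I,H)| ≤ γ_k · |D([k],F) ∩ D(I,H)|, where γ_k = (2ekd/(δn))^{δd}. -/
open Finset
open scoped Classical

/-- `GammaSet n d δ S J`: graphs in which every `j ∈ J` has at least `δ d` common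
in-neighbors with the set of vertices of `S` preceding `j`, i.e.
`|⋃_{i ∈ S, i < j} C^in_G(i,j)| ≥ δ d`. -/
noncomputable def GammaSet (n d : ℕ) (δ : ℝ) (S J : Finset (Fin n)) : Finset (Fin n → Fin n → Bool) :=
  (Dreg n d).filter fun G => ∀ j ∈ J,
    δ * d ≤ ((Finset.univ.filter fun v : Fin n =>
      ∃ i ∈ S, i < j ∧ G v i = true ∧ G v j = true).card : ℝ)

/-- The initial segment `[k] = {1, …, k}` of the vertex set, in `0`-indexed form the
set of vertices with value `< k`. -/
def seg (n k : ℕ) : Finset (Fin n) := Finset.univ.filter fun i => (i : ℕ) < k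

/- ----------------- Auxiliary lemmas ----------------- -/

lemma aux_Dreg_row {n d : ℕ} {G : Fin n → Fin n → Bool} (hG : G ∈ Dreg n d) (a : Fin n) :
    (Finset.univ.filter fun b => G a b = true).card = d :=
  ((Finset.mem_filter.1 hG).2.1) a

lemma aux_Dreg_col {n d : ℕ} {G : Fin n → Fin n → Bool} (hG : G ∈ Dreg n d) (b : Fin n) :
    (Finset.univ.filter fun a => G a b = true).card = d :=
  ((Finset.mem_filter.1 hG).2.2) b

lemma aux_card_filter_swap {α : Type*} [Fintype α] [DecidableEq α] {f g : α → Bool} {x y : α}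
    (hxy : x ≠ y) (hx : f x = true) (hy : f y = false)
    (hg : ∀ a, g a = if a = x then false else if a = y then true else f a) :
    (Finset.univ.filter fun a => g a = true).card
      = (Finset.univ.filter fun a => f a = true).card := by
  have hset : (Finset.univ.filter fun a => g a = true)
      = insert y ((Finset.univ.filter fun a => f a = true).erase x) := by
    ext a
    simp only [Finset.mem_insert, Finset.mem_erase, Finset.mem_filter, Finset.mem_univ,
      true_and, hg a]
    by_cases h1 : a = x
    · subst h1
      simp [hx, hxy]
    · by_cases h2 : a = y
      · subst h2; simp [h1]
      · simp [h1, h2]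
  rw [hset, Finset.card_insert_of_notMem (by simp [hy, hxy]),
    Finset.card_erase_of_mem (by simp [hx])]
  have : 0 < (Finset.univ.filter fun a => f a = true).card :=
    Finset.card_pos.2 ⟨x, by simp [hx]⟩
  omega

/-- The simple switching: remove edges `(v,j)` and `(w,z)`, add edges `(w,j)` and `(v,z)`. -/
noncomputable def sw {n : ℕ} (G : Fin n → Fin n → Bool) (v w j z : Fin n) :
    Fin n → Fin n → Bool :=
  fun a b => if a = v ∧ b = j then false else if a = w ∧ b = z then false
    else if a = w ∧ b = j then true else if a = v ∧ b = z then true else G a b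

lemma sw_sw {n : ℕ} {G : Fin n → Fin n → Bool} {v w j z : Fin n}
    (hvw : v ≠ w) (hjz : j ≠ z) (h1 : G v j = true) (h2 : G w z = true)
    (h3 : G w j = false) (h4 : G v z = false) :
    sw (sw G v w j z) w v j z = G := by
  funext a b
  simp only [sw]
  by_cases hav : a = v <;> by_cases haw : a = w <;>
    by_cases hbj : b = j <;> by_cases hbz : b = z <;> simp_all

lemma sw_wj {n : ℕ} {G : Fin n → Fin n → Bool} {v w j z : Fin n}
    (hvw : v ≠ w) (hjz : j ≠ z) : sw G v w j z w j = true := by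
  simp [sw, hvw.symm, hjz]

lemma sw_vz {n : ℕ} {G : Fin n → Fin n → Bool} {v w j z : Fin n}
    (hvw : v ≠ w) (hjz : j ≠ z) : sw G v w j z v z = true := by
  simp [sw, hvw, hjz.symm]

lemma sw_mem_Dreg {n d : ℕ} {G : Fin n → Fin n → Bool} {v w j z : Fin n}
    (hG : G ∈ Dreg n d) (hvw : v ≠ w) (hjz : j ≠ z)
    (h1 : G v j = true) (h2 : G w z = true) (h3 : G w j = false) (h4 : G v z = false) :
    sw G v w j z ∈ Dreg n d := by
  simp only [Dreg, Finset.mem_filter, Finset.mem_univ, true_and] at hG ⊢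
  obtain ⟨hrow, hcol⟩ := hG
  constructor
  · intro a
    by_cases hav : a = v
    · subst hav
      exact (aux_card_filter_swap hjz h1 h4 (fun b => by simp [sw, hvw])).trans (hrow a)
    · by_cases haw : a = w
      · subst haw
        exact (aux_card_filter_swap hjz.symm h2 h3 (fun b => by simp [sw, hvw.symm])).trans (hrow a)
      · have he : ∀ b, sw G v w j z a b = G a b := fun b => by simp [sw, hav, haw]
        simp only [he]
        exact hrow a
  · intro b
    by_cases hbj : b = j
    · subst hbj
      exact (aux_card_filter_swap hvw h1 h3 (fun a => by simp [sw, hjz])).trans (hcol b)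
    · by_cases hbz : b = z
      · subst hbz
        exact (aux_card_filter_swap hvw.symm h2 h4 (fun a => by simp [sw, hbj, hjz.symm])).trans (hcol b)
      · have he : ∀ a, sw G v w j z a b = G a b := fun a => by simp [sw, hbj, hbz]
        simp only [he]
        exact hcol b

lemma sw_filter_eq {n : ℕ} {G : Fin n → Fin n → Bool} {v w j z : Fin n}
    (S : Finset (Fin n)) (hj : j ∉ S) (hz : z ∉ S) :
    (Finset.univ.filter fun p : Fin n × Fin n => sw G v w j z p.1 p.2 = true ∧ p.2 ∈ S)
      = (Finset.univ.filter fun p : Fin n × Fin n => G p.1 p.2 = true ∧ p.2 ∈ S) := by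
  apply Finset.filter_congr
  intro p _
  have : p.2 ∈ S → sw G v w j z p.1 p.2 = G p.1 p.2 := by
    intro hS
    have hbj : p.2 ≠ j := fun h => hj (h ▸ hS)
    have hbz : p.2 ≠ z := fun h => hz (h ▸ hS)
    simp [sw, hbj, hbz]
  constructor
  · rintro ⟨ha, hb⟩; rw [this hb] at ha; exact ⟨ha, hb⟩
  · rintro ⟨ha, hb⟩; rw [this hb]; exact ⟨ha, hb⟩

lemma sw_cnt {n : ℕ} {T : Finset (Fin n)} {G : Fin n → Fin n → Bool} {v w j z : Fin n}
    (hv : v ∈ T) (hw : w ∉ T) (hjz : j ≠ z) :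
    (Finset.univ.filter fun a => a ∈ T ∧ sw G v w j z a j = true)
      = (Finset.univ.filter fun a => a ∈ T ∧ G a j = true).erase v := by
  ext a
  simp only [Finset.mem_erase, Finset.mem_filter, Finset.mem_univ, true_and]
  have hsw : sw G v w j z a j = if a = v then false else if a = w then true else G a j := by
    simp [sw, hjz]
  rw [hsw]
  by_cases hav : a = v
  · subst hav; simp
  · by_cases haw : a = w
    · subst haw; simp [hw]
    · simp [hav, haw]

lemma aux_fiber_map {β γ : Type*} [Fintype β] [Fintype γ] [DecidableEq β]
    (P : β × γ → Prop) [DecidablePred P] (b : β) :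
    ((Finset.univ : Finset (β × γ)).filter P).filter (fun x => x.1 = b)
      = (Finset.univ.filter fun c => P (b, c)).map
          ⟨fun c => (b, c), fun c1 c2 h => by cases h; rfl⟩ := by
  ext x
  simp only [Finset.mem_filter, Finset.mem_univ, true_and, Finset.mem_map,
    Function.Embedding.coeFn_mk]
  constructor
  · rintro ⟨hP, hb⟩
    refine ⟨x.2, ?_, ?_⟩
    · rw [show (b, x.2) = x from by rw [← hb]]
      exact hP
    · rw [← hb]; rfl
  · rintro ⟨c, hc, rfl⟩
    exact ⟨hc, rfl⟩

lemma aux_card_filter_fst_fiberwise {β γ : Type*} [Fintype β] [Fintype γ] [DecidableEq β]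
    (A : Finset β) (P : β × γ → Prop) [DecidablePred P] (hP : ∀ x : β × γ, P x → x.1 ∈ A) :
    ((Finset.univ : Finset (β × γ)).filter P).card
      = ∑ b ∈ A, (Finset.univ.filter fun c => P (b, c)).card := by
  rw [Finset.card_eq_sum_card_fiberwise (f := Prod.fst) (t := A)
    (fun x hx => hP _ (Finset.mem_filter.1 hx).2)]
  exact Finset.sum_congr rfl fun b _ => by rw [aux_fiber_map P b, Finset.card_map]

lemma aux_card_edges_snd {n d : ℕ} {G : Fin n → Fin n → Bool} (hG : G ∈ Dreg n d)
    (S : Finset (Fin n)) :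
    ((Finset.univ : Finset (Fin n × Fin n)).filter
        fun p => G p.1 p.2 = true ∧ p.2 ∈ S).card = S.card * d := by
  rw [Finset.card_eq_sum_card_fiberwise (f := Prod.snd) (t := S)
    (fun p hp => (Finset.mem_filter.1 hp).2.2)]
  rw [Finset.sum_congr rfl (fun z hz => ?_), Finset.sum_const, smul_eq_mul]
  have hset : ((Finset.univ : Finset (Fin n × Fin n)).filter
      (fun p => G p.1 p.2 = true ∧ p.2 ∈ S)).filter (fun p => p.2 = z)
      = (Finset.univ.filter fun a => G a z = true).map
          ⟨fun a => (a, z), fun a1 a2 h => by cases h; rfl⟩ := by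
    ext p
    simp only [Finset.mem_filter, Finset.mem_univ, true_and, Finset.mem_map,
      Function.Embedding.coeFn_mk]
    constructor
    · rintro ⟨⟨hE, hS⟩, hz2⟩
      exact ⟨p.1, by rw [hz2] at hE; exact hE, by rw [← hz2]; rfl⟩
    · rintro ⟨a, ha, rfl⟩
      exact ⟨⟨ha, hz⟩, rfl⟩
  rw [hset, Finset.card_map, aux_Dreg_col hG]

lemma aux_card_edges_fst {n d : ℕ} {G : Fin n → Fin n → Bool} (hG : G ∈ Dreg n d)
    (S : Finset (Fin n)) :
    ((Finset.univ : Finset (Fin n × Fin n)).filter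
        fun p => G p.1 p.2 = true ∧ p.1 ∈ S).card = S.card * d := by
  rw [Finset.card_eq_sum_card_fiberwise (f := Prod.fst) (t := S)
    (fun p hp => (Finset.mem_filter.1 hp).2.2)]
  rw [Finset.sum_congr rfl (fun a ha => ?_), Finset.sum_const, smul_eq_mul]
  have hset : ((Finset.univ : Finset (Fin n × Fin n)).filter
      (fun p => G p.1 p.2 = true ∧ p.1 ∈ S)).filter (fun p => p.1 = a)
      = (Finset.univ.filter fun b => G a b = true).map
          ⟨fun b => (a, b), fun b1 b2 h => by cases h; rfl⟩ := by
    ext p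
    simp only [Finset.mem_filter, Finset.mem_univ, true_and, Finset.mem_map,
      Function.Embedding.coeFn_mk]
    constructor
    · rintro ⟨⟨hE, hS⟩, ha2⟩
      exact ⟨p.2, by rw [ha2] at hE; exact hE, by rw [← ha2]; rfl⟩
    · rintro ⟨b, hb, rfl⟩
      exact ⟨⟨hb, ha⟩, rfl⟩
  rw [hset, Finset.card_map, aux_Dreg_row hG]

lemma aux_card_edges_total {n d : ℕ} {G : Fin n → Fin n → Bool} (hG : G ∈ Dreg n d) :
    ((Finset.univ : Finset (Fin n × Fin n)).filter fun p => G p.1 p.2 = true).card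
      = n * d := by
  have := aux_card_edges_snd hG Finset.univ
  simpa [Finset.card_univ] using this

lemma aux_seg_card_le (n k : ℕ) : (seg n k).card ≤ k := by
  have : (seg n k).card ≤ (Finset.range k).card := by
    apply Finset.card_le_card_of_injOn (fun i : Fin n => (i : ℕ))
    · intro i hi
      replace hi : i ∈ seg n k := hi
      simp only [seg, Finset.mem_filter] at hi
      simpa using hi.2
    · intro i _ i' _ h
      exact Fin.val_injective h
  simpa using this

lemma aux_pair_lower {n d k : ℕ} {G : Fin n → Fin n → Bool} (hG : G ∈ Dreg n d)
    {T : Finset (Fin n)} (I : Finset (Fin n)) (hT : T.card ≤ k * d) (j v : Fin n) :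
    n * d ≤ ((Finset.univ : Finset (Fin n × Fin n)).filter fun p =>
        G p.1 p.2 = true ∧ p.1 ∉ T ∧ G p.1 j = false ∧ G v p.2 = false ∧
          ¬((p.2 : ℕ) < k) ∧ p.2 ∉ I ∧ p.2 ≠ j).card
      + (k * d * d + d * d + d * d + k * d + I.card * d + d) := by
  set PS := ((Finset.univ : Finset (Fin n × Fin n)).filter fun p =>
        G p.1 p.2 = true ∧ p.1 ∉ T ∧ G p.1 j = false ∧ G v p.2 = false ∧
          ¬((p.2 : ℕ) < k) ∧ p.2 ∉ I ∧ p.2 ≠ j) with hPS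
  set B1 := ((Finset.univ : Finset (Fin n × Fin n)).filter fun p =>
        G p.1 p.2 = true ∧ p.1 ∈ T) with hB1
  set B2 := ((Finset.univ : Finset (Fin n × Fin n)).filter fun p =>
        G p.1 p.2 = true ∧ p.1 ∈ (Finset.univ.filter fun a => G a j = true)) with hB2
  set B3 := ((Finset.univ : Finset (Fin n × Fin n)).filter fun p =>
        G p.1 p.2 = true ∧ p.2 ∈ (Finset.univ.filter fun b => G v b = true)) with hB3
  set B4 := ((Finset.univ : Finset (Fin n × Fin n)).filter fun p =>
        G p.1 p.2 = true ∧ p.2 ∈ (seg n k)) with hB4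
  set B5 := ((Finset.univ : Finset (Fin n × Fin n)).filter fun p =>
        G p.1 p.2 = true ∧ p.2 ∈ I) with hB5
  set B6 := ((Finset.univ : Finset (Fin n × Fin n)).filter fun p =>
        G p.1 p.2 = true ∧ p.2 ∈ ({j} : Finset (Fin n))) with hB6
  have hcover : ((Finset.univ : Finset (Fin n × Fin n)).filter fun p => G p.1 p.2 = true)
      ⊆ PS ∪ B1 ∪ B2 ∪ B3 ∪ B4 ∪ B5 ∪ B6 := by
    intro p hp
    simp only [hPS, hB1, hB2, hB3, hB4, hB5, hB6, seg, Finset.mem_union, Finset.mem_filter,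
      Finset.mem_univ, true_and, Finset.mem_singleton, Bool.not_eq_true] at hp ⊢
    by_cases h1 : p.1 ∈ T
    · tauto
    · by_cases h2 : G p.1 j = true
      · tauto
      · by_cases h3 : G v p.2 = true
        · tauto
        · by_cases h4 : (p.2 : ℕ) < k
          · tauto
          · by_cases h5 : p.2 ∈ I
            · tauto
            · by_cases h6 : p.2 = j
              · tauto
              · left; left; left; left; left; left
                simp only [Bool.not_eq_true] at h2 h3
                exact ⟨hp, h1, h2, h3, h4, h5, h6⟩
  have hcard := Finset.card_le_card hcover
  rw [aux_card_edges_total hG] at hcard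
  have hle : (PS ∪ B1 ∪ B2 ∪ B3 ∪ B4 ∪ B5 ∪ B6).card
      ≤ PS.card + B1.card + B2.card + B3.card + B4.card + B5.card + B6.card := by
    calc (PS ∪ B1 ∪ B2 ∪ B3 ∪ B4 ∪ B5 ∪ B6).card
        ≤ (PS ∪ B1 ∪ B2 ∪ B3 ∪ B4 ∪ B5).card + B6.card := Finset.card_union_le _ _
      _ ≤ (PS ∪ B1 ∪ B2 ∪ B3 ∪ B4).card + B5.card + B6.card := by
          gcongr; exact Finset.card_union_le _ _
      _ ≤ (PS ∪ B1 ∪ B2 ∪ B3).card + B4.card + B5.card + B6.card := by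
          gcongr; exact Finset.card_union_le _ _
      _ ≤ (PS ∪ B1 ∪ B2).card + B3.card + B4.card + B5.card + B6.card := by
          gcongr; exact Finset.card_union_le _ _
      _ ≤ (PS ∪ B1).card + B2.card + B3.card + B4.card + B5.card + B6.card := by
          gcongr; exact Finset.card_union_le _ _
      _ ≤ PS.card + B1.card + B2.card + B3.card + B4.card + B5.card + B6.card := by
          gcongr; exact Finset.card_union_le _ _
  have e1 : B1.card ≤ k * d * d := by
    rw [hB1, aux_card_edges_fst hG T]
    exact Nat.mul_le_mul_right d hT
  have e2 : B2.card = d * d := by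
    rw [hB2, aux_card_edges_fst hG _, aux_Dreg_col hG j]
  have e3 : B3.card = d * d := by
    rw [hB3, aux_card_edges_snd hG _, aux_Dreg_row hG v]
  have e4 : B4.card ≤ k * d := by
    rw [hB4, aux_card_edges_snd hG _]
    exact Nat.mul_le_mul_right d (aux_seg_card_le n k)
  have e5 : B5.card = I.card * d := by
    rw [hB5, aux_card_edges_snd hG I]
  have e6 : B6.card = d := by
    rw [hB6, aux_card_edges_snd hG _, Finset.card_singleton, one_mul]
  omega

lemma aux_triple_upper {n d : ℕ} {G : Fin n → Fin n → Bool} (hG : G ∈ Dreg n d)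
    (T : Finset (Fin n)) (j : Fin n) :
    ((Finset.univ : Finset (Fin n × Fin n × Fin n)).filter fun t =>
        t.1 ∈ T ∧ G t.2.1 j = true ∧ G t.1 t.2.2 = true).card = T.card * (d * d) := by
  rw [aux_card_filter_fst_fiberwise (A := T)
      (P := fun t : Fin n × Fin n × Fin n => t.1 ∈ T ∧ G t.2.1 j = true ∧ G t.1 t.2.2 = true)
      (fun t h => h.1),
    Finset.sum_congr rfl (fun v hv => ?_), Finset.sum_const, smul_eq_mul]
  have hset : (Finset.univ.filter fun c : Fin n × Fin n =>
      v ∈ T ∧ G c.1 j = true ∧ G v c.2 = true)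
      = (Finset.univ.filter fun a => G a j = true) ×ˢ
        (Finset.univ.filter fun b => G v b = true) := by
    ext c
    simp only [Finset.mem_filter, Finset.mem_univ, true_and, Finset.mem_product, hv, true_and]
  rw [show (Finset.univ.filter fun c : Fin n × Fin n =>
      (fun t : Fin n × Fin n × Fin n => t.1 ∈ T ∧ G t.2.1 j = true ∧ G t.1 t.2.2 = true) (v, c))
      = (Finset.univ.filter fun c : Fin n × Fin n =>
        v ∈ T ∧ G c.1 j = true ∧ G v c.2 = true) from rfl,
    hset, Finset.card_product, aux_Dreg_col hG, aux_Dreg_row hG]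

lemma aux_fact_lower : ∀ m : ℕ, (m : ℝ) ^ m ≤ Real.exp 1 ^ m * (m.factorial : ℝ)
  | 0 => by norm_num
  | (m + 1) => by
    have ih := aux_fact_lower m
    have hm : ((m : ℝ) + 1) ^ m ≤ Real.exp 1 * (m : ℝ) ^ m := by
      rcases Nat.eq_zero_or_pos m with h0 | hpos
      · subst h0; simpa using Real.one_le_exp (by norm_num)
      · have hmR : (0 : ℝ) < m := by exact_mod_cast hpos
        have h1 : ((m : ℝ) + 1) = m * (1 + 1 / m) := by field_simp
        have h2 : (1 + 1 / (m : ℝ)) ^ m ≤ Real.exp 1 := by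
          have := Real.add_one_le_exp (1 / (m : ℝ))
          have hle : (1 + 1 / (m : ℝ)) ^ m ≤ Real.exp (1 / m) ^ m := by
            apply pow_le_pow_left₀ (by positivity)
            linarith
          rw [← Real.exp_nat_mul] at hle
          have : (m : ℝ) * (1 / m) = 1 := by field_simp
          rwa [this] at hle
        calc ((m : ℝ) + 1) ^ m = (m : ℝ) ^ m * (1 + 1 / m) ^ m := by
              rw [h1, mul_pow]
          _ ≤ (m : ℝ) ^ m * Real.exp 1 := by
              apply mul_le_mul_of_nonneg_left h2 (by positivity)
          _ = Real.exp 1 * (m : ℝ) ^ m := by ring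
    have hexp : (0:ℝ) < Real.exp 1 := Real.exp_pos 1
    calc ((m + 1 : ℕ) : ℝ) ^ (m + 1) = ((m : ℝ) + 1) * ((m : ℝ) + 1) ^ m := by
          push_cast; ring
      _ ≤ ((m : ℝ) + 1) * (Real.exp 1 * (m : ℝ) ^ m) := by
          apply mul_le_mul_of_nonneg_left hm (by positivity)
      _ ≤ ((m : ℝ) + 1) * (Real.exp 1 * (Real.exp 1 ^ m * m.factorial)) := by
          apply mul_le_mul_of_nonneg_left _ (by positivity)
          exact mul_le_mul_of_nonneg_left ih (le_of_lt hexp)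
      _ = Real.exp 1 ^ (m + 1) * (((m + 1) * m.factorial : ℕ) : ℝ) := by
          push_cast; ring
      _ = Real.exp 1 ^ (m + 1) * ((m + 1).factorial : ℝ) := by
          rw [Nat.factorial_succ]

/-- The condition describing an admissible simple switching at `(v,w,z)` for the graph `G`:
`(v,j)` and `(w,z)` are edges which can be replaced by `(w,j)` and `(v,z)`. -/
def SwCond {n : ℕ} (T I : Finset (Fin n)) (k : ℕ) (j : Fin n)
    (G : Fin n → Fin n → Bool) (v w z : Fin n) : Prop :=
  v ∈ T ∧ G v j = true ∧ G w z = true ∧ w ∉ T ∧ G w j = false ∧ G v z = false ∧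
    ¬((z : ℕ) < k) ∧ z ∉ I ∧ z ≠ j

set_option maxHeartbeats 1600000 in
/-- Lemma 2.3 of the paper: conditioned on frozen in-edges of `[k]` and of `I`, the
proportion of graphs in which the vertex `k+1` has at least `δ d` common in-neighbors
with `[k]` is at most `γ_k = (2ekd/(δn))^{δd}`. -/
theorem lem2_graph_sparse (n d k : ℕ) (δ : ℝ) (F H : Finset (Fin n × Fin n))
    (I : Finset (Fin n))
    (hδ0 : 0 < δ) (hδ1 : δ < 1)
    (hd2 : 2 ≤ d) (hdn : (d : ℝ) ≤ n / 12)
    (hk1 : 1 ≤ k) (hk : (k : ℝ) ≤ δ * n / (4 * Real.exp 1 * d))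
    (hI : ∀ i ∈ I, k + d ≤ (i : ℕ))
    (hIcard : (I.card : ℝ) ≤ n / 8) :
    ((GammaSet n d δ (seg n k) (Finset.univ.filter fun j : Fin n => (j : ℕ) = k) ∩
        Dcond n d (seg n k) F ∩ Dcond n d I H).card : ℝ)
      ≤ (2 * Real.exp 1 * k * d / (δ * n)) ^ (δ * d) *
        ((Dcond n d (seg n k) F ∩ Dcond n d I H).card : ℝ) := by
  classical
  have hE : (2.5 : ℝ) ≤ Real.exp 1 := by
    have := Real.exp_one_gt_d9; linarith
  have hdR : (2 : ℝ) ≤ (d : ℝ) := by exact_mod_cast hd2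
  have hn24 : (24 : ℝ) ≤ (n : ℝ) := by linarith
  have hn0R : (0 : ℝ) < n := by linarith
  have hd0 : 0 < d := by omega
  have hd0R : (0 : ℝ) < d := by linarith
  have hkR1 : (1 : ℝ) ≤ (k : ℝ) := by exact_mod_cast hk1
  have hδn : 0 < δ * n := by positivity
  have h4Edk : 4 * Real.exp 1 * (d : ℝ) * k ≤ δ * n := by
    have hpos : (0 : ℝ) < 4 * Real.exp 1 * d := by positivity
    have := (le_div_iff₀ hpos).1 hk
    linarith
  have hδnn : δ * n ≤ n := by nlinarith
  have h10kd : 10 * ((k : ℝ) * d) ≤ n := by nlinarith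
  have h20k : 20 * (k : ℝ) ≤ n := by nlinarith
  have hknR : (k : ℝ) < n := by linarith
  have hkn : k < n := by exact_mod_cast hknR
  set j : Fin n := ⟨k, hkn⟩ with hj
  set N := Dcond n d (seg n k) F ∩ Dcond n d I H with hN
  set q : ℝ := 2 * Real.exp 1 * k * d / (δ * n) with hqdef
  have hq0 : 0 < q := by
    rw [hqdef]
    apply div_pos _ hδn
    have hkpos : (0:ℝ) < (k:ℝ) := by linarith
    have := Real.exp_pos 1
    positivity
  have hq1 : q ≤ 1 := by
    rw [hqdef, div_le_one hδn]
    nlinarith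
  rcases Finset.eq_empty_or_nonempty N with hNe | ⟨G0, hG0⟩
  · have hsub : (GammaSet n d δ (seg n k) (Finset.univ.filter fun j' : Fin n => (j' : ℕ) = k) ∩
        Dcond n d (seg n k) F ∩ Dcond n d I H) ⊆ N := by
      intro G hG
      rw [hN]
      have h1 := Finset.mem_inter.1 hG
      exact Finset.mem_inter.2 ⟨(Finset.mem_inter.1 h1.1).2, h1.2⟩
    have hsub0 : (GammaSet n d δ (seg n k) (Finset.univ.filter fun j' : Fin n => (j' : ℕ) = k) ∩
        Dcond n d (seg n k) F ∩ Dcond n d I H) = ∅ :=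
      Finset.subset_empty.1 (by rwa [hNe] at hsub)
    rw [hsub0, hNe]
    simp
  -- main case
  have hG0' := Finset.mem_inter.1 hG0
  have hG0a : G0 ∈ Dcond n d (seg n k) F := hG0'.1
  have hG0reg : G0 ∈ Dreg n d := (Finset.mem_filter.1 hG0a).1
  have hF : (Finset.univ.filter fun p : Fin n × Fin n => G0 p.1 p.2 = true ∧ p.2 ∈ seg n k) = F :=
    (Finset.mem_filter.1 hG0a).2
  set T := F.image Prod.fst with hT
  have hTcard : T.card ≤ k * d := by
    calc T.card ≤ F.card := Finset.card_image_le
      _ = (seg n k).card * d := by rw [← hF]; exact aux_card_edges_snd hG0reg (seg n k)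
      _ ≤ k * d := Nat.mul_le_mul_right d (aux_seg_card_le n k)
  have hTmem : ∀ G, G ∈ Dcond n d (seg n k) F →
      ∀ a : Fin n, (a ∈ T ↔ ∃ i : Fin n, (i : ℕ) < k ∧ G a i = true) := by
    intro G hGc a
    have hFG : (Finset.univ.filter fun p : Fin n × Fin n =>
        G p.1 p.2 = true ∧ p.2 ∈ seg n k) = F := (Finset.mem_filter.1 hGc).2
    rw [hT]
    constructor
    · intro ha
      rcases Finset.mem_image.1 ha with ⟨p, hpF, hpa⟩
      rw [← hFG] at hpF
      rcases Finset.mem_filter.1 hpF with ⟨-, hGp, hpseg⟩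
      refine ⟨p.2, ?_, hpa ▸ hGp⟩
      simpa [seg] using hpseg
    · rintro ⟨i, hik, hGai⟩
      refine Finset.mem_image.2 ⟨(a, i), ?_, rfl⟩
      rw [← hFG]
      exact Finset.mem_filter.2 ⟨Finset.mem_univ _, hGai, by simp [seg, hik]⟩
  set Sge : ℕ → Finset (Fin n → Fin n → Bool) := fun m => N.filter fun G =>
    m ≤ (Finset.univ.filter fun a => a ∈ T ∧ G a j = true).card with hSge
  have hSge_mem : ∀ m G, G ∈ Sge m ↔ G ∈ N ∧
      m ≤ (Finset.univ.filter fun a => a ∈ T ∧ G a j = true).card := by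
    intro m G
    rw [hSge]
    exact Finset.mem_filter
  set X := k * d * d + d * d + d * d + k * d + I.card * d + d with hX
  -- the core switching double-counting inequality
  have hswitch : ∀ m : ℕ, 1 ≤ m →
      (Sge m).card * (m * (n * d)) ≤
        (k * d * (d * d)) * (Sge (m - 1)).card + (Sge m).card * (m * X) := by
    intro m hm
    set Q := (Finset.univ : Finset ((Fin n → Fin n → Bool) × (Fin n × Fin n × Fin n))).filter
      (fun x => x.1 ∈ Sge m ∧ SwCond T I k j x.1 x.2.1 x.2.2.1 x.2.2.2) with hQ
    have hQsum : Q.card = ∑ G ∈ Sge m,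
        (Finset.univ.filter fun t : Fin n × Fin n × Fin n =>
          SwCond T I k j G t.1 t.2.1 t.2.2).card := by
      rw [hQ, aux_card_filter_fst_fiberwise (A := Sge m)
        (P := fun x : (Fin n → Fin n → Bool) × (Fin n × Fin n × Fin n) =>
          x.1 ∈ Sge m ∧ SwCond T I k j x.1 x.2.1 x.2.2.1 x.2.2.2) (fun x h => h.1)]
      refine Finset.sum_congr rfl fun G hG => ?_
      congr 1
      apply Finset.filter_congr
      intro t _
      simp only [hG, true_and]
    -- step A : pointwise lower bound on the number of admissible switchings
    have hA : ∀ G ∈ Sge m, m * (n * d) ≤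
        (Finset.univ.filter fun t : Fin n × Fin n × Fin n =>
          SwCond T I k j G t.1 t.2.1 t.2.2).card + m * X := by
      intro G hGm
      obtain ⟨hGN, hGcnt⟩ := (hSge_mem m G).1 hGm
      have hGreg : G ∈ Dreg n d := (Finset.mem_filter.1 (Finset.mem_inter.1 hGN).1).1
      obtain ⟨A', hA'sub, hA'card⟩ := Finset.exists_subset_card_eq hGcnt
      have htc : (Finset.univ.filter fun t : Fin n × Fin n × Fin n =>
          SwCond T I k j G t.1 t.2.1 t.2.2).card
          = ∑ v ∈ (Finset.univ.filter fun a => a ∈ T ∧ G a j = true),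
            (Finset.univ.filter fun c : Fin n × Fin n => SwCond T I k j G v c.1 c.2).card := by
        rw [aux_card_filter_fst_fiberwise
          (A := Finset.univ.filter fun a => a ∈ T ∧ G a j = true)
          (P := fun t : Fin n × (Fin n × Fin n) => SwCond T I k j G t.1 t.2.1 t.2.2)
          (fun t h => Finset.mem_filter.2 ⟨Finset.mem_univ _, h.1, h.2.1⟩)]
      have hpc : ∀ v ∈ (Finset.univ.filter fun a => a ∈ T ∧ G a j = true),
          n * d ≤ (Finset.univ.filter fun c : Fin n × Fin n =>
            SwCond T I k j G v c.1 c.2).card + X := by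
        intro v hv
        obtain ⟨-, hvT, hvj⟩ := Finset.mem_filter.1 hv
        have heq : (Finset.univ.filter fun c : Fin n × Fin n => SwCond T I k j G v c.1 c.2)
            = (Finset.univ : Finset (Fin n × Fin n)).filter fun p =>
                G p.1 p.2 = true ∧ p.1 ∉ T ∧ G p.1 j = false ∧ G v p.2 = false ∧
                  ¬((p.2 : ℕ) < k) ∧ p.2 ∉ I ∧ p.2 ≠ j := by
          apply Finset.filter_congr
          intro c _
          simp only [SwCond]
          constructor
          · rintro ⟨-, -, h3, h4, h5, h6, h7, h8, h9⟩
            exact ⟨h3, h4, h5, h6, h7, h8, h9⟩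
          · rintro ⟨h3, h4, h5, h6, h7, h8, h9⟩
            exact ⟨hvT, hvj, h3, h4, h5, h6, h7, h8, h9⟩
        rw [heq, hX]
        exact aux_pair_lower hGreg I hTcard j v
      calc m * (n * d) = ∑ _v ∈ A', (n * d) := by
            rw [Finset.sum_const, hA'card, smul_eq_mul]
        _ ≤ ∑ v ∈ A', ((Finset.univ.filter fun c : Fin n × Fin n =>
              SwCond T I k j G v c.1 c.2).card + X) :=
            Finset.sum_le_sum (fun v hv => hpc v (hA'sub hv))
        _ = (∑ v ∈ A', (Finset.univ.filter fun c : Fin n × Fin n =>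
              SwCond T I k j G v c.1 c.2).card) + m * X := by
            rw [Finset.sum_add_distrib, Finset.sum_const, hA'card, smul_eq_mul]
        _ ≤ (∑ v ∈ (Finset.univ.filter fun a => a ∈ T ∧ G a j = true),
              (Finset.univ.filter fun c : Fin n × Fin n =>
                SwCond T I k j G v c.1 c.2).card) + m * X :=
            Nat.add_le_add_right (Finset.sum_le_sum_of_subset hA'sub) (m * X)
        _ = (Finset.univ.filter fun t : Fin n × Fin n × Fin n =>
              SwCond T I k j G t.1 t.2.1 t.2.2).card + m * X := by rw [htc]
    have hQlow : (Sge m).card * (m * (n * d)) ≤ Q.card + (Sge m).card * (m * X) := by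
      calc (Sge m).card * (m * (n * d)) = ∑ _G ∈ Sge m, m * (n * d) := by
            rw [Finset.sum_const, smul_eq_mul]
        _ ≤ ∑ G ∈ Sge m, ((Finset.univ.filter fun t : Fin n × Fin n × Fin n =>
              SwCond T I k j G t.1 t.2.1 t.2.2).card + m * X) := Finset.sum_le_sum hA
        _ = Q.card + (Sge m).card * (m * X) := by
            rw [Finset.sum_add_distrib, ← hQsum, Finset.sum_const, smul_eq_mul]
    -- step B : injection into the set of reverse switchings
    set R := (Finset.univ : Finset ((Fin n → Fin n → Bool) × (Fin n × Fin n × Fin n))).filter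
      (fun x => x.1 ∈ Sge (m - 1) ∧ x.2.1 ∈ T ∧ x.1 x.2.2.1 j = true ∧
        x.1 x.2.1 x.2.2.2 = true) with hR
    have hQR : Q.card ≤ R.card := by
      apply Finset.card_le_card_of_injOn
        (fun x => (sw x.1 x.2.1 x.2.2.1 j x.2.2.2, x.2))
      · intro x hx
        rw [hQ] at hx
        obtain ⟨-, hxS, hC⟩ := Finset.mem_filter.1 hx
        obtain ⟨hvT, hvj, hwz, hwT, hwj, hvz, hzk, hzI, hzj⟩ := hC
        have hvw : x.2.1 ≠ x.2.2.1 := fun h => hwT (h ▸ hvT)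
        have hjz : j ≠ x.2.2.2 := Ne.symm hzj
        obtain ⟨hGN, hGcnt⟩ := (hSge_mem m x.1).1 hxS
        obtain ⟨hGc1, hGc2⟩ := Finset.mem_inter.1 hGN
        have hGreg : x.1 ∈ Dreg n d := (Finset.mem_filter.1 hGc1).1
        have hreg' : sw x.1 x.2.1 x.2.2.1 j x.2.2.2 ∈ Dreg n d :=
          sw_mem_Dreg hGreg hvw hjz hvj hwz hwj hvz
        have hjval : (j : ℕ) = k := rfl
        have hjseg : j ∉ seg n k := by simp [seg, hjval]
        have hzseg : x.2.2.2 ∉ seg n k := by simp [seg, hzk]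
        have hjI : j ∉ I := fun hmem => by have := hI j hmem; omega
        have hc1' : sw x.1 x.2.1 x.2.2.1 j x.2.2.2 ∈ Dcond n d (seg n k) F :=
          Finset.mem_filter.2 ⟨hreg', by
            rw [sw_filter_eq _ hjseg hzseg]; exact (Finset.mem_filter.1 hGc1).2⟩
        have hc2' : sw x.1 x.2.1 x.2.2.1 j x.2.2.2 ∈ Dcond n d I H :=
          Finset.mem_filter.2 ⟨hreg', by
            rw [sw_filter_eq _ hjI hzI]; exact (Finset.mem_filter.1 hGc2).2⟩
        have hcnt' : (Finset.univ.filter fun a =>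
            a ∈ T ∧ sw x.1 x.2.1 x.2.2.1 j x.2.2.2 a j = true).card
            = (Finset.univ.filter fun a => a ∈ T ∧ x.1 a j = true).card - 1 := by
          rw [sw_cnt hvT hwT hjz,
            Finset.card_erase_of_mem (Finset.mem_filter.2 ⟨Finset.mem_univ _, hvT, hvj⟩)]
        have hmem' : sw x.1 x.2.1 x.2.2.1 j x.2.2.2 ∈ Sge (m - 1) :=
          (hSge_mem _ _).2 ⟨Finset.mem_inter.2 ⟨hc1', hc2'⟩, by rw [hcnt']; omega⟩
        rw [hR]
        exact Finset.mem_filter.2 ⟨Finset.mem_univ _, hmem', hvT,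
          sw_wj hvw hjz, sw_vz hvw hjz⟩
      · intro x1 hx1 x2 hx2 heq
        rw [hQ] at hx1 hx2
        simp only [Finset.coe_filter, Set.mem_setOf_eq] at hx1 hx2
        obtain ⟨-, hx1S, hC1⟩ := hx1
        obtain ⟨-, hx2S, hC2⟩ := hx2
        simp only at heq
        have ht : x1.2 = x2.2 := (Prod.ext_iff.1 heq).2
        obtain ⟨hvT1, hvj1, hwz1, hwT1, hwj1, hvz1, hzk1, hzI1, hzj1⟩ := hC1
        obtain ⟨hvT2, hvj2, hwz2, hwT2, hwj2, hvz2, hzk2, hzI2, hzj2⟩ := hC2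
        have hvw1 : x1.2.1 ≠ x1.2.2.1 := fun h => hwT1 (h ▸ hvT1)
        have hjz1 : j ≠ x1.2.2.2 := Ne.symm hzj1
        have hvw2 : x2.2.1 ≠ x2.2.2.1 := fun h => hwT2 (h ▸ hvT2)
        have hjz2 : j ≠ x2.2.2.2 := Ne.symm hzj2
        have hsweq : sw x1.1 x1.2.1 x1.2.2.1 j x1.2.2.2
            = sw x2.1 x2.2.1 x2.2.2.1 j x2.2.2.2 := (Prod.ext_iff.1 heq).1
        have hG12 : x1.1 = x2.1 := by
          have e1 := sw_sw hvw1 hjz1 hvj1 hwz1 hwj1 hvz1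
          have e2 := sw_sw hvw2 hjz2 hvj2 hwz2 hwj2 hvz2
          calc x1.1 = sw (sw x1.1 x1.2.1 x1.2.2.1 j x1.2.2.2) x1.2.2.1 x1.2.1 j x1.2.2.2 :=
                e1.symm
            _ = sw (sw x2.1 x2.2.1 x2.2.2.1 j x2.2.2.2) x2.2.2.1 x2.2.1 j x2.2.2.2 := by
                rw [hsweq, ht]
            _ = x2.1 := e2
        exact Prod.ext hG12 ht
    have hRcard : R.card ≤ (k * d * (d * d)) * (Sge (m - 1)).card := by
      rw [hR, aux_card_filter_fst_fiberwise (A := Sge (m - 1))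
        (P := fun x : (Fin n → Fin n → Bool) × (Fin n × Fin n × Fin n) =>
          x.1 ∈ Sge (m - 1) ∧ x.2.1 ∈ T ∧ x.1 x.2.2.1 j = true ∧ x.1 x.2.1 x.2.2.2 = true)
        (fun x h => h.1)]
      have hper : ∀ G ∈ Sge (m - 1),
          (Finset.univ.filter fun c : Fin n × Fin n × Fin n =>
            G ∈ Sge (m - 1) ∧ c.1 ∈ T ∧ G c.2.1 j = true ∧ G c.1 c.2.2 = true).card
          ≤ k * d * (d * d) := by
        intro G hG
        have hGreg : G ∈ Dreg n d :=
          (Finset.mem_filter.1 (Finset.mem_inter.1 ((hSge_mem _ G).1 hG).1).1).1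
        have heq : (Finset.univ.filter fun c : Fin n × Fin n × Fin n =>
            G ∈ Sge (m - 1) ∧ c.1 ∈ T ∧ G c.2.1 j = true ∧ G c.1 c.2.2 = true)
            = (Finset.univ.filter fun t : Fin n × Fin n × Fin n =>
              t.1 ∈ T ∧ G t.2.1 j = true ∧ G t.1 t.2.2 = true) :=
          Finset.filter_congr fun c _ => by simp [hG]
        rw [heq, aux_triple_upper hGreg T j]
        exact Nat.mul_le_mul_right (d * d) hTcard
      calc (∑ G ∈ Sge (m - 1), (Finset.univ.filter fun c : Fin n × Fin n × Fin n =>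
            (fun x : (Fin n → Fin n → Bool) × (Fin n × Fin n × Fin n) =>
              x.1 ∈ Sge (m - 1) ∧ x.2.1 ∈ T ∧ x.1 x.2.2.1 j = true ∧
                x.1 x.2.1 x.2.2.2 = true) (G, c)).card)
          ≤ ∑ _G ∈ Sge (m - 1), k * d * (d * d) :=
            Finset.sum_le_sum fun G hG => hper G hG
        _ = (k * d * (d * d)) * (Sge (m - 1)).card := by
            rw [Finset.sum_const, smul_eq_mul, Nat.mul_comm]
    calc (Sge m).card * (m * (n * d)) ≤ Q.card + (Sge m).card * (m * X) := hQlow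
      _ ≤ R.card + (Sge m).card * (m * X) := Nat.add_le_add_right hQR _
      _ ≤ (k * d * (d * d)) * (Sge (m - 1)).card + (Sge m).card * (m * X) :=
          Nat.add_le_add_right hRcard _
  -- cast the switching inequality to the reals
  have hXle : (X : ℝ) ≤ (n : ℝ) * d / 2 := by
    have hinner : (k : ℝ) * d + 2 * d + (k : ℝ) + (I.card : ℝ) + 1 ≤ (n : ℝ) / 2 := by
      linarith
    have hmul : 0 ≤ (d : ℝ) * ((n : ℝ) / 2 - ((k : ℝ) * d + 2 * d + k + I.card + 1)) :=
      mul_nonneg (by linarith) (by linarith)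
    rw [hX]
    push_cast
    nlinarith [hmul]
  set Y : ℝ := (n : ℝ) * d - X with hY
  have hY2 : (n : ℝ) * d / 2 ≤ Y := by rw [hY]; linarith
  have hY0 : (0 : ℝ) < Y := by nlinarith
  set KK : ℝ := (k : ℝ) * d * (d * d) with hKK
  have hKK0 : (0 : ℝ) ≤ KK := by rw [hKK]; positivity
  have hcast : ∀ m : ℕ, 1 ≤ m →
      (m : ℝ) * Y * ((Sge m).card : ℝ) ≤ KK * ((Sge (m - 1)).card : ℝ) := by
    intro m hm
    have h0 := hswitch m hm
    have hc : (((Sge m).card * (m * (n * d)) : ℕ) : ℝ)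
        ≤ (((k * d * (d * d)) * (Sge (m - 1)).card + (Sge m).card * (m * X) : ℕ) : ℝ) :=
      Nat.cast_le.2 h0
    push_cast at hc
    rw [hY, hKK]
    nlinarith [hc]
  have hfact : ∀ m : ℕ, (m.factorial : ℝ) * Y ^ m * ((Sge m).card : ℝ)
      ≤ KK ^ m * ((Sge 0).card : ℝ) := by
    intro m
    induction m with
    | zero => simp
    | succ m ih =>
      have h1 := hcast (m + 1) (by omega)
      have h1' : ((m : ℝ) + 1) * Y * ((Sge (m + 1)).card : ℝ)
          ≤ KK * ((Sge m).card : ℝ) := by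
        have hmm : (m + 1) - 1 = m := by omega
        rw [hmm] at h1
        push_cast at h1
        exact h1
      have hfY : (0 : ℝ) ≤ (m.factorial : ℝ) * Y ^ m := by positivity
      calc ((m + 1).factorial : ℝ) * Y ^ (m + 1) * ((Sge (m + 1)).card : ℝ)
          = (m.factorial : ℝ) * Y ^ m * (((m : ℝ) + 1) * Y * ((Sge (m + 1)).card : ℝ)) := by
            rw [Nat.factorial_succ]; push_cast; ring
        _ ≤ (m.factorial : ℝ) * Y ^ m * (KK * ((Sge m).card : ℝ)) :=
            mul_le_mul_of_nonneg_left h1' hfY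
        _ = KK * ((m.factorial : ℝ) * Y ^ m * ((Sge m).card : ℝ)) := by ring
        _ ≤ KK * (KK ^ m * ((Sge 0).card : ℝ)) := mul_le_mul_of_nonneg_left ih hKK0
        _ = KK ^ (m + 1) * ((Sge 0).card : ℝ) := by ring
  have hS0 : Sge 0 = N := by
    rw [hSge]
    exact Finset.filter_true_of_mem fun G _ => Nat.zero_le _
  set m0 := ⌈δ * (d : ℝ)⌉₊ with hm0
  have hδd0 : (0 : ℝ) < δ * d := by positivity
  have hm0ge : δ * (d : ℝ) ≤ (m0 : ℝ) := Nat.le_ceil _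
  have hm0pos : 0 < m0 := Nat.ceil_pos.2 hδd0
  -- the bad set is contained in `Sge m0`
  have hsub2 : (GammaSet n d δ (seg n k) (Finset.univ.filter fun j' : Fin n => (j' : ℕ) = k) ∩
      Dcond n d (seg n k) F ∩ Dcond n d I H) ⊆ Sge m0 := by
    intro G hG
    have hGg : G ∈ GammaSet n d δ (seg n k)
        (Finset.univ.filter fun j' : Fin n => (j' : ℕ) = k) :=
      (Finset.mem_inter.1 (Finset.mem_inter.1 hG).1).1
    have hGc1 : G ∈ Dcond n d (seg n k) F := (Finset.mem_inter.1 (Finset.mem_inter.1 hG).1).2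
    have hGc2 : G ∈ Dcond n d I H := (Finset.mem_inter.1 hG).2
    have hjJ : j ∈ Finset.univ.filter fun j' : Fin n => (j' : ℕ) = k :=
      Finset.mem_filter.2 ⟨Finset.mem_univ _, rfl⟩
    have hbound := (Finset.mem_filter.1 hGg).2 j hjJ
    have hseteq : (Finset.univ.filter fun v : Fin n =>
        ∃ i ∈ seg n k, i < j ∧ G v i = true ∧ G v j = true)
        = (Finset.univ.filter fun a => a ∈ T ∧ G a j = true) := by
      apply Finset.filter_congr
      intro a _
      constructor
      · rintro ⟨i, hiseg, -, hGai, hGaj⟩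
        refine ⟨(hTmem G hGc1 a).2 ⟨i, ?_, hGai⟩, hGaj⟩
        simpa [seg] using hiseg
      · rintro ⟨haT, hGaj⟩
        rcases (hTmem G hGc1 a).1 haT with ⟨i, hik, hGai⟩
        refine ⟨i, by simp [seg, hik], ?_, hGai, hGaj⟩
        rw [Fin.lt_def]
        exact hik
    rw [hseteq] at hbound
    exact (hSge_mem _ _).2 ⟨Finset.mem_inter.2 ⟨hGc1, hGc2⟩, Nat.ceil_le.2 hbound⟩
  -- the coefficient estimate
  have hcoefKY : KK ≤ q * (δ * d) / Real.exp 1 * Y := by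
    have hq' : q * (δ * d) / Real.exp 1 = 2 * (k : ℝ) * d * d / n := by
      rw [hqdef]
      field_simp
    rw [hq', hKK]
    have h1 : (2 * (k : ℝ) * d * d / n) * ((n : ℝ) * d / 2) = (k : ℝ) * d * (d * d) := by
      field_simp
    calc (k : ℝ) * d * (d * d) = (2 * (k : ℝ) * d * d / n) * ((n : ℝ) * d / 2) := h1.symm
      _ ≤ (2 * (k : ℝ) * d * d / n) * Y := by
          apply mul_le_mul_of_nonneg_left hY2
          positivity
  have hcoef : KK ^ m0 ≤ q ^ (δ * (d : ℝ)) * (m0.factorial : ℝ) * Y ^ m0 := by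
    have t1 : KK ^ m0 ≤ (q * (δ * d) / Real.exp 1 * Y) ^ m0 :=
      pow_le_pow_left₀ hKK0 hcoefKY m0
    have t5 : q ^ m0 ≤ q ^ (δ * (d : ℝ)) := by
      rw [← Real.rpow_natCast q m0]
      exact Real.rpow_le_rpow_of_exponent_ge hq0 hq1 hm0ge
    have hBC : (δ * (d : ℝ)) ^ m0 / Real.exp 1 ^ m0 ≤ (m0.factorial : ℝ) := by
      rw [div_le_iff₀ (by positivity)]
      calc (δ * (d : ℝ)) ^ m0 ≤ (m0 : ℝ) ^ m0 := pow_le_pow_left₀ (le_of_lt hδd0) hm0ge m0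
        _ ≤ Real.exp 1 ^ m0 * (m0.factorial : ℝ) := aux_fact_lower m0
        _ = (m0.factorial : ℝ) * Real.exp 1 ^ m0 := by ring
    calc KK ^ m0 ≤ (q * (δ * d) / Real.exp 1 * Y) ^ m0 := t1
      _ = (q ^ m0 * ((δ * (d : ℝ)) ^ m0 / Real.exp 1 ^ m0)) * Y ^ m0 := by
          rw [mul_pow, div_pow, mul_pow]
          ring
      _ ≤ (q ^ (δ * (d : ℝ)) * (m0.factorial : ℝ)) * Y ^ m0 := by
          apply mul_le_mul_of_nonneg_right _ (pow_nonneg (le_of_lt hY0) m0)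
          exact mul_le_mul t5 hBC (by positivity) (Real.rpow_nonneg (le_of_lt hq0) _)
      _ = q ^ (δ * (d : ℝ)) * (m0.factorial : ℝ) * Y ^ m0 := by ring
  have hchain := hfact m0
  rw [hS0] at hchain
  have hfin : ((Sge m0).card : ℝ) ≤ q ^ (δ * (d : ℝ)) * (N.card : ℝ) := by
    have hpos : (0 : ℝ) < (m0.factorial : ℝ) * Y ^ m0 := by positivity
    have h2 : (m0.factorial : ℝ) * Y ^ m0 * ((Sge m0).card : ℝ)
        ≤ (m0.factorial : ℝ) * Y ^ m0 * (q ^ (δ * (d : ℝ)) * (N.card : ℝ)) := by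
      calc (m0.factorial : ℝ) * Y ^ m0 * ((Sge m0).card : ℝ)
          ≤ KK ^ m0 * (N.card : ℝ) := hchain
        _ ≤ (q ^ (δ * (d : ℝ)) * (m0.factorial : ℝ) * Y ^ m0) * (N.card : ℝ) :=
            mul_le_mul_of_nonneg_right hcoef (Nat.cast_nonneg _)
        _ = (m0.factorial : ℝ) * Y ^ m0 * (q ^ (δ * (d : ℝ)) * (N.card : ℝ)) := by ring
    exact le_of_mul_le_mul_left h2 hpos
  calc ((GammaSet n d δ (seg n k) (Finset.univ.filter fun j' : Fin n => (j' : ℕ) = k) ∩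
        Dcond n d (seg n k) F ∩ Dcond n d I H).card : ℝ)
      ≤ ((Sge m0).card : ℝ) := Nat.cast_le.2 (Finset.card_le_card hsub2)
    _ ≤ q ^ (δ * (d : ℝ)) * (N.card : ℝ) := hfin
end
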